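/- arXiv:1402.4225 — 3 statements merged into one kernel-verified Lean document; each statement's English description precedes it below -/
import Mathlib

section
/- Let X₁,…,X_k and Y₁,…,Y_k be as in the distributed-observation converse setup (each Y_ℓ obtained from X_ℓ through an independent erasure channel with non-erasure probability p, erasures independent across ℓ and of all X's). Suppose there is a decoder g with Pr(g(Y₁,…,Y_k) ≠ (X₁,…,X_k)) ≤ ε. Then p · ∑_{ℓ=1}^k H(X_ℓ) ≥ H(X₁,…,X_k) − h(ε) − ε·log|𝒳₁×⋯×𝒳_k|, where h is the binary entropy function. -/
open Real Finset

open scoped Classical in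
/-- Probability that the random variable `X` takes the value `a`, under the pmf `f`
on the finite sample space `Ω`. -/
noncomputable def pr {Ω α : Type*} [Fintype Ω] (f : Ω → ℝ) (X : Ω → α) (a : α) : ℝ :=
  ∑ ω, if X ω = a then f ω else 0

/-- Shannon entropy (natural log) of a random variable `X` on a finite space. -/
noncomputable def ent {Ω α : Type*} [Fintype Ω] [Fintype α] (f : Ω → ℝ) (X : Ω → α) : ℝ :=
  ∑ a, Real.negMulLog (pr f X a)

/-- Mutual information `I(X;Y) = H(X) + H(Y) - H(X,Y)`. -/
noncomputable def mi {Ω α β : Type*} [Fintype Ω] [Fintype α] [Fintype β]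
    (f : Ω → ℝ) (X : Ω → α) (Y : Ω → β) : ℝ :=
  ent f X + ent f Y - ent f (fun ω => (X ω, Y ω))

/-- Conditional entropy `H(X|Y) = H(X,Y) - H(Y)`. -/
noncomputable def condEnt {Ω α β : Type*} [Fintype Ω] [Fintype α] [Fintype β]
    (f : Ω → ℝ) (X : Ω → α) (Y : Ω → β) : ℝ :=
  ent f (fun ω => (X ω, Y ω)) - ent f Y

/-- Conditional mutual information
`I(X;Y|Z) = H(X,Z) + H(Y,Z) - H(X,Y,Z) - H(Z)`. -/
noncomputable def cmi {Ω α β γ : Type*} [Fintype Ω] [Fintype α] [Fintype β] [Fintype γ]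
    (f : Ω → ℝ) (X : Ω → α) (Y : Ω → β) (Z : Ω → γ) : ℝ :=
  ent f (fun ω => (X ω, Z ω)) + ent f (fun ω => (Y ω, Z ω))
    - ent f (fun ω => (X ω, Y ω, Z ω)) - ent f Z

/-- Binary entropy function `h(x) = -x log x - (1-x) log (1-x)`. -/
noncomputable def binEnt (x : ℝ) : ℝ := Real.negMulLog x + Real.negMulLog (1 - x)

open scoped Classical

namespace FanoAux
variable {Ω : Type*} [Fintype Ω] {f : Ω → ℝ}

lemma mul_neg_log (x : ℝ) : x * (-Real.log x) = Real.negMulLog x := by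
  simp [Real.negMulLog]

lemma pr_nonneg (hf0 : ∀ ω, 0 ≤ f ω) {α : Type*} (X : Ω → α) (a : α) : 0 ≤ pr f X a := by
  refine Finset.sum_nonneg fun ω _ => ?_
  split <;> simp [hf0 ω]

lemma sum_pr {α : Type*} [Fintype α] (hf1 : ∑ ω, f ω = 1) (X : Ω → α) :
    ∑ a, pr f X a = 1 := by
  unfold pr
  rw [Finset.sum_comm]
  simpa using hf1

lemma pr_le_pr (hf0 : ∀ ω, 0 ≤ f ω) {α β : Type*} (Z : Ω → α) (W : Ω → β) (a : α) (b : β)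
    (h : ∀ ω, Z ω = a → W ω = b) : pr f Z a ≤ pr f W b := by
  refine Finset.sum_le_sum fun ω _ => ?_
  by_cases hz : Z ω = a
  · simp [hz, h ω hz]
  · simp only [hz, if_false]
    split <;> simp [hf0 ω]

lemma pr_comp {α β : Type*} [Fintype α] (Z : Ω → α) (φ : α → β) (b : β) :
    pr f (fun ω => φ (Z ω)) b = ∑ a, if φ a = b then pr f Z a else 0 := by
  unfold pr
  have hpush : ∀ (c : Prop) (inst : Decidable c) (S : Ω → ℝ),
      (if c then ∑ ω, S ω else 0) = ∑ ω, if c then S ω else 0 := by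
    intro c inst S; split <;> simp
  simp_rw [hpush]
  rw [Finset.sum_comm]
  refine Finset.sum_congr rfl fun ω _ => ?_
  rw [Finset.sum_eq_single (Z ω)]
  · simp
  · intro a _ ha
    simp [Ne.symm ha]
  · simp

lemma sum_pr_mul {α : Type*} [Fintype α] (Z : Ω → α) (c : α → ℝ) :
    ∑ a, pr f Z a * c a = ∑ ω, f ω * c (Z ω) := by
  unfold pr
  simp_rw [Finset.sum_mul]
  rw [Finset.sum_comm]
  refine Finset.sum_congr rfl fun ω _ => ?_
  rw [Finset.sum_eq_single (Z ω)]
  · simp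
  · intro a _ ha
    simp [Ne.symm ha]
  · simp


lemma ent_comp_inj {α β : Type*} [Fintype α] [Fintype β] (Z : Ω → α) (φ : α → β)
    (hφ : Function.Injective φ) : ent f (fun ω => φ (Z ω)) = ent f Z := by
  unfold ent
  rw [← Finset.sum_subset (Finset.subset_univ ((univ : Finset α).image φ))]
  · rw [Finset.sum_image (fun a _ a' _ h => hφ h)]
    refine Finset.sum_congr rfl fun a _ => ?_
    congr 1
    unfold pr
    refine Finset.sum_congr rfl fun ω _ => ?_
    simp [hφ.eq_iff]
  · intro b _ hb
    have : pr f (fun ω => φ (Z ω)) b = 0 := by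
      unfold pr
      refine Finset.sum_eq_zero fun ω _ => ?_
      have : φ (Z ω) ≠ b := by
        intro h
        exact hb (Finset.mem_image.2 ⟨Z ω, Finset.mem_univ _, h⟩)
      simp [this]
    simp [this]

lemma gibbs {β : Type*} [Fintype β] (P Q : β → ℝ) (hP0 : ∀ b, 0 ≤ P b) (hP1 : ∑ b, P b = 1)
    (hQ0 : ∀ b, 0 ≤ Q b) (hQ1 : ∑ b, Q b ≤ 1) (hs : ∀ b, 0 < P b → 0 < Q b) :
    ∑ b, Real.negMulLog (P b) ≤ ∑ b, P b * (-Real.log (Q b)) := by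
  have key : ∀ b, Real.negMulLog (P b) - P b * (-Real.log (Q b)) ≤ Q b - P b := by
    intro b
    rcases eq_or_lt_of_le (hP0 b) with h | h
    · simp [← h, hQ0 b]
    · have hq := hs b h
      have heq : Real.negMulLog (P b) - P b * (-Real.log (Q b))
          = P b * Real.log (Q b / P b) := by
        rw [Real.log_div (ne_of_gt hq) (ne_of_gt h), Real.negMulLog]
        ring
      rw [heq]
      have hle := Real.log_le_sub_one_of_pos (div_pos hq h)
      calc P b * Real.log (Q b / P b) ≤ P b * (Q b / P b - 1) :=
            mul_le_mul_of_nonneg_left hle h.le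
        _ = Q b - P b := by field_simp
  have hsum := Finset.sum_le_sum (fun b (_ : b ∈ univ) => key b)
  rw [Finset.sum_sub_distrib, Finset.sum_sub_distrib, hP1] at hsum
  linarith

lemma sum_pi_bool {n : ℕ} (c : Bool → ℝ) (h1 : c true + c false = 1) :
    ∑ w : Fin n → Bool, ∏ i, c (w i) = 1 := by
  rw [← Fintype.piFinset_univ, ← Finset.prod_univ_sum]
  simp [Fintype.sum_bool, h1]

lemma ent_pi (n : ℕ) (c : Bool → ℝ) (h1 : c true + c false = 1) :
    ∑ w : Fin n → Bool, Real.negMulLog (∏ i, c (w i))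
      = n * (Real.negMulLog (c true) + Real.negMulLog (c false)) := by
  induction n with
  | zero => simp
  | succ n ih =>
    rw [← Equiv.sum_comp (Fin.consEquiv (fun _ : Fin (n+1) => Bool))]
    rw [Fintype.sum_prod_type]
    have hterm : ∀ (b : Bool) (w : Fin n → Bool),
        Real.negMulLog (∏ i, c ((Fin.consEquiv (fun _ : Fin (n+1) => Bool)) (b, w) i))
          = (∏ i, c (w i)) * Real.negMulLog (c b) + c b * Real.negMulLog (∏ i, c (w i)) := by
      intro b w
      have : (∏ i : Fin (n+1), c ((Fin.consEquiv (fun _ : Fin (n+1) => Bool)) (b, w) i))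
          = c b * ∏ i : Fin n, c (w i) := by
        rw [Fin.prod_univ_succ]
        simp [Fin.consEquiv]
      rw [this, Real.negMulLog_mul]
    simp_rw [hterm]
    rw [Fintype.sum_bool]
    rw [Finset.sum_add_distrib, Finset.sum_add_distrib, ← Finset.sum_mul, ← Finset.mul_sum,
      ← Finset.sum_mul, ← Finset.mul_sum, sum_pi_bool c h1, ih]
    push_cast
    linear_combination (↑n * (Real.negMulLog (c true) + Real.negMulLog (c false))) * h1

lemma ent_pair_of_indep {α β : Type*} [Fintype α] [Fintype β] (Z : Ω → α) (W : Ω → β)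
    (u : α → ℝ) (v : β → ℝ) (hu : ∑ a, u a = 1) (hv : ∑ b, v b = 1)
    (h : ∀ a b, pr f (fun ω => (Z ω, W ω)) (a, b) = u a * v b) :
    ent f (fun ω => (Z ω, W ω)) = (∑ a, Real.negMulLog (u a)) + ∑ b, Real.negMulLog (v b) := by
  unfold ent
  rw [Fintype.sum_prod_type]
  simp_rw [h, Real.negMulLog_mul, Finset.sum_add_distrib, ← Finset.sum_mul, ← Finset.mul_sum]
  rw [← Finset.sum_mul, hu, hv]
  ring




variable {Ω : Type*} [Fintype Ω] {f : Ω → ℝ}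

lemma sum_mul_neg_log_eq_ent {α : Type*} [Fintype α] (Z : Ω → α) :
    ∑ a, pr f Z a * (-Real.log (pr f Z a)) = ent f Z := by
  simp_rw [mul_neg_log]; rfl

lemma ent_pair_le {α β : Type*} [Fintype α] [Fintype β]
    (hf0 : ∀ ω, 0 ≤ f ω) (hf1 : ∑ ω, f ω = 1) (Z : Ω → α) (W : Ω → β) :
    ent f (fun ω => (Z ω, W ω)) ≤ ent f Z + ent f W := by
  have hm1 : ∀ z : α × β, pr f (fun ω => (Z ω, W ω)) z ≤ pr f Z z.1 := fun z =>
    pr_le_pr hf0 _ _ _ _ (fun ω h => congrArg Prod.fst h)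
  have hm2 : ∀ z : α × β, pr f (fun ω => (Z ω, W ω)) z ≤ pr f W z.2 := fun z =>
    pr_le_pr hf0 _ _ _ _ (fun ω h => congrArg Prod.snd h)
  have key := gibbs (pr f (fun ω => (Z ω, W ω))) (fun z => pr f Z z.1 * pr f W z.2)
    (pr_nonneg hf0 _) (sum_pr hf1 _)
    (fun z => mul_nonneg (pr_nonneg hf0 _ _) (pr_nonneg hf0 _ _))
    (by rw [Fintype.sum_prod_type]
        simp_rw [← Finset.mul_sum, ← Finset.sum_mul, sum_pr hf1]
        simp)
    (fun z hz => mul_pos (hz.trans_le (hm1 z)) (hz.trans_le (hm2 z)))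
  have hsplit : ∀ z : α × β,
      pr f (fun ω => (Z ω, W ω)) z * (-Real.log (pr f Z z.1 * pr f W z.2))
        = pr f (fun ω => (Z ω, W ω)) z * (-Real.log (pr f Z z.1))
          + pr f (fun ω => (Z ω, W ω)) z * (-Real.log (pr f W z.2)) := by
    intro z
    rcases eq_or_lt_of_le (pr_nonneg hf0 (fun ω => (Z ω, W ω)) z) with h | h
    · rw [← h]; ring
    · rw [Real.log_mul (ne_of_gt (h.trans_le (hm1 z))) (ne_of_gt (h.trans_le (hm2 z)))]; ring
  rw [Finset.sum_congr rfl (fun z _ => hsplit z), Finset.sum_add_distrib] at key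
  have a1 := sum_pr_mul (f := f) (Z := fun ω => (Z ω, W ω)) (c := fun z : α × β => -Real.log (pr f Z z.1))
  have a2 := sum_pr_mul (f := f) (Z := Z) (c := fun a => -Real.log (pr f Z a))
  have b1 := sum_pr_mul (f := f) (Z := fun ω => (Z ω, W ω)) (c := fun z : α × β => -Real.log (pr f W z.2))
  have b2 := sum_pr_mul (f := f) (Z := W) (c := fun b => -Real.log (pr f W b))
  have t1 : ∑ z : α × β, pr f (fun ω => (Z ω, W ω)) z * (-Real.log (pr f Z z.1)) = ent f Z :=
    (a1.trans a2.symm).trans (sum_mul_neg_log_eq_ent Z)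
  have t2 : ∑ z : α × β, pr f (fun ω => (Z ω, W ω)) z * (-Real.log (pr f W z.2)) = ent f W :=
    (b1.trans b2.symm).trans (sum_mul_neg_log_eq_ent W)
  rw [t1, t2] at key
  exact key

lemma ent_pi_le {κ : Type*} [Fintype κ] {β : κ → Type*} [∀ i, Fintype (β i)]
    [Fintype (∀ i, β i)]
    (hf0 : ∀ ω, 0 ≤ f ω) (hf1 : ∑ ω, f ω = 1) (Z : Ω → ∀ i, β i) :
    ent f Z ≤ ∑ i, ent f (fun ω => Z ω i) := by
  have hm : ∀ (y : ∀ i, β i) (i : κ), pr f Z y ≤ pr f (fun ω => Z ω i) (y i) := fun y i =>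
    pr_le_pr hf0 _ _ _ _ (fun ω h => congrFun h i)
  have key := gibbs (pr f Z) (fun y => ∏ i, pr f (fun ω => Z ω i) (y i))
    (pr_nonneg hf0 _) (sum_pr hf1 _)
    (fun y => Finset.prod_nonneg fun i _ => pr_nonneg hf0 _ _)
    (by have huniv : Fintype.piFinset (fun i : κ => (univ : Finset (β i)))
          = (univ : Finset (∀ i, β i)) :=
          Finset.eq_univ_of_forall fun x => Fintype.mem_piFinset.2 fun i => Finset.mem_univ _
        rw [← huniv, ← Finset.prod_univ_sum]
        simp_rw [sum_pr hf1]
        simp)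
    (fun y hy => Finset.prod_pos fun i _ => hy.trans_le (hm y i))
  have hsplit : ∀ y : ∀ i, β i,
      pr f Z y * (-Real.log (∏ i, pr f (fun ω => Z ω i) (y i)))
        = ∑ i, pr f Z y * (-Real.log (pr f (fun ω => Z ω i) (y i))) := by
    intro y
    rcases eq_or_lt_of_le (pr_nonneg hf0 Z y) with h | h
    · simp [← h]
    · rw [Real.log_prod (fun i _ => ne_of_gt (h.trans_le (hm y i)))]
      rw [← Finset.sum_neg_distrib]
      rw [Finset.mul_sum]
  rw [Finset.sum_congr rfl (fun y _ => hsplit y), Finset.sum_comm] at key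
  have t : ∀ i : κ, ∑ y : ∀ j, β j, pr f Z y * (-Real.log (pr f (fun ω => Z ω i) (y i)))
      = ent f (fun ω => Z ω i) := by
    intro i
    have a1 := sum_pr_mul (f := f) (Z := Z) (c := fun y : ∀ j, β j => -Real.log (pr f (fun ω => Z ω i) (y i)))
    have a2 := sum_pr_mul (f := f) (Z := fun ω => Z ω i) (c := fun b => -Real.log (pr f (fun ω => Z ω i) b))
    exact (a1.trans a2.symm).trans (sum_mul_neg_log_eq_ent _)
  rw [Finset.sum_congr rfl (fun i _ => t i)] at key
  exact key

lemma ent_le_log {α : Type*} [Fintype α] [Nonempty α]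
    (hf0 : ∀ ω, 0 ≤ f ω) (hf1 : ∑ ω, f ω = 1) (Z : Ω → α) :
    ent f Z ≤ Real.log (Fintype.card α) := by
  have hM : (0:ℝ) < Fintype.card α := by exact_mod_cast Fintype.card_pos
  have key := gibbs (pr f Z) (fun _ => (Fintype.card α : ℝ)⁻¹)
    (pr_nonneg hf0 _) (sum_pr hf1 _)
    (fun _ => (inv_pos.2 hM).le)
    (by rw [Finset.sum_const, Finset.card_univ, nsmul_eq_mul, mul_inv_cancel₀ (ne_of_gt hM)])
    (fun b _ => inv_pos.2 hM)
  calc ent f Z ≤ ∑ b, pr f Z b * (-Real.log ((Fintype.card α : ℝ)⁻¹)) := key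
    _ = Real.log (Fintype.card α) := by
        rw [Real.log_inv]
        simp_rw [neg_neg, ← Finset.sum_mul, sum_pr hf1, one_mul]

lemma binEnt_interp {H L s t : ℝ} (hL : 0 ≤ L) (hs0 : 0 ≤ s) (hst : s ≤ t) (ht1 : t ≤ 1)
    (h1 : H ≤ L) (h2 : H ≤ binEnt s + s * L) : H ≤ binEnt t + t * L := by
  rcases eq_or_lt_of_le (hst.trans ht1) with hs1 | hs1
  · have ht : t = 1 := le_antisymm ht1 (hs1 ▸ hst)
    rw [ht]
    simpa [binEnt] using h1
  · set a := (1 - t) / (1 - s) with ha_def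
    set b := (t - s) / (1 - s) with hb_def
    have hden : 0 < 1 - s := by linarith
    have ha : 0 ≤ a := div_nonneg (by linarith) hden.le
    have hb : 0 ≤ b := div_nonneg (by linarith) hden.le
    have hab : a + b = 1 := by
      rw [ha_def, hb_def, ← add_div, div_eq_one_iff_eq hden.ne']; ring
    have e1 : a * s + b * 1 = t := by
      rw [ha_def, hb_def, div_mul_eq_mul_div, mul_one, ← add_div,
        div_eq_iff hden.ne']; ring
    have e2 : a * (1 - s) + b * 0 = 1 - t := by
      rw [ha_def, mul_zero, add_zero, div_mul_cancel₀ _ hden.ne']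
    have c1 := Real.concaveOn_negMulLog.2 (Set.mem_Ici.2 hs0) (Set.mem_Ici.2 zero_le_one) ha hb hab
    have c2 := Real.concaveOn_negMulLog.2 (Set.mem_Ici.2 hden.le)
      (Set.mem_Ici.2 (le_refl (0:ℝ))) ha hb hab
    simp only [smul_eq_mul] at c1 c2
    rw [e1] at c1
    rw [e2] at c2
    simp only [Real.negMulLog_one, Real.negMulLog_zero, mul_zero, add_zero] at c1 c2
    have k1 : a * H ≤ a * (binEnt s + s * L) := mul_le_mul_of_nonneg_left h2 ha
    have k2 : b * H ≤ b * L := mul_le_mul_of_nonneg_left h1 hb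
    have kL : a * (s * L) + b * L = t * L := by
      have h : (a * s + b * 1) * L = t * L := congrArg (· * L) e1
      linarith [h]
    have hH : a * H + b * H = H := by
      have h := congrArg (· * H) hab
      simp only [one_mul] at h
      linarith [h]
    simp only [binEnt] at k1 ⊢
    nlinarith [k1, k2, c1, c2]

lemma fano_aux {α β : Type*} [Fintype α] [Fintype β] [Nonempty α]
    (hf0 : ∀ ω, 0 ≤ f ω) (hf1 : ∑ ω, f ω = 1)
    (Z : Ω → α) (W : Ω → β) (g : β → α) :
    ent f (fun ω => (Z ω, W ω)) - ent f W
      ≤ binEnt (∑ ω, if g (W ω) ≠ Z ω then f ω else 0)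
        + (∑ ω, if g (W ω) ≠ Z ω then f ω else 0) * Real.log (Fintype.card α) := by
  set Pe := ∑ ω, if g (W ω) ≠ Z ω then f ω else 0 with hPe_def
  set M := ((Fintype.card α : ℝ)) with hM_def
  have hM1 : (1:ℝ) ≤ M := by rw [hM_def]; exact_mod_cast Fintype.card_pos
  have hM0 : (0:ℝ) < M := lt_of_lt_of_le one_pos hM1
  have hPe0 : 0 ≤ Pe := Finset.sum_nonneg fun ω _ => by
    by_cases h : g (W ω) ≠ Z ω
    · simp [h, hf0 ω]
    · simp [h]
  have hPe1 : Pe ≤ 1 := by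
    rw [hPe_def, ← hf1]
    refine Finset.sum_le_sum fun ω _ => ?_
    by_cases h : g (W ω) ≠ Z ω
    · simp [h]
    · simp [h, hf0 ω]
  set P := pr f (fun ω => (Z ω, W ω)) with hP_def
  have hP0 : ∀ z, 0 ≤ P z := pr_nonneg hf0 _
  have hP1 : ∑ z, P z = 1 := sum_pr hf1 _
  have hmW : ∀ z : α × β, P z ≤ pr f W z.2 := fun z =>
    pr_le_pr hf0 _ _ _ _ (fun ω h => congrArg Prod.snd h)
  have hE : (∑ z : α × β, if z.1 = g z.2 then 0 else P z) = Pe := by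
    have a1 := sum_pr_mul (f := f) (Z := fun ω => (Z ω, W ω))
      (c := fun z : α × β => if z.1 = g z.2 then (0:ℝ) else 1)
    calc (∑ z : α × β, if z.1 = g z.2 then 0 else P z)
        = ∑ z : α × β, P z * (if z.1 = g z.2 then (0:ℝ) else 1) := by
          refine Finset.sum_congr rfl fun z _ => ?_
          split <;> simp
      _ = ∑ ω, f ω * (if Z ω = g (W ω) then (0:ℝ) else 1) := a1
      _ = Pe := by
          rw [hPe_def]
          refine Finset.sum_congr rfl fun ω _ => ?_
          by_cases h : Z ω = g (W ω)
          · simp [h]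
          · simp [h, Ne.symm h]
  have hC : (∑ z : α × β, if z.1 = g z.2 then P z else 0) = 1 - Pe := by
    have hsplit : (∑ z : α × β, if z.1 = g z.2 then P z else 0)
        + (∑ z : α × β, if z.1 = g z.2 then 0 else P z) = 1 := by
      rw [← Finset.sum_add_distrib, ← hP1]
      refine Finset.sum_congr rfl fun z _ => ?_
      split <;> simp
    rw [hE] at hsplit
    linarith
  have hcorr : ∀ z : α × β, z.1 = g z.2 → P z ≤ 1 - Pe := by
    intro z h
    rw [← hC]
    have := Finset.single_le_sum (f := fun z : α × β => if z.1 = g z.2 then P z else 0)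
      (fun i _ => by split <;> simp [hP0 i]) (Finset.mem_univ z)
    simpa [h] using this
  have herrb : ∀ z : α × β, ¬(z.1 = g z.2) → P z ≤ Pe := by
    intro z h
    rw [← hE]
    have := Finset.single_le_sum (f := fun z : α × β => if z.1 = g z.2 then 0 else P z)
      (fun i _ => by split <;> simp [hP0 i]) (Finset.mem_univ z)
    simpa [h] using this
  have hQpos : ∀ z : α × β, 0 < P z → 0 < (if z.1 = g z.2 then 1 - Pe else Pe / M) := by
    intro z hz
    by_cases h : z.1 = g z.2
    · simpa [h] using lt_of_lt_of_le hz (hcorr z h)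
    · simp only [h, if_false]
      exact div_pos (lt_of_lt_of_le hz (herrb z h)) hM0
  have hQ1sum : (∑ z : α × β, pr f W z.2 * (if z.1 = g z.2 then 1 - Pe else Pe / M)) ≤ 1 := by
    rw [Fintype.sum_prod_type_right]
    have hxsum : ∀ y : β, (∑ x : α, (if x = g y then 1 - Pe else Pe / M))
        = 1 - Pe + (M - 1) * (Pe / M) := by
      intro y
      have hpt : ∀ x : α, (if x = g y then 1 - Pe else Pe / M)
          = Pe / M + (if x = g y then 1 - Pe - Pe / M else 0) := by
        intro x; split <;> ring
      simp_rw [hpt]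
      rw [Finset.sum_add_distrib, Finset.sum_const, Finset.card_univ, nsmul_eq_mul,
        Finset.sum_ite_eq' univ (g y)]
      simp only [Finset.mem_univ, if_true]
      rw [← hM_def]
      ring
    calc ∑ y : β, ∑ x : α, pr f W y * (if x = g y then 1 - Pe else Pe / M)
        = ∑ y : β, pr f W y * (1 - Pe + (M - 1) * (Pe / M)) := by
          refine Finset.sum_congr rfl fun y _ => ?_
          rw [← Finset.mul_sum, hxsum y]
      _ ≤ ∑ y : β, pr f W y * 1 := by
          refine Finset.sum_le_sum fun y _ => ?_
          refine mul_le_mul_of_nonneg_left ?_ (pr_nonneg hf0 _ _)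
          have h0 : 0 ≤ Pe / M := by positivity
          have h2 : M * (Pe / M) = Pe := by field_simp
          nlinarith
      _ = 1 := by simp_rw [mul_one]; exact sum_pr hf1 W
  have key := gibbs P (fun z => pr f W z.2 * (if z.1 = g z.2 then 1 - Pe else Pe / M))
    hP0 hP1
    (fun z => mul_nonneg (pr_nonneg hf0 _ _)
      (by split
          · linarith
          · positivity))
    hQ1sum
    (fun z hz => mul_pos (lt_of_lt_of_le hz (hmW z)) (hQpos z hz))
  have hsplit : ∀ z : α × β,
      P z * (-Real.log (pr f W z.2 * (if z.1 = g z.2 then 1 - Pe else Pe / M)))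
        = P z * (-Real.log (pr f W z.2))
          + P z * (-Real.log (if z.1 = g z.2 then 1 - Pe else Pe / M)) := by
    intro z
    rcases eq_or_lt_of_le (hP0 z) with h | h
    · rw [← h]; ring
    · rw [Real.log_mul (ne_of_gt (lt_of_lt_of_le h (hmW z))) (ne_of_gt (hQpos z h))]; ring
  rw [Finset.sum_congr rfl (fun z _ => hsplit z), Finset.sum_add_distrib] at key
  have tW : ∑ z : α × β, P z * (-Real.log (pr f W z.2)) = ent f W := by
    have a1 := sum_pr_mul (f := f) (Z := fun ω => (Z ω, W ω))
      (c := fun z : α × β => -Real.log (pr f W z.2))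
    have a2 := sum_pr_mul (f := f) (Z := W) (c := fun b => -Real.log (pr f W b))
    exact (a1.trans a2.symm).trans (sum_mul_neg_log_eq_ent W)
  have tQ : ∑ z : α × β, P z * (-Real.log (if z.1 = g z.2 then 1 - Pe else Pe / M))
      = (1 - Pe) * (-Real.log (1 - Pe)) + Pe * (-Real.log (Pe / M)) := by
    have hpt : ∀ z : α × β, P z * (-Real.log (if z.1 = g z.2 then 1 - Pe else Pe / M))
        = (if z.1 = g z.2 then P z else 0) * (-Real.log (1 - Pe))
          + (if z.1 = g z.2 then 0 else P z) * (-Real.log (Pe / M)) := by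
      intro z; split <;> simp
    simp_rw [hpt]
    rw [Finset.sum_add_distrib, ← Finset.sum_mul, ← Finset.sum_mul, hC, hE]
  rw [tW, tQ] at key
  have hval : (1 - Pe) * (-Real.log (1 - Pe)) + Pe * (-Real.log (Pe / M))
      = binEnt Pe + Pe * Real.log M := by
    rcases eq_or_lt_of_le hPe0 with h | h
    · rw [← h]; simp [binEnt]
    · rw [Real.log_div (ne_of_gt h) (ne_of_gt hM0)]
      simp only [binEnt, Real.negMulLog]
      ring
  rw [hval] at key
  have hident : ent f (fun ω => (Z ω, W ω)) = ∑ z, Real.negMulLog (P z) := rfl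
  rw [hident]
  linarith

end FanoAux

open FanoAux in
open scoped Classical in
/-- Converse bound: with independent erasure channels (non-erasure probability `p`)
on each row and a decoder with error probability at most `ε`,
`p ⬝ ∑ℓ H(Xℓ) ≥ H(X₁,…,X_k) - h(ε) - ε log|𝒳₁ × ⋯ × 𝒳_k|`. -/
theorem converse_fano_bound {Ω : Type*} [Fintype Ω] {k : ℕ} {α : Fin k → Type*}
    [∀ ℓ, Fintype (α ℓ)]
    (f : Ω → ℝ) (hf0 : ∀ ω, 0 ≤ f ω) (hf1 : ∑ ω, f ω = 1)
    (p ε : ℝ) (hε1 : ε ≤ 1)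
    (X : ∀ ℓ, Ω → α ℓ) (B : Fin k → Ω → Bool)
    (hp : ∀ ℓ, pr f (B ℓ) true = p)
    (hind : ∀ (a : ∀ ℓ, α ℓ) (b : Fin k → Bool),
      pr f (fun ω => (fun ℓ => X ℓ ω, fun ℓ => B ℓ ω)) (a, b)
        = pr f (fun ω ℓ => X ℓ ω) a * ∏ ℓ, (if b ℓ then p else 1 - p))
    (Y : ∀ ℓ, Ω → Option (α ℓ)) (hY : ∀ ℓ ω, Y ℓ ω = if B ℓ ω then some (X ℓ ω) else none)
    (g : (∀ ℓ, Option (α ℓ)) → ∀ ℓ, α ℓ)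
    (herr : (∑ ω, if g (fun ℓ => Y ℓ ω) ≠ (fun ℓ => X ℓ ω) then f ω else 0) ≤ ε) :
    p * ∑ ℓ, ent f (X ℓ) ≥
      ent f (fun ω ℓ => X ℓ ω) - binEnt ε
        - ε * Real.log (Fintype.card (∀ ℓ, α ℓ)) := by
  -- nonemptiness
  have hΩ : Nonempty Ω := by
    by_contra h
    rw [not_nonempty_iff] at h
    rw [Finset.univ_eq_empty, Finset.sum_empty] at hf1
    exact one_ne_zero hf1.symm
  obtain ⟨ω₀⟩ := hΩ
  haveI hne : Nonempty (∀ ℓ, α ℓ) := ⟨fun ℓ => X ℓ ω₀⟩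
  have hq1 : ∑ x : ∀ ℓ, α ℓ, pr f (fun ω ℓ => X ℓ ω) x = 1 := sum_pr hf1 _
  -- distribution of the B-vector
  have hRB : ∀ w : Fin k → Bool,
      pr f (fun ω (ℓ : Fin k) => B ℓ ω) w = ∏ ℓ, (if w ℓ then p else 1 - p) := by
    intro w
    calc pr f (fun ω (ℓ : Fin k) => B ℓ ω) w
        = ∑ z : (∀ ℓ, α ℓ) × (Fin k → Bool),
            @ite ℝ (z.2 = w) (Classical.propDecidable _)
              (pr f (fun ω => (fun ℓ => X ℓ ω, fun ℓ => B ℓ ω)) z) 0 :=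
          pr_comp (f := f)
            (Z := fun ω => ((fun ℓ => X ℓ ω, fun ℓ => B ℓ ω) : (∀ ℓ, α ℓ) × (Fin k → Bool)))
            (φ := Prod.snd) w
      _ = ∑ x : ∀ ℓ, α ℓ, ∑ w' : Fin k → Bool,
            @ite ℝ (w' = w) (Classical.propDecidable _)
              (pr f (fun ω => (fun ℓ => X ℓ ω, fun ℓ => B ℓ ω)) (x, w')) 0 :=
          Fintype.sum_prod_type _
      _ = ∑ x : ∀ ℓ, α ℓ,
            pr f (fun ω ℓ => X ℓ ω) x * ∏ ℓ, (if w ℓ then p else 1 - p) := by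
          refine Finset.sum_congr rfl fun x _ => ?_
          rw [Finset.sum_eq_single w]
          · rw [if_pos rfl, hind]
          · intro w' _ hw'
            rw [if_neg hw']
          · intro h
            exact absurd (Finset.mem_univ w) h
      _ = ∏ ℓ, (if w ℓ then p else 1 - p) := by rw [← Finset.sum_mul, hq1, one_mul]
  -- marginals
  have hq_marg : ∀ (ℓ : Fin k) (a : α ℓ),
      (∑ x : ∀ j, α j, if x ℓ = a then pr f (fun ω (j : Fin k) => X j ω) x else 0)
        = pr f (X ℓ) a := by
    intro ℓ a
    exact (pr_comp (f := f) (Z := fun ω (j : Fin k) => X j ω) (φ := fun x => x ℓ) a).symm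
  have hB_marg : ∀ (ℓ : Fin k) (b : Bool),
      (∑ w : Fin k → Bool, @ite ℝ (w ℓ = b) (Classical.propDecidable _)
          (pr f (fun ω (j : Fin k) => B j ω) w) 0)
        = pr f (B ℓ) b := by
    intro ℓ b
    exact (pr_comp (f := f) (Z := fun ω (j : Fin k) => B j ω) (φ := fun w => w ℓ) b).symm
  have hsumB : ∀ ℓ : Fin k, pr f (B ℓ) true + pr f (B ℓ) false = 1 := by
    intro ℓ
    have h := sum_pr (f := f) hf1 (B ℓ)
    rwa [Fintype.sum_bool] at h
  have hrl : ∀ (ℓ : Fin k) (b : Bool), pr f (B ℓ) b = if b then p else 1 - p := by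
    intro ℓ b
    cases b
    · have h := hsumB ℓ
      rw [hp ℓ] at h
      simp only [Bool.false_eq_true, if_false]
      linarith
    · simpa using hp ℓ
  have hS : ∀ (ℓ : Fin k) (b : Bool),
      (∑ w : Fin k → Bool, @ite ℝ (w ℓ = b) (Classical.propDecidable _)
          (∏ j, (if w j then p else 1 - p)) 0)
        = (if b then p else 1 - p) := by
    intro ℓ b
    rw [← hrl ℓ b, ← hB_marg ℓ b]
    refine Finset.sum_congr rfl fun w _ => ?_
    rw [hRB]
  -- joint of (X ℓ, B ℓ)
  have hXB : ∀ (ℓ : Fin k) (a : α ℓ) (b : Bool),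
      pr f (fun ω => (X ℓ ω, B ℓ ω)) (a, b) = pr f (X ℓ) a * (if b then p else 1 - p) := by
    intro ℓ a b
    calc pr f (fun ω => (X ℓ ω, B ℓ ω)) (a, b)
        = ∑ z : (∀ j, α j) × (Fin k → Bool),
            @ite ℝ ((z.1 ℓ, z.2 ℓ) = (a, b)) (Classical.propDecidable _)
              (pr f (fun ω => (fun ℓ => X ℓ ω, fun ℓ => B ℓ ω)) z) 0 :=
          pr_comp (f := f)
            (Z := fun ω => ((fun ℓ => X ℓ ω, fun ℓ => B ℓ ω) : (∀ j, α j) × (Fin k → Bool)))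
            (φ := fun z => (z.1 ℓ, z.2 ℓ)) (a, b)
      _ = ∑ x : ∀ j, α j, ∑ w : Fin k → Bool,
            @ite ℝ ((x ℓ, w ℓ) = (a, b)) (Classical.propDecidable _)
              (pr f (fun ω => (fun ℓ => X ℓ ω, fun ℓ => B ℓ ω)) (x, w)) 0 :=
          Fintype.sum_prod_type _
      _ = ∑ x : ∀ j, α j, (if x ℓ = a then pr f (fun ω (j : Fin k) => X j ω) x else 0)
            * (if b then p else 1 - p) := by
          refine Finset.sum_congr rfl fun x _ => ?_
          by_cases hx : x ℓ = a
          · rw [if_pos hx]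
            calc (∑ w : Fin k → Bool,
                  @ite ℝ ((x ℓ, w ℓ) = (a, b)) (Classical.propDecidable _)
                    (pr f (fun ω => (fun ℓ => X ℓ ω, fun ℓ => B ℓ ω)) (x, w)) 0)
                = ∑ w : Fin k → Bool, pr f (fun ω (j : Fin k) => X j ω) x
                    * @ite ℝ (w ℓ = b) (Classical.propDecidable _)
                        (∏ j, (if w j then p else 1 - p)) 0 := by
                  refine Finset.sum_congr rfl fun w _ => ?_
                  by_cases hw : w ℓ = b
                  · rw [if_pos (by rw [hx, hw]), hind, if_pos hw]
                  · rw [if_neg (by simp [Prod.ext_iff, hw]), if_neg hw, mul_zero]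
              _ = pr f (fun ω (j : Fin k) => X j ω) x * (if b then p else 1 - p) := by
                  rw [← Finset.mul_sum, hS ℓ b]
          · rw [if_neg hx, zero_mul]
            refine Finset.sum_eq_zero fun w _ => ?_
            rw [if_neg (by simp [Prod.ext_iff, hx])]
      _ = pr f (X ℓ) a * (if b then p else 1 - p) := by
          rw [← Finset.sum_mul, hq_marg ℓ a]
  -- distribution of Y ℓ
  have hYfun : ∀ ℓ : Fin k, (Y ℓ) = fun ω =>
      (fun z : α ℓ × Bool => if z.2 then some z.1 else none) (X ℓ ω, B ℓ ω) := by
    intro ℓ; funext ω; simpa using hY ℓ ω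
  have hYsome : ∀ (ℓ : Fin k) (a : α ℓ), pr f (Y ℓ) (some a) = p * pr f (X ℓ) a := by
    intro ℓ a
    rw [hYfun ℓ]
    calc pr f (fun ω => (fun z : α ℓ × Bool => if z.2 then some z.1 else none) (X ℓ ω, B ℓ ω))
          (some a)
        = ∑ z : α ℓ × Bool, @ite ℝ ((if z.2 then some z.1 else none) = some a)
            (Classical.propDecidable _) (pr f (fun ω => (X ℓ ω, B ℓ ω)) z) 0 :=
          pr_comp (f := f) (Z := fun ω => (X ℓ ω, B ℓ ω))
            (φ := fun z : α ℓ × Bool => if z.2 then some z.1 else none) (some a)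
      _ = ∑ a' : α ℓ, ∑ b : Bool, @ite ℝ ((if b then some a' else none) = some a)
            (Classical.propDecidable _) (pr f (fun ω => (X ℓ ω, B ℓ ω)) (a', b)) 0 :=
          Fintype.sum_prod_type _
      _ = ∑ a' : α ℓ, (if a' = a then pr f (X ℓ) a' * p else 0) := by
          refine Finset.sum_congr rfl fun a' _ => ?_
          rw [Fintype.sum_bool]
          by_cases ha : a' = a
          · simp [ha, hXB]
          · simp [ha]
      _ = pr f (X ℓ) a * p := by
          rw [Finset.sum_eq_single a]
          · rw [if_pos rfl]
          · intro a' _ ha; rw [if_neg ha]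
          · intro h; exact absurd (Finset.mem_univ a) h
      _ = p * pr f (X ℓ) a := mul_comm _ _
  have hYnone : ∀ ℓ : Fin k, pr f (Y ℓ) none = 1 - p := by
    intro ℓ
    rw [hYfun ℓ]
    calc pr f (fun ω => (fun z : α ℓ × Bool => if z.2 then some z.1 else none) (X ℓ ω, B ℓ ω))
          none
        = ∑ z : α ℓ × Bool, @ite ℝ ((if z.2 then some z.1 else none) = none)
            (Classical.propDecidable _) (pr f (fun ω => (X ℓ ω, B ℓ ω)) z) 0 :=
          pr_comp (f := f) (Z := fun ω => (X ℓ ω, B ℓ ω))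
            (φ := fun z : α ℓ × Bool => if z.2 then some z.1 else none) none
      _ = ∑ a' : α ℓ, ∑ b : Bool, @ite ℝ ((if b then some a' else none) = none)
            (Classical.propDecidable _) (pr f (fun ω => (X ℓ ω, B ℓ ω)) (a', b)) 0 :=
          Fintype.sum_prod_type _
      _ = ∑ a' : α ℓ, pr f (X ℓ) a' * (1 - p) := by
          refine Finset.sum_congr rfl fun a' _ => ?_
          rw [Fintype.sum_bool]
          simp [hXB]
      _ = 1 - p := by rw [← Finset.sum_mul, sum_pr hf1, one_mul]
  -- entropies of the single letters
  have hentY : ∀ ℓ : Fin k, ent f (Y ℓ)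
      = (Real.negMulLog p + Real.negMulLog (1 - p)) + p * ent f (X ℓ) := by
    intro ℓ
    unfold ent
    rw [Fintype.sum_option]
    rw [hYnone ℓ]
    rw [Finset.sum_congr rfl (fun a (_ : a ∈ univ) => by rw [hYsome ℓ a, Real.negMulLog_mul])]
    rw [Finset.sum_add_distrib, ← Finset.sum_mul, ← Finset.mul_sum, sum_pr hf1, one_mul]
    ring
  have hentBB : ent f (fun ω (ℓ : Fin k) => B ℓ ω)
      = (k : ℝ) * (Real.negMulLog p + Real.negMulLog (1 - p)) := by
    have h0 : ent f (fun ω (ℓ : Fin k) => B ℓ ω)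
        = ∑ w : Fin k → Bool, Real.negMulLog (∏ ℓ, if w ℓ then p else 1 - p) := by
      unfold ent
      exact Finset.sum_congr rfl fun w _ => by rw [hRB]
    rw [h0]
    have h := ent_pi k (fun b => if b then p else 1 - p) (by simp)
    simpa using h
  -- independence of the X-vector and B-vector
  have hentXB : ent f (fun ω => ((fun ℓ => X ℓ ω : ∀ ℓ, α ℓ), (fun ℓ => B ℓ ω : Fin k → Bool)))
      = ent f (fun ω (ℓ : Fin k) => X ℓ ω) + ent f (fun ω (ℓ : Fin k) => B ℓ ω) :=
    ent_pair_of_indep (f := f) (fun ω (ℓ : Fin k) => X ℓ ω) (fun ω (ℓ : Fin k) => B ℓ ω)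
      (pr f (fun ω (ℓ : Fin k) => X ℓ ω)) (pr f (fun ω (ℓ : Fin k) => B ℓ ω))
      hq1 (sum_pr hf1 _) (fun a b => by rw [hRB]; exact hind a b)
  -- (X, Y) is an injective image of (X, B)
  have hΦinj : Function.Injective (fun z : (∀ ℓ, α ℓ) × (Fin k → Bool) =>
      ((z.1, fun ℓ => if z.2 ℓ then some (z.1 ℓ) else none)
        : (∀ ℓ, α ℓ) × (∀ ℓ, Option (α ℓ)))) := by
    rintro ⟨x, w⟩ ⟨x', w'⟩ h
    simp only [Prod.mk.injEq] at h
    obtain ⟨hx, hw⟩ := h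
    subst hx
    simp only [Prod.mk.injEq, true_and]
    funext ℓ
    have hℓ := congrFun hw ℓ
    cases hbℓ : w ℓ <;> cases hb'ℓ : w' ℓ <;> simp [hbℓ, hb'ℓ] at hℓ ⊢
  have hXYeq : ent f (fun ω => ((fun ℓ => X ℓ ω : ∀ ℓ, α ℓ), (fun ℓ => Y ℓ ω : ∀ ℓ, Option (α ℓ))))
      = ent f (fun ω => ((fun ℓ => X ℓ ω : ∀ ℓ, α ℓ), (fun ℓ => B ℓ ω : Fin k → Bool))) := by
    have h0 : (fun ω => ((fun ℓ => X ℓ ω : ∀ ℓ, α ℓ), (fun ℓ => Y ℓ ω : ∀ ℓ, Option (α ℓ))))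
        = fun ω => (fun z : (∀ ℓ, α ℓ) × (Fin k → Bool) =>
            ((z.1, fun ℓ => if z.2 ℓ then some (z.1 ℓ) else none)
              : (∀ ℓ, α ℓ) × (∀ ℓ, Option (α ℓ))))
          ((fun ℓ => X ℓ ω, fun ℓ => B ℓ ω)) := by
      funext ω
      exact congrArg _ (funext fun ℓ => hY ℓ ω)
    rw [h0]
    exact ent_comp_inj _ _ hΦinj
  -- subadditivity for Y
  have hsubY : ent f (fun ω (ℓ : Fin k) => Y ℓ ω) ≤ ∑ ℓ, ent f (Y ℓ) :=
    ent_pi_le hf0 hf1 (fun ω (ℓ : Fin k) => Y ℓ ω)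
  -- Fano
  have hfano : ent f (fun ω => ((fun ℓ => X ℓ ω : ∀ ℓ, α ℓ), (fun ℓ => Y ℓ ω : ∀ ℓ, Option (α ℓ))))
        - ent f (fun ω (ℓ : Fin k) => Y ℓ ω)
      ≤ binEnt (∑ ω, if g (fun ℓ => Y ℓ ω) ≠ (fun ℓ => X ℓ ω) then f ω else 0)
        + (∑ ω, if g (fun ℓ => Y ℓ ω) ≠ (fun ℓ => X ℓ ω) then f ω else 0)
          * Real.log (Fintype.card (∀ ℓ, α ℓ)) := by
    have h := fano_aux (f := f) hf0 hf1 (fun ω (ℓ : Fin k) => X ℓ ω)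
      (fun ω (ℓ : Fin k) => Y ℓ ω) g
    have hPe_eq : (∑ ω, @ite ℝ ((g fun ℓ => Y ℓ ω) ≠ fun ℓ => X ℓ ω)
        (@instDecidableNot _ (Classical.propDecidable _)) (f ω) 0)
        = ∑ ω, if g (fun ℓ => Y ℓ ω) ≠ (fun ℓ => X ℓ ω) then f ω else 0 :=
      Finset.sum_congr rfl fun ω _ => by
        by_cases hc : (g fun ℓ => Y ℓ ω) = fun ℓ => X ℓ ω
        · rw [if_neg (by simpa using hc), if_neg (by simpa using hc)]
        · rw [if_pos hc, if_pos hc]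
    rw [hPe_eq] at h
    exact h
  have hPe0 : (0:ℝ) ≤ ∑ ω, if g (fun ℓ => Y ℓ ω) ≠ (fun ℓ => X ℓ ω) then f ω else 0 :=
    Finset.sum_nonneg fun ω _ => by
      by_cases h : g (fun ℓ => Y ℓ ω) = (fun ℓ => X ℓ ω)
      · rw [if_neg (by simpa using h)]
      · rw [if_pos h]
        exact hf0 ω
  have hM1 : (1:ℝ) ≤ (Fintype.card (∀ ℓ, α ℓ) : ℝ) := by exact_mod_cast Fintype.card_pos
  have hlogM : (0:ℝ) ≤ Real.log (Fintype.card (∀ ℓ, α ℓ)) := Real.log_nonneg hM1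
  have hpairle : ent f (fun ω => ((fun ℓ => X ℓ ω : ∀ ℓ, α ℓ), (fun ℓ => Y ℓ ω : ∀ ℓ, Option (α ℓ))))
      ≤ ent f (fun ω (ℓ : Fin k) => X ℓ ω) + ent f (fun ω (ℓ : Fin k) => Y ℓ ω) :=
    ent_pair_le hf0 hf1 _ _
  have hXXle : ent f (fun ω (ℓ : Fin k) => X ℓ ω) ≤ Real.log (Fintype.card (∀ ℓ, α ℓ)) :=
    ent_le_log hf0 hf1 _
  have hinterp : ent f (fun ω => ((fun ℓ => X ℓ ω : ∀ ℓ, α ℓ), (fun ℓ => Y ℓ ω : ∀ ℓ, Option (α ℓ))))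
        - ent f (fun ω (ℓ : Fin k) => Y ℓ ω)
      ≤ binEnt ε + ε * Real.log (Fintype.card (∀ ℓ, α ℓ)) :=
    binEnt_interp hlogM hPe0 herr hε1 (by linarith) hfano
  -- combine everything
  have hA1 : ∑ ℓ, ent f (Y ℓ)
      = (k : ℝ) * (Real.negMulLog p + Real.negMulLog (1 - p)) + p * ∑ ℓ, ent f (X ℓ) := by
    rw [Finset.sum_congr rfl (fun ℓ (_ : ℓ ∈ univ) => hentY ℓ), Finset.sum_add_distrib,
      Finset.sum_const, Finset.card_univ, Fintype.card_fin, nsmul_eq_mul, ← Finset.mul_sum]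
  linarith [hA1, hsubY, hentBB, hentXB, hXYeq, hinterp]
end

section
/- Let X^n, Y^n be discrete random vectors and Z^n the coordinatewise erasure of Y^n: Z_i = Y_i with probability p and Z_i = e otherwise, erasure indicators i.i.d. Bernoulli(p) independent of (X^n, Y^n). Assume moreover that for each i, Y_i is conditionally independent of (Y₁^{i−1}, Z_{i+1}^n) given X^n (memoryless observation channel). Then I(X^n; Z^n) = p·I(X^n; Y^n) + (1−p)·∑_{i=1}^n I(Y_i; Z_{i+1},…,Z_n | Y₁,…,Y_{i−1}). -/
open Real Finset

open scoped Classical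

section A
variable {Ω α γ : Type*} [Fintype Ω]

lemma pr_nonneg (f : Ω → ℝ) (hf0 : ∀ ω, 0 ≤ f ω) (X : Ω → α) (a : α) : 0 ≤ pr f X a := by
  unfold pr
  apply Finset.sum_nonneg
  intro ω _
  split <;> simp [hf0]

lemma sum_pr [Fintype α] (f : Ω → ℝ) (X : Ω → α) : ∑ a, pr f X a = ∑ ω, f ω := by
  unfold pr
  rw [Finset.sum_comm]
  refine Finset.sum_congr rfl fun ω _ => ?_
  simp

lemma pr_comp [Fintype α] (f : Ω → ℝ) (T : Ω → α) (φ : α → γ) (c : γ) :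
    pr f (fun ω => φ (T ω)) c = pr (fun a => pr f T a) φ c := by
  have h2 : pr (fun a => pr f T a) φ c = ∑ a, ∑ ω, if T ω = a ∧ φ a = c then f ω else 0 := by
    unfold pr
    refine Finset.sum_congr rfl fun a _ => ?_
    split
    · next h => exact Finset.sum_congr rfl fun ω _ => by simp [h]
    · next h => exact (Finset.sum_eq_zero fun ω _ => by simp [h]).symm
  rw [h2, Finset.sum_comm]
  unfold pr
  refine Finset.sum_congr rfl fun ω _ => ?_
  rw [Finset.sum_eq_single (T ω)]
  · simp
  · intro a _ ha
    rw [if_neg]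
    rintro ⟨h1, _⟩
    exact ha h1.symm
  · simp

lemma ent_comp [Fintype α] [Fintype γ] (f : Ω → ℝ) (T : Ω → α) (φ : α → γ) :
    ent f (fun ω => φ (T ω)) = ent (fun a => pr f T a) φ := by
  unfold ent
  exact Finset.sum_congr rfl fun c _ => by rw [pr_comp]

lemma pr_congr_inj (f : Ω → ℝ) {V : Ω → γ} {W : Ω → α} {g : α → γ}
    (h : ∀ ω, V ω = g (W ω)) (hg : Function.Injective g) (w : α) :
    pr f V (g w) = pr f W w := by
  unfold pr
  refine Finset.sum_congr rfl fun ω _ => ?_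
  rw [h ω]
  by_cases hw : W ω = w
  · simp [hw]
  · rw [if_neg (fun hc => hw (hg hc)), if_neg hw]

lemma pr_eq_zero_of_not_range (f : Ω → ℝ) {V : Ω → γ} {W : Ω → α} {g : α → γ}
    (h : ∀ ω, V ω = g (W ω)) {c : γ} (hc : ∀ a, g a ≠ c) : pr f V c = 0 := by
  unfold pr
  refine Finset.sum_eq_zero fun ω _ => ?_
  rw [h ω, if_neg (hc _)]

lemma ent_comp_injective [Fintype α] [Fintype γ] (f : Ω → ℝ) (W : Ω → α) {g : α → γ}
    (hg : Function.Injective g) : ent f (fun ω => g (W ω)) = ent f W := by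
  unfold ent
  rw [← Finset.sum_subset (Finset.subset_univ (Finset.univ.image g))
      (fun c _ hc => by
        rw [pr_eq_zero_of_not_range f (W := W) (g := g) (fun ω => rfl)
          (fun a ha => hc (Finset.mem_image.2 ⟨a, Finset.mem_univ a, ha⟩))]
        simp)]
  rw [Finset.sum_image (fun a _ b _ hab => hg hab)]
  exact Finset.sum_congr rfl fun a _ => by rw [pr_congr_inj f (W := W) (g := g) (fun ω => rfl) hg]

lemma ent_congr [Fintype α] [Fintype γ] (f : Ω → ℝ) {V : Ω → γ} {W : Ω → α}
    (φ : α → γ) (ψ : γ → α) (h1 : ∀ ω, V ω = φ (W ω)) (h2 : ∀ ω, W ω = ψ (V ω)) :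
    ent f V = ent f W := by
  have e1 : ent f (fun ω => (W ω, V ω)) = ent f W := by
    have hfun : (fun ω => (W ω, V ω)) = (fun ω => (W ω, φ (W ω))) :=
      funext fun ω => by rw [h1 ω]
    rw [hfun]
    exact ent_comp_injective f W (g := fun a => (a, φ a))
      (fun a b hab => congrArg Prod.fst hab)
  have e2 : ent f (fun ω => (W ω, V ω)) = ent f V := by
    have hfun : (fun ω => (W ω, V ω)) = (fun ω => (ψ (V ω), V ω)) :=
      funext fun ω => by rw [h2 ω]
    rw [hfun]
    exact ent_comp_injective f V (g := fun v => (ψ v, v))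
      (fun a b hab => congrArg Prod.snd hab)
  rw [← e1, e2]

lemma pr_marg_snd {β' : Type*} [Fintype α] [Fintype β'] (f : Ω → ℝ) (A : Ω → α) (Bv : Ω → β')
    (a : α) : pr f A a = ∑ b, pr f (fun ω => (A ω, Bv ω)) (a, b) := by
  unfold pr
  rw [Finset.sum_comm]
  refine Finset.sum_congr rfl fun ω _ => ?_
  rw [Finset.sum_eq_single (Bv ω)]
  · by_cases h : A ω = a
    · simp [h]
    · simp [h, Prod.ext_iff]
  · intro b _ hb
    rw [if_neg]
    intro h
    exact hb (congrArg Prod.snd h).symm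
  · simp

lemma pr_marg_fst {β' : Type*} [Fintype α] [Fintype β'] (f : Ω → ℝ) (A : Ω → α) (Bv : Ω → β')
    (b : β') : pr f Bv b = ∑ a, pr f (fun ω => (A ω, Bv ω)) (a, b) := by
  unfold pr
  rw [Finset.sum_comm]
  refine Finset.sum_congr rfl fun ω _ => ?_
  rw [Finset.sum_eq_single (A ω)]
  · by_cases h : Bv ω = b
    · simp [h]
    · simp [h, Prod.ext_iff]
  · intro a _ ha
    rw [if_neg]
    intro h
    exact ha (congrArg Prod.fst h).symm
  · simp

end A

section B
variable {Ω α β' γ γ' : Type*} [Fintype Ω] [Fintype α] [Fintype β'] [Fintype γ] [Fintype γ']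

lemma ent_pair_of_indep (f : Ω → ℝ) (hf1 : ∑ ω, f ω = 1) (A : Ω → α) (Bv : Ω → β')
    (h : ∀ a b, pr f (fun ω => (A ω, Bv ω)) (a, b) = pr f A a * pr f Bv b) :
    ent f (fun ω => (A ω, Bv ω)) = ent f A + ent f Bv := by
  unfold ent
  rw [Fintype.sum_prod_type]
  have : ∀ a b, Real.negMulLog (pr f (fun ω => (A ω, Bv ω)) (a, b))
      = pr f Bv b * Real.negMulLog (pr f A a) + pr f A a * Real.negMulLog (pr f Bv b) := by
    intro a b
    rw [h a b, Real.negMulLog_mul]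
  simp only [this]
  have e : ∀ a, (∑ b, (pr f Bv b * Real.negMulLog (pr f A a)
        + pr f A a * Real.negMulLog (pr f Bv b)))
      = Real.negMulLog (pr f A a) + pr f A a * ∑ b, Real.negMulLog (pr f Bv b) := by
    intro a
    rw [Finset.sum_add_distrib, ← Finset.sum_mul, sum_pr f Bv, hf1, one_mul, ← Finset.mul_sum]
  simp only [e]
  rw [Finset.sum_add_distrib, ← Finset.sum_mul, sum_pr f A, hf1, one_mul]

lemma cmi_congr_right (f : Ω → ℝ) (X : Ω → α) (Y : Ω → β') {C : Ω → γ} {C' : Ω → γ'}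
    (φ : γ' → γ) (ψ : γ → γ') (h1 : ∀ ω, C ω = φ (C' ω)) (h2 : ∀ ω, C' ω = ψ (C ω)) :
    cmi f X Y C = cmi f X Y C' := by
  unfold cmi
  rw [ent_congr f (fun (q : α × γ') => (q.1, φ q.2)) (fun (q : α × γ) => (q.1, ψ q.2))
      (V := fun ω => (X ω, C ω)) (W := fun ω => (X ω, C' ω))
      (fun ω => by simp [h1 ω]) (fun ω => by simp [h2 ω]),
    ent_congr f (fun (q : β' × γ') => (q.1, φ q.2)) (fun (q : β' × γ) => (q.1, ψ q.2))
      (V := fun ω => (Y ω, C ω)) (W := fun ω => (Y ω, C' ω))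
      (fun ω => by simp [h1 ω]) (fun ω => by simp [h2 ω]),
    ent_congr f (fun (q : α × β' × γ') => (q.1, q.2.1, φ q.2.2))
      (fun (q : α × β' × γ) => (q.1, q.2.1, ψ q.2.2))
      (V := fun ω => (X ω, Y ω, C ω)) (W := fun ω => (X ω, Y ω, C' ω))
      (fun ω => by simp [h1 ω]) (fun ω => by simp [h2 ω]),
    ent_congr f φ ψ (V := C) (W := C') h1 h2]

lemma cmi_eq_zero_of_det (f : Ω → ℝ) (X : Ω → α) {Y : Ω → β'} {C : Ω → γ}
    (φ : γ → β') (h : ∀ ω, Y ω = φ (C ω)) : cmi f X Y C = 0 := by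
  unfold cmi
  rw [ent_congr f (fun (c : γ) => (φ c, c)) Prod.snd
      (V := fun ω => (Y ω, C ω)) (W := C) (fun ω => by simp [h ω]) (fun ω => rfl),
    ent_congr f (fun (q : α × γ) => (q.1, φ q.2, q.2)) (fun (q : α × β' × γ) => (q.1, q.2.2))
      (V := fun ω => (X ω, Y ω, C ω)) (W := fun ω => (X ω, C ω))
      (fun ω => by simp [h ω]) (fun ω => rfl)]
  ring

lemma ent_triple_of_ci (f : Ω → ℝ) (hf0 : ∀ ω, 0 ≤ f ω) (X : Ω → α) (Y : Ω → β') (W : Ω → γ)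
    (h : ∀ x y w, pr f (fun ω => (X ω, Y ω, W ω)) (x, y, w) * pr f X x
      = pr f (fun ω => (X ω, Y ω)) (x, y) * pr f (fun ω => (X ω, W ω)) (x, w)) :
    ent f (fun ω => (X ω, Y ω, W ω)) + ent f X
      = ent f (fun ω => (X ω, Y ω)) + ent f (fun ω => (X ω, W ω)) := by
  unfold ent
  rw [Fintype.sum_prod_type (f := fun q => Real.negMulLog (pr f (fun ω => (X ω, Y ω, W ω)) q)),
    Fintype.sum_prod_type (f := fun q => Real.negMulLog (pr f (fun ω => (X ω, Y ω)) q)),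
    Fintype.sum_prod_type (f := fun q => Real.negMulLog (pr f (fun ω => (X ω, W ω)) q)),
    ← Finset.sum_add_distrib, ← Finset.sum_add_distrib]
  refine Finset.sum_congr rfl fun x _ => ?_
  set s := pr f X x with hs_def
  have hsY : ∑ y, pr f (fun ω => (X ω, Y ω)) (x, y) = s := (pr_marg_snd f X Y x).symm
  have hsW : ∑ w, pr f (fun ω => (X ω, W ω)) (x, w) = s := (pr_marg_snd f X W x).symm
  have hsYW : ∑ y, ∑ w, pr f (fun ω => (X ω, Y ω, W ω)) (x, y, w) = s := by
    rw [← Fintype.sum_prod_type (f := fun q => pr f (fun ω => (X ω, Y ω, W ω)) (x, q))]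
    exact (pr_marg_snd f X (fun ω => (Y ω, W ω)) x).symm
  by_cases hs : s = 0
  · have hu : ∀ y, pr f (fun ω => (X ω, Y ω)) (x, y) = 0 := by
      intro y
      have := Finset.sum_eq_zero_iff_of_nonneg
        (fun b _ => pr_nonneg f hf0 (fun ω => (X ω, Y ω)) (x, b)) |>.1 (hsY.trans hs)
      exact this y (Finset.mem_univ y)
    have hv : ∀ w, pr f (fun ω => (X ω, W ω)) (x, w) = 0 := by
      intro w
      have := Finset.sum_eq_zero_iff_of_nonneg
        (fun b _ => pr_nonneg f hf0 (fun ω => (X ω, W ω)) (x, b)) |>.1 (hsW.trans hs)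
      exact this w (Finset.mem_univ w)
    have hr : ∀ y w, pr f (fun ω => (X ω, Y ω, W ω)) (x, y, w) = 0 := by
      intro y w
      have h1 : ∀ y ∈ Finset.univ (α := β'),
          ∑ w, pr f (fun ω => (X ω, Y ω, W ω)) (x, y, w) = 0 := by
        refine (Finset.sum_eq_zero_iff_of_nonneg fun b _ => ?_).1 (hsYW.trans hs)
        exact Finset.sum_nonneg fun w _ => pr_nonneg f hf0 _ _
      have h2 := (Finset.sum_eq_zero_iff_of_nonneg
        (fun w _ => pr_nonneg f hf0 (fun ω => (X ω, Y ω, W ω)) (x, y, w))).1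
        (h1 y (Finset.mem_univ y))
      exact h2 w (Finset.mem_univ w)
    simp [hr, hu, hv, hs]
  · have key : ∀ y w, pr f (fun ω => (X ω, Y ω, W ω)) (x, y, w)
        = pr f (fun ω => (X ω, Y ω)) (x, y) * pr f (fun ω => (X ω, W ω)) (x, w) / s :=
      fun y w => (eq_div_iff hs).2 (h x y w)
    have hinv : Real.negMulLog s⁻¹ = s⁻¹ * Real.log s := by
      unfold Real.negMulLog
      rw [Real.log_inv]
      ring
    have point : ∀ y w, Real.negMulLog (pr f (fun ω => (X ω, Y ω, W ω)) (x, y, w))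
        = (s⁻¹ * Real.negMulLog (pr f (fun ω => (X ω, Y ω)) (x, y)))
            * pr f (fun ω => (X ω, W ω)) (x, w)
          + pr f (fun ω => (X ω, Y ω)) (x, y)
            * (s⁻¹ * Real.negMulLog (pr f (fun ω => (X ω, W ω)) (x, w)))
          + pr f (fun ω => (X ω, Y ω)) (x, y)
            * (pr f (fun ω => (X ω, W ω)) (x, w) * (s⁻¹ * Real.log s)) := by
      intro y w
      rw [key y w, div_eq_mul_inv, Real.negMulLog_mul, Real.negMulLog_mul, hinv]
      ring
    simp only [point]
    rw [Fintype.sum_prod_type]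
    have e : ∀ y, (∑ w, ((s⁻¹ * Real.negMulLog (pr f (fun ω => (X ω, Y ω)) (x, y)))
            * pr f (fun ω => (X ω, W ω)) (x, w)
          + pr f (fun ω => (X ω, Y ω)) (x, y)
            * (s⁻¹ * Real.negMulLog (pr f (fun ω => (X ω, W ω)) (x, w)))
          + pr f (fun ω => (X ω, Y ω)) (x, y)
            * (pr f (fun ω => (X ω, W ω)) (x, w) * (s⁻¹ * Real.log s))))
        = Real.negMulLog (pr f (fun ω => (X ω, Y ω)) (x, y))
          + pr f (fun ω => (X ω, Y ω)) (x, y)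
            * (s⁻¹ * ∑ w, Real.negMulLog (pr f (fun ω => (X ω, W ω)) (x, w)))
          + pr f (fun ω => (X ω, Y ω)) (x, y) * Real.log s := by
      intro y
      rw [Finset.sum_add_distrib, Finset.sum_add_distrib]
      simp only [← Finset.mul_sum, ← Finset.sum_mul]
      rw [hsW]
      field_simp
    simp only [e]
    rw [Finset.sum_add_distrib, Finset.sum_add_distrib, ← Finset.sum_mul, hsY,
      ← Finset.sum_mul, hsY]
    have h3 : s * (s⁻¹ * ∑ w, Real.negMulLog (pr f (fun ω => (X ω, W ω)) (x, w)))
        = ∑ w, Real.negMulLog (pr f (fun ω => (X ω, W ω)) (x, w)) := by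
      field_simp
    rw [h3]
    unfold Real.negMulLog
    ring
end B

section C
variable {Ω α γ δ : Type*} [Fintype Ω] [Fintype α] [Fintype γ] [Fintype δ]

lemma sum_fiber (ψ : γ → δ) (F : δ → γ → ℝ) :
    ∑ v, F (ψ v) v = ∑ d, ∑ v, if ψ v = d then F d v else 0 := by
  rw [Finset.sum_comm]
  refine Finset.sum_congr rfl fun v _ => ?_
  rw [Finset.sum_eq_single (ψ v)]
  · simp
  · intro d _ hd
    exact if_neg fun h => hd h.symm
  · simp

lemma ent_mixture (f : Ω → ℝ) (T : Ω → α) (D : Ω → δ) (κ : δ → ℝ) (q : α → ℝ)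
    (hjoint : ∀ a d, pr f (fun ω => (T ω, D ω)) (a, d) = q a * κ d)
    (hq1 : ∑ a, q a = 1)
    (Φ : α → δ → γ) (ψ : γ → δ) (hΦ : ∀ a d, ψ (Φ a d) = d)
    (V : Ω → γ) (hV : ∀ ω, V ω = Φ (T ω) (D ω)) :
    ent f V = (∑ d, Real.negMulLog (κ d)) + ∑ d, κ d * ent q (fun a => Φ a d) := by
  have hzero : ∀ (d : δ) (v : γ), ψ v ≠ d → pr q (fun a => Φ a d) v = 0 := by
    intro d v hd
    unfold pr
    refine Finset.sum_eq_zero fun a _ => ?_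
    rw [if_neg]
    intro hc
    exact hd (by rw [← hc, hΦ])
  have hpr : ∀ v, pr f V v = κ (ψ v) * pr q (fun a => Φ a (ψ v)) v := by
    intro v
    have h1 : pr f V v = pr (fun p => pr f (fun ω => (T ω, D ω)) p)
        (fun p : α × δ => Φ p.1 p.2) v := by
      rw [← pr_comp f (fun ω => (T ω, D ω)) (fun p : α × δ => Φ p.1 p.2) v]
      unfold pr
      exact Finset.sum_congr rfl fun ω _ => by rw [hV ω]
    rw [h1]
    unfold pr
    rw [Fintype.sum_prod_type]
    rw [Finset.sum_comm]
    rw [Finset.sum_eq_single (ψ v)]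
    · rw [Finset.mul_sum]
      refine Finset.sum_congr rfl fun a _ => ?_
      split
      · next h =>
        show pr f (fun ω => (T ω, D ω)) (a, ψ v) = κ (ψ v) * q a
        rw [hjoint]
        ring
      · simp
    · intro d _ hd
      refine Finset.sum_eq_zero fun a _ => ?_
      rw [if_neg]
      intro hc
      exact hd (by rw [← hc, hΦ])
    · simp
  unfold ent
  simp only [hpr, Real.negMulLog_mul]
  rw [sum_fiber ψ (fun d v => pr q (fun a => Φ a d) v * Real.negMulLog (κ d)
      + κ d * Real.negMulLog (pr q (fun a => Φ a d) v)), ← Finset.sum_add_distrib]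
  refine Finset.sum_congr rfl fun d _ => ?_
  have hv : ∀ v, (if ψ v = d then pr q (fun a => Φ a d) v * Real.negMulLog (κ d)
      + κ d * Real.negMulLog (pr q (fun a => Φ a d) v) else 0)
      = pr q (fun a => Φ a d) v * Real.negMulLog (κ d)
        + κ d * Real.negMulLog (pr q (fun a => Φ a d) v) := by
    intro v
    split
    · rfl
    · next hne => simp [hzero d v hne]
  simp only [hv]
  rw [Finset.sum_add_distrib, ← Finset.sum_mul, sum_pr q (fun a => Φ a d), hq1, one_mul,
    ← Finset.mul_sum]
end C

section D
variable {Ω σ' : Type*} [Fintype Ω] [Fintype σ'] {n : ℕ} {β : Fin n → Type*}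
  [∀ i, Fintype (β i)]

lemma cast_apply_val {β : Fin n → Type*} {a b : Fin n} (h : b = a) (x : ∀ i, β i) :
    cast (congrArg β h).symm (x a) = x b := by subst h; rfl

lemma ent_pair_const {ζ α : Type*} [Fintype ζ] [Fintype α] (f : Ω → ℝ) (A : Ω → α) (c0 : ζ) :
    ent f (fun ω => (A ω, c0)) = ent f A :=
  ent_comp_injective f A (g := fun a => (a, c0)) (fun a b hab => congrArg Prod.fst hab)

lemma ent_const {ζ : Type*} [Fintype ζ] (f : Ω → ℝ) (hf1 : ∑ ω, f ω = 1) (c0 : ζ) :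
    ent f (fun _ => c0) = 0 := by
  unfold ent
  refine Finset.sum_eq_zero fun c _ => ?_
  by_cases h : c = c0
  · subst h
    have : pr f (fun _ => c) c = 1 := by
      unfold pr
      simp [hf1]
    simp [this]
  · have : pr f (fun _ => c0) c = 0 := by
      unfold pr
      refine Finset.sum_eq_zero fun ω _ => if_neg fun hc => h hc.symm
    simp [this]

lemma cmi_const_eq_mi {α β₂ : Type*} [Fintype α] [Fintype β₂] (f : Ω → ℝ)
    (hf1 : ∑ ω, f ω = 1) (X : Ω → α) (Yv : Ω → β₂) :
    cmi f X Yv (fun _ => ()) = mi f X Yv := by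
  unfold cmi mi
  rw [ent_pair_const f X, ent_pair_const f Yv, ent_const f hf1,
    show ent f (fun ω => (X ω, Yv ω, ())) = ent f (fun ω => (X ω, Yv ω)) from
      ent_comp_injective f (fun ω => (X ω, Yv ω)) (g := fun p => (p.1, p.2, ()))
        (fun a b hab =>
          by simpa [Prod.ext_iff] using hab)]
  ring

lemma cmi_chain {ζ : Type*} [Fintype ζ] (f : Ω → ℝ) (X : Ω → σ') (Y : ∀ i, Ω → β i)
    (C : Ω → ζ) :
    cmi f X (fun ω => fun i => Y i ω) C
      = ∑ i : Fin n, cmi f X (Y i)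
          (fun ω => ((fun j : {j : Fin n // j < i} => Y j.1 ω), C ω)) := by
  classical
  set F : ℕ → ℝ := fun k =>
    ent f (fun ω => (X ω, (fun j : {j : Fin n // j.val < k} => Y j.1 ω), C ω)) with hF
  set G : ℕ → ℝ := fun k =>
    ent f (fun ω => ((fun j : {j : Fin n // j.val < k} => Y j.1 ω), C ω)) with hG
  have step : ∀ i : Fin n,
      cmi f X (Y i) (fun ω => ((fun j : {j : Fin n // j < i} => Y j.1 ω), C ω))
        = (F i.val - F (i.val + 1)) + (G (i.val + 1) - G i.val) := by
    intro i
    unfold cmi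
    have c1 : ent f (fun ω => (X ω,
        ((fun j : {j : Fin n // j < i} => Y j.1 ω), C ω))) = F i.val := rfl
    have c4 : ent f (fun ω => ((fun j : {j : Fin n // j < i} => Y j.1 ω), C ω))
        = G i.val := rfl
    have c2 : ent f (fun ω => (Y i ω,
        ((fun j : {j : Fin n // j < i} => Y j.1 ω), C ω))) = G (i.val + 1) := by
      refine ent_congr f
        (φ := fun (w : (∀ j : {j : Fin n // j.val < i.val + 1}, β j.1) × ζ) =>
          (w.1 ⟨i, Nat.lt_succ_self i.val⟩,
            ((fun j : {j : Fin n // j < i} => w.1 ⟨j.1, Nat.lt_succ_of_lt j.2⟩), w.2)))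
        (ψ := fun (v : β i × ((∀ j : {j : Fin n // j < i}, β j.1) × ζ)) =>
          ((fun j : {j : Fin n // j.val < i.val + 1} =>
            if h : j.1.val < i.val then v.2.1 ⟨j.1, h⟩
            else cast (congrArg β (Fin.eq_of_val_eq
              (Nat.le_antisymm (Nat.lt_succ_iff.mp j.2) (Nat.not_lt.mp h)) : j.1 = i)).symm
              v.1), v.2.2))
        ?_ ?_
      · intro ω; rfl
      · intro ω
        refine Prod.ext ?_ rfl
        funext j
        by_cases h : j.1.val < i.val
        · simp only [dif_pos h]
        · simp only [dif_neg h]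
          exact (cast_apply_val (β := β) (Fin.eq_of_val_eq
            (Nat.le_antisymm (Nat.lt_succ_iff.mp j.2) (Nat.not_lt.mp h)))
            (fun a => Y a ω)).symm
    have c3 : ent f (fun ω => (X ω, Y i ω,
        ((fun j : {j : Fin n // j < i} => Y j.1 ω), C ω))) = F (i.val + 1) := by
      refine ent_congr f
        (φ := fun (w : σ' × (∀ j : {j : Fin n // j.val < i.val + 1}, β j.1) × ζ) =>
          (w.1, w.2.1 ⟨i, Nat.lt_succ_self i.val⟩,
            ((fun j : {j : Fin n // j < i} => w.2.1 ⟨j.1, Nat.lt_succ_of_lt j.2⟩), w.2.2)))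
        (ψ := fun (v : σ' × β i × ((∀ j : {j : Fin n // j < i}, β j.1) × ζ)) =>
          (v.1, (fun j : {j : Fin n // j.val < i.val + 1} =>
            if h : j.1.val < i.val then v.2.2.1 ⟨j.1, h⟩
            else cast (congrArg β (Fin.eq_of_val_eq
              (Nat.le_antisymm (Nat.lt_succ_iff.mp j.2) (Nat.not_lt.mp h)) : j.1 = i)).symm
              v.2.1), v.2.2.2))
        ?_ ?_
      · intro ω; rfl
      · intro ω
        refine Prod.ext rfl (Prod.ext ?_ rfl)
        funext j
        by_cases h : j.1.val < i.val
        · simp only [dif_pos h]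
        · simp only [dif_neg h]
          exact (cast_apply_val (β := β) (Fin.eq_of_val_eq
            (Nat.le_antisymm (Nat.lt_succ_iff.mp j.2) (Nat.not_lt.mp h)))
            (fun a => Y a ω)).symm
    rw [c1, c2, c3, c4]
    ring
  rw [Finset.sum_congr rfl fun i _ => step i]
  rw [Fin.sum_univ_eq_sum_range (fun k => (F k - F (k + 1)) + (G (k + 1) - G k)) n,
    Finset.sum_add_distrib, Finset.sum_range_sub' F, Finset.sum_range_sub G]
  have hF0 : F 0 = ent f (fun ω => (X ω, C ω)) := by
    refine ent_congr f
      (φ := fun (w : σ' × ζ) =>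
        (w.1, (fun j : {j : Fin n // j.val < 0} => absurd j.2 (Nat.not_lt_zero _)), w.2))
      (ψ := fun (v : σ' × (∀ j : {j : Fin n // j.val < 0}, β j.1) × ζ) => (v.1, v.2.2))
      ?_ ?_
    · intro ω
      refine Prod.ext rfl (Prod.ext ?_ rfl)
      funext j
      exact absurd j.2 (Nat.not_lt_zero _)
    · intro ω; rfl
  have hG0 : G 0 = ent f C := by
    refine ent_congr f
      (φ := fun (w : ζ) =>
        ((fun j : {j : Fin n // j.val < 0} => absurd j.2 (Nat.not_lt_zero _)), w))
      (ψ := fun (v : (∀ j : {j : Fin n // j.val < 0}, β j.1) × ζ) => v.2)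
      ?_ ?_
    · intro ω
      refine Prod.ext ?_ rfl
      funext j
      exact absurd j.2 (Nat.not_lt_zero _)
    · intro ω; rfl
  have hFn : F n = ent f (fun ω => (X ω, (fun i => Y i ω), C ω)) := by
    refine ent_congr f
      (φ := fun (w : σ' × (∀ i, β i) × ζ) =>
        (w.1, (fun j : {j : Fin n // j.val < n} => w.2.1 j.1), w.2.2))
      (ψ := fun (v : σ' × (∀ j : {j : Fin n // j.val < n}, β j.1) × ζ) =>
        (v.1, (fun i : Fin n => v.2.1 ⟨i, i.isLt⟩), v.2.2))
      ?_ ?_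
    · intro ω; rfl
    · intro ω; rfl
  have hGn : G n = ent f (fun ω => ((fun i => Y i ω), C ω)) := by
    refine ent_congr f
      (φ := fun (w : (∀ i, β i) × ζ) =>
        ((fun j : {j : Fin n // j.val < n} => w.1 j.1), w.2))
      (ψ := fun (v : (∀ j : {j : Fin n // j.val < n}, β j.1) × ζ) =>
        ((fun i : Fin n => v.1 ⟨i, i.isLt⟩), v.2))
      ?_ ?_
    · intro ω; rfl
    · intro ω; rfl
  rw [hF0, hFn, hG0, hGn]
  unfold cmi
  ring
end D

section E
variable {Ω : Type*} [Fintype Ω] {n : ℕ}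

lemma pr_pair_comp_snd {α δ1 δ2 : Type*} [Fintype δ1] [DecidableEq δ2] (f : Ω → ℝ)
    (A : Ω → α) (D1 : Ω → δ1) (ρ : δ1 → δ2) (a : α) (c : δ2) :
    pr f (fun ω => (A ω, ρ (D1 ω))) (a, c)
      = ∑ b, if ρ b = c then pr f (fun ω => (A ω, D1 ω)) (a, b) else 0 := by
  have h2 : ∀ b : δ1,
      (if ρ b = c then pr f (fun ω => (A ω, D1 ω)) (a, b) else 0)
        = ∑ ω, if (A ω, D1 ω) = (a, b) ∧ ρ b = c then f ω else 0 := by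
    intro b
    split
    · next h =>
      unfold pr
      exact Finset.sum_congr rfl fun ω _ => by simp [h]
    · next h =>
      exact (Finset.sum_eq_zero fun ω _ => by simp [h]).symm
  rw [Finset.sum_congr rfl fun b (_ : b ∈ Finset.univ) => h2 b, Finset.sum_comm]
  unfold pr
  refine Finset.sum_congr rfl fun ω _ => ?_
  rw [Finset.sum_eq_single (D1 ω)]
  · by_cases h : ρ (D1 ω) = c
    · by_cases h2 : A ω = a
      · simp [h, h2, Prod.ext_iff]
      · simp [h, h2, Prod.ext_iff]
    · simp [Prod.ext_iff, h]
  · intro b _ hb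
    rw [if_neg]
    rintro ⟨hc, -⟩
    exact hb (congrArg Prod.snd hc).symm
  · simp

lemma sum_pi_bool_prod {ι : Type*} [Fintype ι] [DecidableEq ι] (w' : Bool → ℝ) (hw : w' true + w' false = 1) :
    ∑ g : ι → Bool, ∏ i, w' (g i) = 1 := by
  rw [← Fintype.prod_sum (f := fun (_ : ι) (t : Bool) => w' t)]
  rw [Finset.prod_congr rfl fun i _ => show (∑ t, w' t) = 1 by
    rw [Fintype.sum_bool]; exact hw]
  simp

lemma prod_fin_split (i : Fin n) (c : Fin n → ℝ) :
    ∏ j, c j = (∏ j : {j : Fin n // j < i}, c j.1) * c i * ∏ j : {j : Fin n // i < j}, c j.1 := by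
  classical
  rw [← Finset.prod_subtype (Finset.univ.filter (· < i)) (by simp) c,
    ← Finset.prod_subtype (Finset.univ.filter (i < ·)) (by simp) c]
  have hset : Finset.univ.filter (fun j => ¬ j < i) = insert i (Finset.univ.filter (i < ·)) := by
    ext j
    simp only [Finset.mem_filter, Finset.mem_univ, true_and, Finset.mem_insert]
    constructor
    · intro h
      rcases lt_or_eq_of_le (not_lt.mp h) with h' | h'
      · exact Or.inr h'
      · exact Or.inl h'.symm
    · rintro (rfl | h)
      · exact lt_irrefl j
      · exact not_lt.mpr (le_of_lt h)
  rw [← Finset.prod_filter_mul_prod_filter_not Finset.univ (· < i) c, hset,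
    Finset.prod_insert (by simp)]
  ring

def eBlocks (i : Fin n) :
    (Fin n → Bool) ≃ (({j : Fin n // j < i} → Bool) × Bool × ({j : Fin n // i < j} → Bool)) where
  toFun b := ((fun j => b j.1), b i, (fun j => b j.1))
  invFun u := fun j =>
    if h : j < i then u.1 ⟨j, h⟩ else if h' : i < j then u.2.2 ⟨j, h'⟩ else u.2.1
  left_inv b := by
    funext j
    by_cases h : j < i
    · simp [h]
    · by_cases h' : i < j
      · simp [h, h']
      · have : j = i := le_antisymm (not_lt.mp h') (not_lt.mp h)
        subst this
        simp [h, h']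
  right_inv u := by
    refine Prod.ext ?_ (Prod.ext ?_ ?_)
    · funext j
      simp [j.2]
    · simp [lt_irrefl]
    · funext j
      have h1 : ¬ j.1 < i := not_lt.mpr (le_of_lt j.2)
      simp [h1, j.2]

lemma eBlocks_symm_lt (i : Fin n)
    (u : ({j : Fin n // j < i} → Bool) × Bool × ({j : Fin n // i < j} → Bool))
    {j : Fin n} (h : j < i) : (eBlocks i).symm u j = u.1 ⟨j, h⟩ := by
  simp [eBlocks, h]

lemma eBlocks_symm_self (i : Fin n)
    (u : ({j : Fin n // j < i} → Bool) × Bool × ({j : Fin n // i < j} → Bool)) :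
    (eBlocks i).symm u i = u.2.1 := by
  simp [eBlocks, lt_irrefl]

lemma eBlocks_symm_gt (i : Fin n)
    (u : ({j : Fin n // j < i} → Bool) × Bool × ({j : Fin n // i < j} → Bool))
    {j : Fin n} (h : i < j) : (eBlocks i).symm u j = u.2.2 ⟨j, h⟩ := by
  have h1 : ¬ j < i := not_lt.mpr (le_of_lt h)
  simp [eBlocks, h1, h]

lemma sum_blocks (i : Fin n) (w' : Bool → ℝ) (hw : w' true + w' false = 1)
    (g : Bool → ({j : Fin n // i < j} → Bool) → ℝ) :
    ∑ b : Fin n → Bool, (∏ j, w' (b j)) * g (b i) (fun j : {j : Fin n // i < j} => b j.1)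
      = ∑ t, w' t * ∑ v : {j : Fin n // i < j} → Bool,
          (∏ j : {j : Fin n // i < j}, w' (v j)) * g t v := by
  classical
  rw [← Equiv.sum_comp (eBlocks i).symm
    (fun b => (∏ j, w' (b j)) * g (b i) (fun j : {j : Fin n // i < j} => b j.1))]
  have hpt : ∀ u, (∏ j, w' ((eBlocks i).symm u j))
        * g ((eBlocks i).symm u i) (fun j : {j : Fin n // i < j} => (eBlocks i).symm u j.1)
      = (∏ j : {j : Fin n // j < i}, w' (u.1 j)) * ((w' u.2.1
          * ((∏ j : {j : Fin n // i < j}, w' (u.2.2 j)) * g u.2.1 u.2.2))) := by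
    intro u
    rw [prod_fin_split i (fun j => w' ((eBlocks i).symm u j))]
    have e1 : ∀ j : {j : Fin n // j < i}, w' ((eBlocks i).symm u j.1) = w' (u.1 j) := by
      intro j
      rw [eBlocks_symm_lt i u j.2]
    have e2 : (eBlocks i).symm u i = u.2.1 := eBlocks_symm_self i u
    have e3 : ∀ j : {j : Fin n // i < j}, w' ((eBlocks i).symm u j.1) = w' (u.2.2 j) := by
      intro j
      rw [eBlocks_symm_gt i u j.2]
    have e4 : (fun j : {j : Fin n // i < j} => (eBlocks i).symm u j.1) = u.2.2 := by
      funext j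
      rw [eBlocks_symm_gt i u j.2]
    rw [Finset.prod_congr rfl fun j _ => e1 j, Finset.prod_congr rfl fun j _ => e3 j, e2, e4]
    ring
  rw [Finset.sum_congr rfl fun u _ => hpt u]
  rw [Fintype.sum_prod_type]
  dsimp only
  rw [← Finset.sum_mul_sum]
  have h1 := sum_pi_bool_prod (ι := {j : Fin n // j < i}) w' hw
  rw [h1, one_mul]
  rw [Fintype.sum_prod_type]
  refine Finset.sum_congr rfl fun t _ => ?_
  dsimp only
  rw [← Finset.mul_sum]

end E

section Main3
variable {Ω σ : Type*} [Fintype Ω] [Fintype σ] {n : ℕ} {β : Fin n → Type*} [∀ i, Fintype (β i)]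

set_option maxHeartbeats 1000000 in
lemma step3 (f : Ω → ℝ) (hf0 : ∀ ω, 0 ≤ f ω) (hf1 : ∑ ω, f ω = 1)
    (p : ℝ) (X : Ω → σ) (Y : ∀ i, Ω → β i) (B : Fin n → Ω → Bool)
    (hind : ∀ (xy : σ × ∀ i, β i) (b : Fin n → Bool),
      pr f (fun ω => ((X ω, fun i => Y i ω), fun i => B i ω)) (xy, b)
        = pr f (fun ω => (X ω, fun i => Y i ω)) xy * ∏ i, (if b i then p else 1 - p))
    (Z : ∀ i, Ω → Option (β i)) (hZ : ∀ i ω, Z i ω = if B i ω then some (Y i ω) else none)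
    (i : Fin n) :
    cmi f X (Y i) (fun ω => ((fun j : {j : Fin n // j < i} => Y j.1 ω), (fun k => Z k ω)))
      = (1 - p) * cmi f X (Y i) (fun ω => ((fun j : {j : Fin n // j < i} => Y j.1 ω), (fun j : {j : Fin n // i < j} => Z j.1 ω))) := by
  classical
  have hq1 : ∑ a : σ × ∀ k, β k, (pr f (fun ω => (X ω, fun k => Y k ω))) a = 1 := by
    rw [sum_pr]; exact hf1
  have hΩ : Nonempty Ω := by
    by_contra h
    rw [not_nonempty_iff] at h
    rw [Finset.univ_eq_empty, Finset.sum_empty] at hf1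
    norm_num at hf1
  have y0 : β i := Y i (Classical.arbitrary Ω)
  have hw : (if true then p else 1 - p) + (if false then p else 1 - p) = 1 := by norm_num
  have hsplit : ∀ (r : ℝ) (c : {j : Fin n // i < j} → Bool),
      ∑ b : Fin n → Bool, (∏ j, (if b j then p else 1 - p))
          * (if (fun j : {j : Fin n // i < j} => b j.1) = c then r else 0)
        = (∏ j : {j : Fin n // i < j}, (if c j then p else 1 - p)) * r := by
    intro r c
    calc ∑ b : Fin n → Bool, (∏ j, (if b j then p else 1 - p))
          * (if (fun j : {j : Fin n // i < j} => b j.1) = c then r else 0)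
        = ∑ t : Bool, (if t then p else 1 - p) * ∑ v : {j : Fin n // i < j} → Bool,
            (∏ j : {j : Fin n // i < j}, (if v j then p else 1 - p)) * (if v = c then r else 0) :=
        sum_blocks i (fun t => if t then p else 1 - p) hw (fun t v => if v = c then r else 0)
      _ = (∏ j : {j : Fin n // i < j}, (if c j then p else 1 - p)) * r := by
          have hinner : ∑ v : {j : Fin n // i < j} → Bool,
              (∏ j : {j : Fin n // i < j}, (if v j then p else 1 - p)) * (if v = c then r else 0)
              = (∏ j : {j : Fin n // i < j}, (if c j then p else 1 - p)) * r := by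
            rw [Finset.sum_eq_single c]
            · simp
            · intro v _ hv
              simp [hv]
            · simp
          rw [hinner, Fintype.sum_bool,
            show (if true = true then p else 1 - p) = p from rfl,
            show (if false = true then p else 1 - p) = 1 - p from rfl]
          ring
  have hjointR : ∀ (a : σ × ∀ k, β k) (c : {j : Fin n // i < j} → Bool),
      pr f (fun ω => ((X ω, fun k => Y k ω), fun j : {j : Fin n // i < j} => B j.1 ω)) (a, c)
        = (pr f (fun ω => (X ω, fun k => Y k ω))) a * (fun c : {j : Fin n // i < j} → Bool => ∏ j : {j : Fin n // i < j}, (if c j then p else 1 - p)) c := by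
    intro a c
    calc pr f (fun ω => ((X ω, fun k => Y k ω), fun j : {j : Fin n // i < j} => B j.1 ω)) (a, c)
        = ∑ b : Fin n → Bool, if (fun j : {j : Fin n // i < j} => b j.1) = c
            then pr f (fun ω => ((X ω, fun k => Y k ω), fun k => B k ω)) (a, b) else 0 :=
        pr_pair_comp_snd f (fun ω => (X ω, fun k => Y k ω)) (fun ω => fun k => B k ω)
          (fun b => fun j : {j : Fin n // i < j} => b j.1) a c
      _ = ∑ b : Fin n → Bool, (∏ j, (if b j then p else 1 - p))
            * (if (fun j : {j : Fin n // i < j} => b j.1) = c then (pr f (fun ω => (X ω, fun k => Y k ω))) a else 0) := by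
          refine Finset.sum_congr rfl fun b _ => ?_
          rw [hind a b]
          split <;> ring
      _ = (∏ j : {j : Fin n // i < j}, (if c j then p else 1 - p)) * (pr f (fun ω => (X ω, fun k => Y k ω))) a := hsplit ((pr f (fun ω => (X ω, fun k => Y k ω))) a) c
      _ = (pr f (fun ω => (X ω, fun k => Y k ω))) a * (fun c : {j : Fin n // i < j} → Bool => ∏ j : {j : Fin n // i < j}, (if c j then p else 1 - p)) c := by ring
  have M1 : ent f (fun ω => (X ω, (fun j : {j : Fin n // j < i} => Y j.1 ω), (fun k => Z k ω)))
      = (∑ d, Real.negMulLog ((fun b : Fin n → Bool => ∏ j, (if b j then p else 1 - p)) d))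
        + ∑ d, (fun b : Fin n → Bool => ∏ j, (if b j then p else 1 - p)) d * ent (pr f (fun ω => (X ω, fun k => Y k ω))) (fun a => (a.1, ((fun j : {j : Fin n // j < i} => a.2 j.1), fun k => if d k then some (a.2 k) else none))) := by
    refine ent_mixture f (fun ω => (X ω, fun k => Y k ω)) (fun ω => fun k => B k ω) (fun b : Fin n → Bool => ∏ j, (if b j then p else 1 - p)) (pr f (fun ω => (X ω, fun k => Y k ω)))
      (fun a d => hind a d) hq1
      (Φ := fun a d => (a.1, ((fun j : {j : Fin n // j < i} => a.2 j.1), fun k => if d k then some (a.2 k) else none)))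
      (ψ := (fun v => fun k => (v.2.2 k).isSome)) ?_ _ ?_
    · intro a d
      funext k
      cases hk : d k <;> simp [hk]
    · intro ω
      refine Prod.ext rfl (Prod.ext rfl ?_)
      funext k
      exact hZ k ω
  have M2 : ent f (fun ω => (Y i ω, (fun j : {j : Fin n // j < i} => Y j.1 ω), (fun k => Z k ω)))
      = (∑ d, Real.negMulLog ((fun b : Fin n → Bool => ∏ j, (if b j then p else 1 - p)) d))
        + ∑ d, (fun b : Fin n → Bool => ∏ j, (if b j then p else 1 - p)) d * ent (pr f (fun ω => (X ω, fun k => Y k ω))) (fun a => (a.2 i, ((fun j : {j : Fin n // j < i} => a.2 j.1), fun k => if d k then some (a.2 k) else none))) := by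
    refine ent_mixture f (fun ω => (X ω, fun k => Y k ω)) (fun ω => fun k => B k ω) (fun b : Fin n → Bool => ∏ j, (if b j then p else 1 - p)) (pr f (fun ω => (X ω, fun k => Y k ω)))
      (fun a d => hind a d) hq1
      (Φ := fun a d => (a.2 i, ((fun j : {j : Fin n // j < i} => a.2 j.1), fun k => if d k then some (a.2 k) else none)))
      (ψ := (fun v => fun k => (v.2.2 k).isSome)) ?_ _ ?_
    · intro a d
      funext k
      cases hk : d k <;> simp [hk]
    · intro ω
      refine Prod.ext rfl (Prod.ext rfl ?_)
      funext k
      exact hZ k ω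
  have M3 : ent f (fun ω => (X ω, Y i ω, (fun j : {j : Fin n // j < i} => Y j.1 ω), (fun k => Z k ω)))
      = (∑ d, Real.negMulLog ((fun b : Fin n → Bool => ∏ j, (if b j then p else 1 - p)) d))
        + ∑ d, (fun b : Fin n → Bool => ∏ j, (if b j then p else 1 - p)) d * ent (pr f (fun ω => (X ω, fun k => Y k ω))) (fun a => (a.1, a.2 i, ((fun j : {j : Fin n // j < i} => a.2 j.1), fun k => if d k then some (a.2 k) else none))) := by
    refine ent_mixture f (fun ω => (X ω, fun k => Y k ω)) (fun ω => fun k => B k ω) (fun b : Fin n → Bool => ∏ j, (if b j then p else 1 - p)) (pr f (fun ω => (X ω, fun k => Y k ω)))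
      (fun a d => hind a d) hq1
      (Φ := fun a d => (a.1, a.2 i, ((fun j : {j : Fin n // j < i} => a.2 j.1), fun k => if d k then some (a.2 k) else none)))
      (ψ := (fun v => fun k => (v.2.2.2 k).isSome)) ?_ _ ?_
    · intro a d
      funext k
      cases hk : d k <;> simp [hk]
    · intro ω
      refine Prod.ext rfl (Prod.ext rfl (Prod.ext rfl ?_))
      funext k
      exact hZ k ω
  have M4 : ent f (fun ω => ((fun j : {j : Fin n // j < i} => Y j.1 ω), (fun k => Z k ω)))
      = (∑ d, Real.negMulLog ((fun b : Fin n → Bool => ∏ j, (if b j then p else 1 - p)) d))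
        + ∑ d, (fun b : Fin n → Bool => ∏ j, (if b j then p else 1 - p)) d * ent (pr f (fun ω => (X ω, fun k => Y k ω))) (fun a => ((fun j : {j : Fin n // j < i} => a.2 j.1), fun k => if d k then some (a.2 k) else none)) := by
    refine ent_mixture f (fun ω => (X ω, fun k => Y k ω)) (fun ω => fun k => B k ω) (fun b : Fin n → Bool => ∏ j, (if b j then p else 1 - p)) (pr f (fun ω => (X ω, fun k => Y k ω)))
      (fun a d => hind a d) hq1
      (Φ := fun a d => ((fun j : {j : Fin n // j < i} => a.2 j.1), fun k => if d k then some (a.2 k) else none))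
      (ψ := (fun v => fun k => (v.2 k).isSome)) ?_ _ ?_
    · intro a d
      funext k
      cases hk : d k <;> simp [hk]
    · intro ω
      refine Prod.ext rfl ?_
      funext k
      exact hZ k ω
  have M1' : ent f (fun ω => (X ω, (fun j : {j : Fin n // j < i} => Y j.1 ω), (fun j : {j : Fin n // i < j} => Z j.1 ω)))
      = (∑ d, Real.negMulLog ((fun c : {j : Fin n // i < j} → Bool => ∏ j : {j : Fin n // i < j}, (if c j then p else 1 - p)) d))
        + ∑ d, (fun c : {j : Fin n // i < j} → Bool => ∏ j : {j : Fin n // i < j}, (if c j then p else 1 - p)) d * ent (pr f (fun ω => (X ω, fun k => Y k ω))) (fun a => (a.1, ((fun j : {j : Fin n // j < i} => a.2 j.1), fun j : {j : Fin n // i < j} => if d j then some (a.2 j.1) else none))) := by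
    refine ent_mixture f (fun ω => (X ω, fun k => Y k ω)) (fun ω => fun j : {j : Fin n // i < j} => B j.1 ω) (fun c : {j : Fin n // i < j} → Bool => ∏ j : {j : Fin n // i < j}, (if c j then p else 1 - p)) (pr f (fun ω => (X ω, fun k => Y k ω)))
      (fun a d => hjointR a d) hq1
      (Φ := fun a d => (a.1, ((fun j : {j : Fin n // j < i} => a.2 j.1), fun j : {j : Fin n // i < j} => if d j then some (a.2 j.1) else none)))
      (ψ := (fun v => fun k => (v.2.2 k).isSome)) ?_ _ ?_
    · intro a d
      funext k
      cases hk : d k <;> simp [hk]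
    · intro ω
      refine Prod.ext rfl (Prod.ext rfl ?_)
      funext k
      exact hZ k.1 ω
  have M2' : ent f (fun ω => (Y i ω, (fun j : {j : Fin n // j < i} => Y j.1 ω), (fun j : {j : Fin n // i < j} => Z j.1 ω)))
      = (∑ d, Real.negMulLog ((fun c : {j : Fin n // i < j} → Bool => ∏ j : {j : Fin n // i < j}, (if c j then p else 1 - p)) d))
        + ∑ d, (fun c : {j : Fin n // i < j} → Bool => ∏ j : {j : Fin n // i < j}, (if c j then p else 1 - p)) d * ent (pr f (fun ω => (X ω, fun k => Y k ω))) (fun a => (a.2 i, ((fun j : {j : Fin n // j < i} => a.2 j.1), fun j : {j : Fin n // i < j} => if d j then some (a.2 j.1) else none))) := by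
    refine ent_mixture f (fun ω => (X ω, fun k => Y k ω)) (fun ω => fun j : {j : Fin n // i < j} => B j.1 ω) (fun c : {j : Fin n // i < j} → Bool => ∏ j : {j : Fin n // i < j}, (if c j then p else 1 - p)) (pr f (fun ω => (X ω, fun k => Y k ω)))
      (fun a d => hjointR a d) hq1
      (Φ := fun a d => (a.2 i, ((fun j : {j : Fin n // j < i} => a.2 j.1), fun j : {j : Fin n // i < j} => if d j then some (a.2 j.1) else none)))
      (ψ := (fun v => fun k => (v.2.2 k).isSome)) ?_ _ ?_
    · intro a d
      funext k
      cases hk : d k <;> simp [hk]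
    · intro ω
      refine Prod.ext rfl (Prod.ext rfl ?_)
      funext k
      exact hZ k.1 ω
  have M3' : ent f (fun ω => (X ω, Y i ω, (fun j : {j : Fin n // j < i} => Y j.1 ω), (fun j : {j : Fin n // i < j} => Z j.1 ω)))
      = (∑ d, Real.negMulLog ((fun c : {j : Fin n // i < j} → Bool => ∏ j : {j : Fin n // i < j}, (if c j then p else 1 - p)) d))
        + ∑ d, (fun c : {j : Fin n // i < j} → Bool => ∏ j : {j : Fin n // i < j}, (if c j then p else 1 - p)) d * ent (pr f (fun ω => (X ω, fun k => Y k ω))) (fun a => (a.1, a.2 i, ((fun j : {j : Fin n // j < i} => a.2 j.1), fun j : {j : Fin n // i < j} => if d j then some (a.2 j.1) else none))) := by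
    refine ent_mixture f (fun ω => (X ω, fun k => Y k ω)) (fun ω => fun j : {j : Fin n // i < j} => B j.1 ω) (fun c : {j : Fin n // i < j} → Bool => ∏ j : {j : Fin n // i < j}, (if c j then p else 1 - p)) (pr f (fun ω => (X ω, fun k => Y k ω)))
      (fun a d => hjointR a d) hq1
      (Φ := fun a d => (a.1, a.2 i, ((fun j : {j : Fin n // j < i} => a.2 j.1), fun j : {j : Fin n // i < j} => if d j then some (a.2 j.1) else none)))
      (ψ := (fun v => fun k => (v.2.2.2 k).isSome)) ?_ _ ?_
    · intro a d
      funext k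
      cases hk : d k <;> simp [hk]
    · intro ω
      refine Prod.ext rfl (Prod.ext rfl (Prod.ext rfl ?_))
      funext k
      exact hZ k.1 ω
  have M4' : ent f (fun ω => ((fun j : {j : Fin n // j < i} => Y j.1 ω), (fun j : {j : Fin n // i < j} => Z j.1 ω)))
      = (∑ d, Real.negMulLog ((fun c : {j : Fin n // i < j} → Bool => ∏ j : {j : Fin n // i < j}, (if c j then p else 1 - p)) d))
        + ∑ d, (fun c : {j : Fin n // i < j} → Bool => ∏ j : {j : Fin n // i < j}, (if c j then p else 1 - p)) d * ent (pr f (fun ω => (X ω, fun k => Y k ω))) (fun a => ((fun j : {j : Fin n // j < i} => a.2 j.1), fun j : {j : Fin n // i < j} => if d j then some (a.2 j.1) else none)) := by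
    refine ent_mixture f (fun ω => (X ω, fun k => Y k ω)) (fun ω => fun j : {j : Fin n // i < j} => B j.1 ω) (fun c : {j : Fin n // i < j} → Bool => ∏ j : {j : Fin n // i < j}, (if c j then p else 1 - p)) (pr f (fun ω => (X ω, fun k => Y k ω)))
      (fun a d => hjointR a d) hq1
      (Φ := fun a d => ((fun j : {j : Fin n // j < i} => a.2 j.1), fun j : {j : Fin n // i < j} => if d j then some (a.2 j.1) else none))
      (ψ := (fun v => fun k => (v.2 k).isSome)) ?_ _ ?_
    · intro a d
      funext k
      cases hk : d k <;> simp [hk]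
    · intro ω
      refine Prod.ext rfl ?_
      funext k
      exact hZ k.1 ω
  set Tf : ({j : Fin n // i < j} → Bool) → ℝ := fun c => cmi (pr f (fun ω => (X ω, fun k => Y k ω))) (fun a : σ × ∀ k, β k => a.1)
    (fun a : σ × ∀ k, β k => a.2 i)
    (fun a : σ × ∀ k, β k => ((fun j : {j : Fin n // j < i} => a.2 j.1), fun j : {j : Fin n // i < j} => if c j then some (a.2 j.1) else none)) with hT
  have key : ∀ b : Fin n → Bool,
      ent (pr f (fun ω => (X ω, fun k => Y k ω))) (fun a => (a.1, ((fun j : {j : Fin n // j < i} => a.2 j.1), fun k => if b k then some (a.2 k) else none))) + ent (pr f (fun ω => (X ω, fun k => Y k ω))) (fun a => (a.2 i, ((fun j : {j : Fin n // j < i} => a.2 j.1), fun k => if b k then some (a.2 k) else none))) - ent (pr f (fun ω => (X ω, fun k => Y k ω))) (fun a => (a.1, a.2 i, ((fun j : {j : Fin n // j < i} => a.2 j.1), fun k => if b k then some (a.2 k) else none))) - ent (pr f (fun ω => (X ω, fun k => Y k ω))) (fun a => ((fun j : {j : Fin n // j < i} => a.2 j.1), fun k => if b k then some (a.2 k) else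 none))
        = if b i then 0 else Tf (fun j : {j : Fin n // i < j} => b j.1) := by
    intro b
    by_cases hbi : b i
    · rw [if_pos hbi]
      show cmi (pr f (fun ω => (X ω, fun k => Y k ω))) (fun a : σ × ∀ k, β k => a.1) (fun a : σ × ∀ k, β k => a.2 i)
        (fun a : σ × ∀ k, β k => ((fun j : {j : Fin n // j < i} => a.2 j.1), fun k => if b k then some (a.2 k) else none)) = 0
      exact cmi_eq_zero_of_det (pr f (fun ω => (X ω, fun k => Y k ω))) _ (φ := fun cc => (cc.2 i).getD y0)
        (fun a => by simp [hbi])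
    · rw [if_neg hbi]
      show cmi (pr f (fun ω => (X ω, fun k => Y k ω))) (fun a : σ × ∀ k, β k => a.1) (fun a : σ × ∀ k, β k => a.2 i)
        (fun a : σ × ∀ k, β k => ((fun j : {j : Fin n // j < i} => a.2 j.1), fun k => if b k then some (a.2 k) else none))
        = Tf (fun j : {j : Fin n // i < j} => b j.1)
      rw [hT]
      refine cmi_congr_right (pr f (fun ω => (X ω, fun k => Y k ω))) _ _
        (φ := fun cc : (∀ j : {j : Fin n // j < i}, β j.1) × (∀ j : {j : Fin n // i < j}, Option (β j.1)) =>
          (cc.1, fun k => if h : k < i then (if b k then some (cc.1 ⟨k, h⟩) else none)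
            else (if h' : i < k then cc.2 ⟨k, h'⟩ else none)))
        (ψ := fun cc : (∀ j : {j : Fin n // j < i}, β j.1) × (∀ k, Option (β k)) =>
          (cc.1, fun j : {j : Fin n // i < j} => cc.2 j.1))
        ?_ ?_
      · intro a
        refine Prod.ext rfl ?_
        funext k
        by_cases h : k < i
        · simp only [dif_pos h]
        · by_cases h' : i < k
          · simp only [dif_neg h, dif_pos h']
          · have hk : k = i := le_antisymm (not_lt.mp h') (not_lt.mp h)
            subst hk
            simp [hbi, h, h']
      · intro a
        rfl
  have hsum : ∑ b, (fun b : Fin n → Bool => ∏ j, (if b j then p else 1 - p)) b * (ent (pr f (fun ω => (X ω, fun k => Y k ω))) (fun a => (a.1, ((fun j : {j : Fin n // j < i} => a.2 j.1), fun k => if b k then some (a.2 k) else none)))) + ∑ b, (fun b : Fin n → Bool => ∏ j, (if b j then p else 1 - p)) b * (ent (pr f (fun ω => (X ω, fun k => Y k ω))) (fun a => (a.2 i, ((fun j : {j : Fin n // j < i} => a.2 j.1), fun k => if b k then some (a.2 k) else none))))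
      - ∑ b, (fun b : Fin n → Bool => ∏ j, (if b j then p else 1 - p)) b * (ent (pr f (fun ω => (X ω, fun k => Y k ω))) (fun a => (a.1, a.2 i, ((fun j : {j : Fin n // j < i} => a.2 j.1), fun k => if b k then some (a.2 k) else none)))) - ∑ b, (fun b : Fin n → Bool => ∏ j, (if b j then p else 1 - p)) b * (ent (pr f (fun ω => (X ω, fun k => Y k ω))) (fun a => ((fun j : {j : Fin n // j < i} => a.2 j.1), fun k => if b k then some (a.2 k) else none)))
      = ∑ b, (fun b : Fin n → Bool => ∏ j, (if b j then p else 1 - p)) b * (if b i then 0 else Tf (fun j : {j : Fin n // i < j} => b j.1)) := by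
    rw [← Finset.sum_add_distrib, ← Finset.sum_sub_distrib, ← Finset.sum_sub_distrib]
    refine Finset.sum_congr rfl fun b _ => ?_
    linear_combination (fun b : Fin n → Bool => ∏ j, (if b j then p else 1 - p)) b * key b
  have heval : ∑ b, (fun b : Fin n → Bool => ∏ j, (if b j then p else 1 - p)) b * (if b i then 0 else Tf (fun j : {j : Fin n // i < j} => b j.1))
      = (1 - p) * ∑ c, (fun c : {j : Fin n // i < j} → Bool => ∏ j : {j : Fin n // i < j}, (if c j then p else 1 - p)) c * Tf c := by
    calc ∑ b, (fun b : Fin n → Bool => ∏ j, (if b j then p else 1 - p)) b * (if b i then 0 else Tf (fun j : {j : Fin n // i < j} => b j.1))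
        = ∑ t : Bool, (if t then p else 1 - p) * ∑ v : {j : Fin n // i < j} → Bool,
            (∏ j : {j : Fin n // i < j}, (if v j then p else 1 - p)) * (if t then 0 else Tf v) :=
        sum_blocks i (fun t => if t then p else 1 - p) hw (fun t v => if t then 0 else Tf v)
      _ = (1 - p) * ∑ c, (fun c : {j : Fin n // i < j} → Bool => ∏ j : {j : Fin n // i < j}, (if c j then p else 1 - p)) c * Tf c := by
        rw [Fintype.sum_bool]
        simp
  have key' : ∀ c : {j : Fin n // i < j} → Bool,
      ent (pr f (fun ω => (X ω, fun k => Y k ω))) (fun a => (a.1, ((fun j : {j : Fin n // j < i} => a.2 j.1), fun j : {j : Fin n // i < j} => if c j then some (a.2 j.1) else none))) + ent (pr f (fun ω => (X ω, fun k => Y k ω))) (fun a => (a.2 i, ((fun j : {j : Fin n // j < i} => a.2 j.1), fun j : {j : Fin n // i < j} => if c j then some (a.2 j.1) else none))) - ent (pr f (fun ω => (X ω, fun k => Y k ω))) (fun a => (a.1, a.2 i, ((fun j : {j : Fin n // j < i} => a.2 j.1), fun j : {j : Fin n // i < j} => if c j then some (a.2 j.1) else none))) - ent (pr f (fun ω =>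 (X ω, fun k => Y k ω))) (fun a => ((fun j : {j : Fin n // j < i} => a.2 j.1), fun j : {j : Fin n // i < j} => if c j then some (a.2 j.1) else none)) = Tf c := by
    intro c
    rw [hT]
    rfl
  have hsum' : ∑ c, (fun c : {j : Fin n // i < j} → Bool => ∏ j : {j : Fin n // i < j}, (if c j then p else 1 - p)) c * (ent (pr f (fun ω => (X ω, fun k => Y k ω))) (fun a => (a.1, ((fun j : {j : Fin n // j < i} => a.2 j.1), fun j : {j : Fin n // i < j} => if c j then some (a.2 j.1) else none)))) + ∑ c, (fun c : {j : Fin n // i < j} → Bool => ∏ j : {j : Fin n // i < j}, (if c j then p else 1 - p)) c * (ent (pr f (fun ω => (X ω, fun k => Y k ω))) (fun a => (a.2 i, ((fun j : {j : Fin n // j < i} => a.2 j.1), fun j : {j : Fin n // i < j} => if c j then some (a.2 j.1) else none))))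
      - ∑ c, (fun c : {j : Fin n // i < j} → Bool => ∏ j : {j : Fin n // i < j}, (if c j then p else 1 - p)) c * (ent (pr f (fun ω => (X ω, fun k => Y k ω))) (fun a => (a.1, a.2 i, ((fun j : {j : Fin n // j < i} => a.2 j.1), fun j : {j : Fin n // i < j} => if c j then some (a.2 j.1) else none)))) - ∑ c, (fun c : {j : Fin n // i < j} → Bool => ∏ j : {j : Fin n // i < j}, (if c j then p else 1 - p)) c * (ent (pr f (fun ω => (X ω, fun k => Y k ω))) (fun a => ((fun j : {j : Fin n // j < i} => a.2 j.1), fun j : {j : Fin n // i < j} => if c j then some (a.2 j.1) else none)))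
      = ∑ c, (fun c : {j : Fin n // i < j} → Bool => ∏ j : {j : Fin n // i < j}, (if c j then p else 1 - p)) c * Tf c := by
    rw [← Finset.sum_add_distrib, ← Finset.sum_sub_distrib, ← Finset.sum_sub_distrib]
    refine Finset.sum_congr rfl fun c _ => ?_
    linear_combination (fun c : {j : Fin n // i < j} → Bool => ∏ j : {j : Fin n // i < j}, (if c j then p else 1 - p)) c * key' c
  have hLHS : cmi f X (Y i) (fun ω => ((fun j : {j : Fin n // j < i} => Y j.1 ω), (fun k => Z k ω)))
      = ∑ b, (fun b : Fin n → Bool => ∏ j, (if b j then p else 1 - p)) b * (if b i then 0 else Tf (fun j : {j : Fin n // i < j} => b j.1)) := by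
    unfold cmi
    linarith [M1, M2, M3, M4, hsum]
  have hRHS : cmi f X (Y i) (fun ω => ((fun j : {j : Fin n // j < i} => Y j.1 ω), (fun j : {j : Fin n // i < j} => Z j.1 ω)))
      = ∑ c, (fun c : {j : Fin n // i < j} → Bool => ∏ j : {j : Fin n // i < j}, (if c j then p else 1 - p)) c * Tf c := by
    unfold cmi
    linarith [M1', M2', M3', M4', hsum']
  rw [hLHS, heval, hRHS]

end Main3

section Main
variable {Ω σ : Type*} [Fintype Ω] [Fintype σ] {n : ℕ} {β : Fin n → Type*} [∀ i, Fintype (β i)]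

lemma step1 (f : Ω → ℝ) (hf1 : ∑ ω, f ω = 1)
    (p : ℝ) (X : Ω → σ) (Y : ∀ i, Ω → β i) (B : Fin n → Ω → Bool)
    (hind : ∀ (xy : σ × ∀ i, β i) (b : Fin n → Bool),
      pr f (fun ω => ((X ω, fun i => Y i ω), fun i => B i ω)) (xy, b)
        = pr f (fun ω => (X ω, fun i => Y i ω)) xy * ∏ i, (if b i then p else 1 - p))
    (Z : ∀ i, Ω → Option (β i)) (hZ : ∀ i ω, Z i ω = if B i ω then some (Y i ω) else none) :
    mi f X (fun ω i => Z i ω)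
      = mi f X (fun ω i => Y i ω) - cmi f X (fun ω i => Y i ω) (fun ω i => Z i ω) := by
  classical
  have hq1 : ∑ xy : σ × ∀ i, β i, pr f (fun ω => (X ω, fun i => Y i ω)) xy = 1 := by
    rw [sum_pr]; exact hf1
  have hBf : ∀ b, pr f (fun ω => fun i => B i ω) b = ∏ j, (if b j then p else 1 - p) := by
    intro b
    calc pr f (fun ω => fun i => B i ω) b
        = ∑ xy : σ × ∀ i, β i,
            pr f (fun ω => ((X ω, fun i => Y i ω), fun i => B i ω)) (xy, b) :=
          pr_marg_fst f (fun ω => (X ω, fun i => Y i ω)) (fun ω => fun i => B i ω) b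
      _ = ∑ xy : σ × ∀ i, β i, pr f (fun ω => (X ω, fun i => Y i ω)) xy
            * ∏ j, (if b j then p else 1 - p) :=
          Finset.sum_congr rfl fun xy _ => hind xy b
      _ = ∏ j, (if b j then p else 1 - p) := by
          rw [← Finset.sum_mul, hq1, one_mul]
  have hYf : ∀ y, pr f (fun ω => fun i => Y i ω) y
      = ∑ x, pr f (fun ω => (X ω, fun i => Y i ω)) (x, y) :=
    fun y => pr_marg_fst f X (fun ω => fun i => Y i ω) y
  have hindYB : ∀ y b, pr f (fun ω => ((fun i => Y i ω), fun i => B i ω)) (y, b)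
      = pr f (fun ω => fun i => Y i ω) y * pr f (fun ω => fun i => B i ω) b := by
    intro y b
    calc pr f (fun ω => ((fun i => Y i ω), fun i => B i ω)) (y, b)
        = ∑ x, pr f (fun ω => (X ω, ((fun i => Y i ω), fun i => B i ω))) (x, (y, b)) :=
          pr_marg_fst f X (fun ω => ((fun i => Y i ω), fun i => B i ω)) (y, b)
      _ = ∑ x, pr f (fun ω => ((X ω, fun i => Y i ω), fun i => B i ω)) ((x, y), b) :=
          Finset.sum_congr rfl fun x _ =>
            pr_congr_inj f
              (V := fun ω => (X ω, ((fun i => Y i ω), fun i => B i ω)))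
              (W := fun ω => ((X ω, fun i => Y i ω), fun i => B i ω))
              (g := fun w => (w.1.1, (w.1.2, w.2))) (fun ω => rfl)
              (fun a b h => by
                cases a; cases b
                simpa [Prod.ext_iff, and_assoc] using h) ((x, y), b)
      _ = ∑ x, pr f (fun ω => (X ω, fun i => Y i ω)) (x, y)
            * ∏ j, (if b j then p else 1 - p) :=
          Finset.sum_congr rfl fun x _ => hind (x, y) b
      _ = pr f (fun ω => fun i => Y i ω) y * pr f (fun ω => fun i => B i ω) b := by
          rw [← Finset.sum_mul, ← hYf y, hBf b]
  have hindXYB : ∀ (xy : σ × ∀ i, β i) b,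
      pr f (fun ω => ((X ω, fun i => Y i ω), fun i => B i ω)) (xy, b)
        = pr f (fun ω => (X ω, fun i => Y i ω)) xy * pr f (fun ω => fun i => B i ω) b := by
    intro xy b
    rw [hind xy b, hBf b]
  have h5 : ent f (fun ω => ((fun i => Y i ω), fun i => Z i ω))
      = ent f (fun ω => fun i => Y i ω) + ent f (fun ω => fun i => B i ω) := by
    have r : ent f (fun ω => ((fun i => Y i ω), fun i => Z i ω))
        = ent f (fun ω => ((fun i => Y i ω), fun i => B i ω)) := by
      refine ent_congr f
        (φ := fun w : (∀ i, β i) × (Fin n → Bool) =>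
          (w.1, fun i => if w.2 i then some (w.1 i) else none))
        (ψ := fun v : (∀ i, β i) × (∀ i, Option (β i)) =>
          (v.1, fun i => (v.2 i).isSome)) ?_ ?_
      · intro ω
        refine Prod.ext rfl ?_
        funext i
        exact hZ i ω
      · intro ω
        refine Prod.ext rfl ?_
        funext i
        show B i ω = (Z i ω).isSome
        rw [hZ i ω]
        cases B i ω <;> simp
    rw [r]
    exact ent_pair_of_indep f hf1 _ _ hindYB
  have h6 : ent f (fun ω => (X ω, (fun i => Y i ω), fun i => Z i ω))
      = ent f (fun ω => (X ω, fun i => Y i ω)) + ent f (fun ω => fun i => B i ω) := by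
    have r : ent f (fun ω => (X ω, (fun i => Y i ω), fun i => Z i ω))
        = ent f (fun ω => ((X ω, fun i => Y i ω), fun i => B i ω)) := by
      refine ent_congr f
        (φ := fun w : (σ × ∀ i, β i) × (Fin n → Bool) =>
          (w.1.1, w.1.2, fun i => if w.2 i then some (w.1.2 i) else none))
        (ψ := fun v : σ × (∀ i, β i) × (∀ i, Option (β i)) =>
          ((v.1, v.2.1), fun i => (v.2.2 i).isSome)) ?_ ?_
      · intro ω
        refine Prod.ext rfl (Prod.ext rfl ?_)
        funext i
        exact hZ i ω
      · intro ω
        refine Prod.ext rfl ?_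
        funext i
        show B i ω = (Z i ω).isSome
        rw [hZ i ω]
        cases B i ω <;> simp
    rw [r]
    exact ent_pair_of_indep f hf1 _ _ hindXYB
  unfold mi cmi
  rw [h5, h6]
  ring

lemma step4 (f : Ω → ℝ) (hf0 : ∀ ω, 0 ≤ f ω) (hf1 : ∑ ω, f ω = 1)
    (X : Ω → σ) (Y : ∀ i, Ω → β i) (Z : ∀ i, Ω → Option (β i))
    (hmem : ∀ (i : Fin n) (x : σ) (b : β i)
        (w : (∀ j : {j : Fin n // j < i}, β j.1) × (∀ j : {j : Fin n // i < j}, Option (β j.1))),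
      pr f (fun ω => (X ω, Y i ω,
            ((fun j : {j : Fin n // j < i} => Y j.1 ω),
             (fun j : {j : Fin n // i < j} => Z j.1 ω)))) (x, b, w) * pr f X x
        = pr f (fun ω => (X ω, Y i ω)) (x, b)
          * pr f (fun ω => (X ω,
              ((fun j : {j : Fin n // j < i} => Y j.1 ω),
               (fun j : {j : Fin n // i < j} => Z j.1 ω)))) (x, w)) :
    mi f X (fun ω i => Y i ω)
      = ∑ i, (cmi f X (Y i)
            (fun ω => ((fun j : {j : Fin n // j < i} => Y j.1 ω),
              fun j : {j : Fin n // i < j} => Z j.1 ω))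
          + cmi f (Y i)
            (fun ω => fun j : {j : Fin n // i < j} => Z j.1 ω)
            (fun ω => fun j : {j : Fin n // j < i} => Y j.1 ω)) := by
  classical
  rw [← cmi_const_eq_mi f hf1 X (fun ω => fun i => Y i ω),
    cmi_chain f X Y (fun _ => ())]
  refine Finset.sum_congr rfl fun i _ => ?_
  rw [cmi_congr_right f X (Y i)
    (C := fun ω => ((fun j : {j : Fin n // j < i} => Y j.1 ω), ()))
    (C' := fun ω => fun j : {j : Fin n // j < i} => Y j.1 ω)
    (φ := fun a => (a, ())) (ψ := Prod.fst) (fun ω => rfl) (fun ω => rfl)]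
  -- conditional independence facts
  have hma := ent_triple_of_ci f hf0 X (Y i)
    (fun ω => ((fun j : {j : Fin n // j < i} => Y j.1 ω),
      fun j : {j : Fin n // i < j} => Z j.1 ω))
    (fun x y w => hmem i x y w)
  have hmem' : ∀ (x : σ) (b : β i) (a : ∀ j : {j : Fin n // j < i}, β j.1),
      pr f (fun ω => (X ω, Y i ω, fun j : {j : Fin n // j < i} => Y j.1 ω)) (x, b, a)
          * pr f X x
        = pr f (fun ω => (X ω, Y i ω)) (x, b)
          * pr f (fun ω => (X ω, fun j : {j : Fin n // j < i} => Y j.1 ω)) (x, a) := by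
    intro x b a
    have h1 : pr f (fun ω => (X ω, Y i ω, fun j : {j : Fin n // j < i} => Y j.1 ω)) (x, b, a)
        = ∑ t : ∀ j : {j : Fin n // i < j}, Option (β j.1),
            pr f (fun ω => (X ω, Y i ω,
              ((fun j : {j : Fin n // j < i} => Y j.1 ω),
                fun j : {j : Fin n // i < j} => Z j.1 ω))) (x, b, (a, t)) := by
      calc pr f (fun ω => (X ω, Y i ω, fun j : {j : Fin n // j < i} => Y j.1 ω)) (x, b, a)
          = ∑ t : ∀ j : {j : Fin n // i < j}, Option (β j.1),
              pr f (fun ω => ((X ω, Y i ω, fun j : {j : Fin n // j < i} => Y j.1 ω),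
                fun j : {j : Fin n // i < j} => Z j.1 ω)) ((x, b, a), t) :=
            pr_marg_snd f _ _ (x, b, a)
        _ = _ := Finset.sum_congr rfl fun t _ =>
            (pr_congr_inj f
              (V := fun ω => (X ω, Y i ω,
                ((fun j : {j : Fin n // j < i} => Y j.1 ω),
                  fun j : {j : Fin n // i < j} => Z j.1 ω)))
              (W := fun ω => ((X ω, Y i ω, fun j : {j : Fin n // j < i} => Y j.1 ω),
                fun j : {j : Fin n // i < j} => Z j.1 ω))
              (g := fun w => (w.1.1, w.1.2.1, (w.1.2.2, w.2))) (fun ω => rfl)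
              (fun u v h => by
                cases u; cases v
                simpa [Prod.ext_iff, and_assoc] using h) ((x, b, a), t)).symm
    have h2 : pr f (fun ω => (X ω, fun j : {j : Fin n // j < i} => Y j.1 ω)) (x, a)
        = ∑ t : ∀ j : {j : Fin n // i < j}, Option (β j.1),
            pr f (fun ω => (X ω,
              ((fun j : {j : Fin n // j < i} => Y j.1 ω),
                fun j : {j : Fin n // i < j} => Z j.1 ω))) (x, (a, t)) := by
      calc pr f (fun ω => (X ω, fun j : {j : Fin n // j < i} => Y j.1 ω)) (x, a)
          = ∑ t : ∀ j : {j : Fin n // i < j}, Option (β j.1),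
              pr f (fun ω => ((X ω, fun j : {j : Fin n // j < i} => Y j.1 ω),
                fun j : {j : Fin n // i < j} => Z j.1 ω)) ((x, a), t) :=
            pr_marg_snd f _ _ (x, a)
        _ = _ := Finset.sum_congr rfl fun t _ =>
            (pr_congr_inj f
              (V := fun ω => (X ω,
                ((fun j : {j : Fin n // j < i} => Y j.1 ω),
                  fun j : {j : Fin n // i < j} => Z j.1 ω)))
              (W := fun ω => ((X ω, fun j : {j : Fin n // j < i} => Y j.1 ω),
                fun j : {j : Fin n // i < j} => Z j.1 ω))
              (g := fun w => (w.1.1, (w.1.2, w.2))) (fun ω => rfl)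
              (fun u v h => by
                cases u; cases v
                simpa [Prod.ext_iff, and_assoc] using h) ((x, a), t)).symm
    rw [h1, h2, Finset.sum_mul, Finset.mul_sum]
    exact Finset.sum_congr rfl fun t _ => hmem i x b (a, t)
  have hmb := ent_triple_of_ci f hf0 X (Y i)
    (fun ω => fun j : {j : Fin n // j < i} => Y j.1 ω) hmem'
  have r1 : ent f (fun ω => (Y i ω,
        ((fun j : {j : Fin n // j < i} => Y j.1 ω),
          fun j : {j : Fin n // i < j} => Z j.1 ω)))
      = ent f (fun ω => (Y i ω,
          (fun j : {j : Fin n // i < j} => Z j.1 ω),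
          fun j : {j : Fin n // j < i} => Y j.1 ω)) := by
    refine ent_congr f
      (φ := fun w : β i × (∀ j : {j : Fin n // i < j}, Option (β j.1))
          × (∀ j : {j : Fin n // j < i}, β j.1) => (w.1, (w.2.2, w.2.1)))
      (ψ := fun v : β i × (∀ j : {j : Fin n // j < i}, β j.1)
          × (∀ j : {j : Fin n // i < j}, Option (β j.1)) => (v.1, (v.2.2, v.2.1)))
      (fun ω => rfl) (fun ω => rfl)
  have r2 : ent f (fun ω => ((fun j : {j : Fin n // j < i} => Y j.1 ω),
        fun j : {j : Fin n // i < j} => Z j.1 ω))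
      = ent f (fun ω => ((fun j : {j : Fin n // i < j} => Z j.1 ω),
          fun j : {j : Fin n // j < i} => Y j.1 ω)) := by
    refine ent_congr f
      (φ := fun w : (∀ j : {j : Fin n // i < j}, Option (β j.1))
          × (∀ j : {j : Fin n // j < i}, β j.1) => (w.2, w.1))
      (ψ := fun v : (∀ j : {j : Fin n // j < i}, β j.1)
          × (∀ j : {j : Fin n // i < j}, Option (β j.1)) => (v.2, v.1))
      (fun ω => rfl) (fun ω => rfl)
  unfold cmi
  linarith [hma, hmb, r1, r2]

end Main

/-- Noisy-observation identity: with `Zⁿ` the coordinatewise erasure of `Yⁿ` and the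
memoryless-channel Markov condition `(Y₁^{i-1}, Z_{i+1}ⁿ) → Xⁿ → Yᵢ`,
`I(Xⁿ;Zⁿ) = p I(Xⁿ;Yⁿ) + (1-p) ∑ᵢ I(Yᵢ; Z_{i+1}ⁿ | Y₁^{i-1})`. -/
theorem erasure_noisy_vector_mi {Ω σ : Type*} [Fintype Ω] [Fintype σ] {n : ℕ}
    {β : Fin n → Type*} [∀ i, Fintype (β i)]
    (f : Ω → ℝ) (hf0 : ∀ ω, 0 ≤ f ω) (hf1 : ∑ ω, f ω = 1)
    (p : ℝ) (X : Ω → σ) (Y : ∀ i, Ω → β i) (B : Fin n → Ω → Bool)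
    (hind : ∀ (xy : σ × ∀ i, β i) (b : Fin n → Bool),
      pr f (fun ω => ((X ω, fun i => Y i ω), fun i => B i ω)) (xy, b)
        = pr f (fun ω => (X ω, fun i => Y i ω)) xy * ∏ i, (if b i then p else 1 - p))
    (Z : ∀ i, Ω → Option (β i)) (hZ : ∀ i ω, Z i ω = if B i ω then some (Y i ω) else none)
    (hmem : ∀ (i : Fin n) (x : σ) (b : β i)
        (w : (∀ j : {j : Fin n // j < i}, β j.1) × (∀ j : {j : Fin n // i < j}, Option (β j.1))),
      pr f (fun ω => (X ω, Y i ω,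
            ((fun j : {j : Fin n // j < i} => Y j.1 ω),
             (fun j : {j : Fin n // i < j} => Z j.1 ω)))) (x, b, w) * pr f X x
        = pr f (fun ω => (X ω, Y i ω)) (x, b)
          * pr f (fun ω => (X ω,
              ((fun j : {j : Fin n // j < i} => Y j.1 ω),
               (fun j : {j : Fin n // i < j} => Z j.1 ω)))) (x, w)) :
    mi f X (fun ω i => Z i ω)
      = p * mi f X (fun ω i => Y i ω)
        + (1 - p) * ∑ i, cmi f (Y i)
            (fun ω => fun j : {j : Fin n // i < j} => Z j.1 ω)
            (fun ω => fun j : {j : Fin n // j < i} => Y j.1 ω) := by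
  classical
  have hS1 := step1 f hf1 p X Y B hind Z hZ
  have hS2 := cmi_chain f X Y (fun ω => fun k => Z k ω)
  have hS4 := step4 f hf0 hf1 X Y Z hmem
  rw [hS1, hS2,
    Finset.sum_congr rfl (fun i _ => step3 f hf0 hf1 p X Y B hind Z hZ i),
    ← Finset.mul_sum]
  rw [Finset.sum_add_distrib] at hS4
  linear_combination (1 - p) * hS4
end

section
/- Let {(X_{1i},…,X_{ki})}_{i≥1} be a stationary process of discrete random vectors on finite alphabets, and let Y_{ℓi} be the coordinatewise erasure of X_{ℓi} (non-erasure probability p, i.i.d. erasures independent of the process). Then for each ℓ, the limit a_ℓ = lim_{n→∞} (1/n) ∑_{i=1}^n I(Y_{ℓ,(i+1)}^n; X_{ℓi} | X_ℓ^{i−1}) exists, is nonnegative, and satisfies a_ℓ ≤ H̄(X_ℓ), where H̄(X_ℓ) = lim_n H(X_ℓ^n)/n is the entropy rate. -/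
open MeasureTheory Real Filter

/-- Probability that `X` takes the value `a` under the probability measure `μ`. -/
noncomputable def prm {Ω : Type*} [MeasurableSpace Ω] (μ : Measure Ω) {α : Type*}
    (X : Ω → α) (a : α) : ℝ :=
  (μ (X ⁻¹' {a})).toReal

/-- Shannon entropy (natural log) of a finite-alphabet random variable. -/
noncomputable def entm {Ω : Type*} [MeasurableSpace Ω] (μ : Measure Ω) {α : Type*}
    [Fintype α] (X : Ω → α) : ℝ :=
  ∑ a, Real.negMulLog (prm μ X a)

/-- Mutual information `I(X;Y) = H(X) + H(Y) - H(X,Y)`. -/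
noncomputable def mim {Ω : Type*} [MeasurableSpace Ω] (μ : Measure Ω) {α β : Type*}
    [Fintype α] [Fintype β] (X : Ω → α) (Y : Ω → β) : ℝ :=
  entm μ X + entm μ Y - entm μ (fun ω => (X ω, Y ω))

/-- Conditional mutual information
`I(X;Y|Z) = H(X,Z) + H(Y,Z) - H(X,Y,Z) - H(Z)`. -/
noncomputable def cmim {Ω : Type*} [MeasurableSpace Ω] (μ : Measure Ω) {α β γ : Type*}
    [Fintype α] [Fintype β] [Fintype γ] (X : Ω → α) (Y : Ω → β) (Z : Ω → γ) : ℝ :=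
  entm μ (fun ω => (X ω, Z ω)) + entm μ (fun ω => (Y ω, Z ω))
    - entm μ (fun ω => (X ω, Y ω, Z ω)) - entm μ Z

set_option linter.unusedSectionVars false
set_option linter.unusedVariables false

section Found
open Finset
variable {Ω : Type*} [MeasurableSpace Ω] (μ : Measure Ω) [IsProbabilityMeasure μ]
variable {γ δ : Type*}

/-- All singleton preimages are measurable. -/
def MbP (X : Ω → γ) : Prop := ∀ z, MeasurableSet (X ⁻¹' {z})

variable {μ}

lemma MbP.pair {X : Ω → γ} {W : Ω → δ} (hX : MbP X) (hW : MbP W) :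
    MbP (fun ω => (X ω, W ω)) := by
  intro z
  have : (fun ω => (X ω, W ω)) ⁻¹' {z} = X ⁻¹' {z.1} ∩ W ⁻¹' {z.2} := by
    ext ω; simp [Prod.ext_iff]
  rw [this]; exact (hX _).inter (hW _)

lemma MbP.pi {ι : Type*} [Countable ι] [DecidableEq ι] {X : ι → Ω → γ}
    (hX : ∀ i, MbP (X i)) : MbP (fun ω (i : ι) => X i ω) := by
  intro z
  have : (fun ω (i : ι) => X i ω) ⁻¹' {z} = ⋂ i, (X i) ⁻¹' {z i} := by
    ext ω; simp [funext_iff]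
  rw [this]; exact MeasurableSet.iInter fun i => hX i _

lemma MbP.comp [Fintype γ] {X : Ω → γ} (hX : MbP X) (F : γ → δ) :
    MbP (fun ω => F (X ω)) := by
  classical
  intro d
  have : (fun ω => F (X ω)) ⁻¹' {d} = ⋃ z ∈ (univ.filter (fun z => F z = d) : Finset γ),
      X ⁻¹' {z} := by
    ext ω; simp
  rw [this]
  exact (univ.filter (fun z => F z = d)).measurableSet_biUnion (fun z _ => hX z)

variable (μ)

lemma prm_nonneg (X : Ω → γ) (z : γ) : 0 ≤ prm μ X z := ENNReal.toReal_nonneg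

lemma prm_le_one (X : Ω → γ) (z : γ) : prm μ X z ≤ 1 := by
  have h := prob_le_one (μ := μ) (s := X ⁻¹' {z})
  have := ENNReal.toReal_mono (by simp) h
  simpa [prm] using this

lemma prm_sum_fiber [Fintype γ] [DecidableEq δ] (X : Ω → γ) (hX : MbP X) (F : γ → δ)
    (d : δ) :
    prm μ (fun ω => F (X ω)) d = ∑ z ∈ univ.filter (fun z => F z = d), prm μ X z := by
  have hset : (fun ω => F (X ω)) ⁻¹' {d}
      = X ⁻¹' ↑(univ.filter fun z => F z = d) := by
    ext ω; simp
  rw [prm, hset, ← sum_measure_preimage_singleton _ (fun z _ => hX z),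
    ENNReal.toReal_sum (fun a _ => measure_ne_top μ _)]
  rfl

lemma prm_total [Fintype γ] (X : Ω → γ) (hX : MbP X) : ∑ z, prm μ X z = 1 := by
  classical
  have h := sum_measure_preimage_singleton (μ := μ) (univ : Finset γ) (fun z _ => hX z)
  have h2 : X ⁻¹' ↑(univ : Finset γ) = Set.univ := by ext ω; simp
  rw [h2, measure_univ] at h
  have := congrArg ENNReal.toReal h
  rw [ENNReal.toReal_sum (fun a _ => measure_ne_top μ _)] at this
  simpa [prm] using this

lemma prm_comp_ge (X : Ω → γ) (F : γ → δ) (z : γ) :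
    prm μ X z ≤ prm μ (fun ω => F (X ω)) (F z) := by
  apply ENNReal.toReal_mono (measure_ne_top μ _)
  apply measure_mono
  intro ω hω
  simp only [Set.mem_preimage, Set.mem_singleton_iff] at *
  rw [hω]

lemma entm_nonneg [Fintype γ] (X : Ω → γ) : 0 ≤ entm μ X :=
  Finset.sum_nonneg fun z _ => Real.negMulLog_nonneg (prm_nonneg μ X z) (prm_le_one μ X z)

lemma entm_congr [Fintype γ] {X W : Ω → γ} (h : ∀ z, prm μ X z = prm μ W z) :
    entm μ X = entm μ W := by
  unfold entm; exact Finset.sum_congr rfl fun z _ => by rw [h]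

lemma entm_comp_equiv [Fintype γ] [Fintype δ] (X : Ω → γ) (e : γ ≃ δ) :
    entm μ (fun ω => e (X ω)) = entm μ X := by
  unfold entm
  rw [← Equiv.sum_comp e (fun d => Real.negMulLog (prm μ (fun ω => e (X ω)) d))]
  refine Finset.sum_congr rfl fun z _ => ?_
  congr 1
  unfold prm
  congr 2
  ext ω
  simp

lemma prm_comp_congr [Fintype γ] {X W : Ω → γ} (hX : MbP X) (hW : MbP W)
    (h : ∀ z, prm μ X z = prm μ W z) (F : γ → δ) (d : δ) :
    prm μ (fun ω => F (X ω)) d = prm μ (fun ω => F (W ω)) d := by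
  classical
  rw [prm_sum_fiber μ X hX F d, prm_sum_fiber μ W hW F d]
  exact Finset.sum_congr rfl fun z _ => h z

lemma entm_dist [Fintype γ] [Fintype δ] [DecidableEq δ] (X : Ω → γ) (hX : MbP X)
    (F : γ → δ) :
    entm μ (fun ω => F (X ω))
      = ∑ z, -(prm μ X z * Real.log (prm μ (fun ω => F (X ω)) (F z))) := by
  rw [entm, ← Finset.sum_fiberwise univ F
    (fun z => -(prm μ X z * Real.log (prm μ (fun ω => F (X ω)) (F z))))]
  refine Finset.sum_congr rfl fun d _ => ?_
  have h1 : ∀ z ∈ univ.filter (fun z => F z = d),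
      -(prm μ X z * Real.log (prm μ (fun ω => F (X ω)) (F z)))
        = -(prm μ X z * Real.log (prm μ (fun ω => F (X ω)) d)) := by
    intro z hz
    simp only [mem_filter] at hz
    rw [hz.2]
  rw [Finset.sum_congr rfl h1, Real.negMulLog, neg_mul, prm_sum_fiber μ X hX F d,
    Finset.sum_mul, ← Finset.sum_neg_distrib]

lemma entm_comp_le [Fintype γ] [Fintype δ] (X : Ω → γ) (hX : MbP X) (F : γ → δ) :
    entm μ (fun ω => F (X ω)) ≤ entm μ X := by
  classical
  rw [entm_dist μ X hX F, entm]
  refine Finset.sum_le_sum fun z _ => ?_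
  rw [Real.negMulLog, neg_mul]
  rcases eq_or_lt_of_le (prm_nonneg μ X z) with h | h
  · simp [← h]
  · have hle := prm_comp_ge μ X F z
    have hlog := Real.log_le_log (by exact h) hle
    nlinarith

end Found

section Gibbs
open Finset
variable {Ω : Type*} [MeasurableSpace Ω] (μ : Measure Ω) [IsProbabilityMeasure μ]

lemma gibbs_aux {γ : Type*} [Fintype γ] (q r : γ → ℝ) (hq0 : ∀ z, 0 ≤ q z)
    (hq1 : ∑ z, q z = 1) (hr0 : ∀ z, 0 ≤ r z) (hr1 : ∑ z, r z ≤ 1)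
    (hqr : ∀ z, q z ≠ 0 → r z ≠ 0) :
    0 ≤ ∑ z, q z * Real.log (q z / r z) := by
  classical
  have key : ∀ z, q z - (if q z = 0 then 0 else r z) ≤ q z * Real.log (q z / r z) := by
    intro z
    by_cases h : q z = 0
    · simp [h]
    · have hq : 0 < q z := lt_of_le_of_ne (hq0 z) (Ne.symm h)
      have hr : 0 < r z := lt_of_le_of_ne (hr0 z) (Ne.symm (hqr z h))
      simp only [h, if_false]
      have hlog : Real.log (r z / q z) ≤ r z / q z - 1 :=
        Real.log_le_sub_one_of_pos (by positivity)
      have hneg : Real.log (q z / r z) = -Real.log (r z / q z) := by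
        rw [← Real.log_inv]
        congr 1
        field_simp
      rw [hneg]
      have h2 : q z * (1 - r z / q z) ≤ q z * (-Real.log (r z / q z)) := by
        apply mul_le_mul_of_nonneg_left _ hq.le
        linarith
      have h3 : q z - r z = q z * (1 - r z / q z) := by field_simp
      linarith
  have h4 : ∑ z, (if q z = 0 then 0 else r z) ≤ 1 := by
    refine le_trans (Finset.sum_le_sum fun z _ => ?_) hr1
    by_cases h : q z = 0 <;> simp [h, hr0 z]
  calc (0:ℝ) = 1 - 1 := by ring
    _ ≤ ∑ z, q z - ∑ z, (if q z = 0 then 0 else r z) := by rw [hq1]; linarith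
    _ = ∑ z, (q z - (if q z = 0 then 0 else r z)) := (Finset.sum_sub_distrib _ _).symm
    _ ≤ _ := Finset.sum_le_sum fun z _ => key z

lemma prm_fst_marginal {γ ε : Type*} [Fintype γ] [Fintype ε] (W : Ω → γ × ε)
    (hW : MbP W) (c : ε) :
    prm μ (fun ω => (W ω).2) c = ∑ a, prm μ W (a, c) := by
  classical
  rw [prm_sum_fiber μ W hW Prod.snd c, Finset.sum_filter, Fintype.sum_prod_type]
  refine Finset.sum_congr rfl fun a _ => ?_
  simp

/-- Submodularity of entropy, in the shape `0 ≤ I(A;D|C)` matching `cmim`. -/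
lemma cmim_core_nonneg {β κ ρ : Type*} [Fintype β] [Fintype κ] [Fintype ρ]
    (A : Ω → β) (D : Ω → κ) (C : Ω → ρ)
    (hP : MbP (fun ω => (A ω, D ω, C ω))) :
    0 ≤ entm μ (fun ω => (A ω, C ω)) + entm μ (fun ω => (D ω, C ω))
      - entm μ (fun ω => (A ω, D ω, C ω)) - entm μ C := by
  classical
  set P : Ω → β × κ × ρ := fun ω => (A ω, D ω, C ω) with hPdef
  set q : β × κ × ρ → ℝ := fun z => prm μ P z with hq
  set F1 : β × κ × ρ → β × ρ := fun z => (z.1, z.2.2) with hF1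
  set F2 : β × κ × ρ → κ × ρ := fun z => z.2 with hF2
  set F3 : β × κ × ρ → ρ := fun z => z.2.2 with hF3
  set q1 : β × ρ → ℝ := fun w => prm μ (fun ω => F1 (P ω)) w with hq1
  set q2 : κ × ρ → ℝ := fun w => prm μ (fun ω => F2 (P ω)) w with hq2
  set q3 : ρ → ℝ := fun w => prm μ (fun ω => F3 (P ω)) w with hq3
  have e1 : entm μ (fun ω => (A ω, C ω))
      = ∑ z, -(q z * Real.log (q1 (F1 z))) := entm_dist μ P hP F1
  have e2 : entm μ (fun ω => (D ω, C ω))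
      = ∑ z, -(q z * Real.log (q2 (F2 z))) := entm_dist μ P hP F2
  have e3 : entm μ C = ∑ z, -(q z * Real.log (q3 (F3 z))) := entm_dist μ P hP F3
  have e0 : entm μ P = ∑ z, -(q z * Real.log (q z)) := by
    unfold entm
    exact Finset.sum_congr rfl fun z _ => by rw [Real.negMulLog, neg_mul]
  set r : β × κ × ρ → ℝ := fun z =>
    if q3 (F3 z) = 0 then 0 else q1 (F1 z) * q2 (F2 z) / q3 (F3 z) with hr
  -- marginals
  have hm1 : ∀ c : ρ, ∑ a, q1 (a, c) = q3 c := by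
    intro c
    have := prm_fst_marginal μ (fun ω => F1 (P ω)) (hP.comp F1) c
    rw [← this]
  have hm2 : ∀ c : ρ, ∑ d, q2 (d, c) = q3 c := by
    intro c
    have := prm_fst_marginal μ (fun ω => F2 (P ω)) (hP.comp F2) c
    rw [← this]
  have hq0 : ∀ z, 0 ≤ q z := fun z => prm_nonneg μ P z
  have hqle1 : ∀ z, q z ≤ q1 (F1 z) := fun z => prm_comp_ge μ P F1 z
  have hqle2 : ∀ z, q z ≤ q2 (F2 z) := fun z => prm_comp_ge μ P F2 z
  have hqle3 : ∀ z, q z ≤ q3 (F3 z) := fun z => prm_comp_ge μ P F3 z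
  have hgoal : entm μ (fun ω => (A ω, C ω)) + entm μ (fun ω => (D ω, C ω))
      - entm μ (fun ω => (A ω, D ω, C ω)) - entm μ C
      = ∑ z, q z * Real.log (q z / r z) := by
    rw [e1, e2, e3, show entm μ (fun ω => (A ω, D ω, C ω)) = ∑ z, -(q z * Real.log (q z)) from e0]
    rw [← Finset.sum_add_distrib, ← Finset.sum_sub_distrib, ← Finset.sum_sub_distrib]
    refine Finset.sum_congr rfl fun z _ => ?_
    by_cases hz : q z = 0
    · simp [hz]
    · have h1 : 0 < q z := lt_of_le_of_ne (hq0 z) (Ne.symm hz)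
      have hp1 : 0 < q1 (F1 z) := lt_of_lt_of_le h1 (hqle1 z)
      have hp2 : 0 < q2 (F2 z) := lt_of_lt_of_le h1 (hqle2 z)
      have hp3 : 0 < q3 (F3 z) := lt_of_lt_of_le h1 (hqle3 z)
      have hrz : r z = q1 (F1 z) * q2 (F2 z) / q3 (F3 z) := by
        rw [hr]; simp only [hp3.ne', if_false]
      rw [hrz, Real.log_div hz (by positivity), Real.log_div (by positivity) hp3.ne',
        Real.log_mul hp1.ne' hp2.ne']
      ring
  rw [hgoal]
  refine gibbs_aux q r hq0 (prm_total μ P hP) ?_ ?_ ?_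
  · intro z
    rw [hr]
    by_cases h : q3 (F3 z) = 0
    · simp [h]
    · simp only [h, if_false]
      have := prm_nonneg μ (fun ω => F1 (P ω)) (F1 z)
      have := prm_nonneg μ (fun ω => F2 (P ω)) (F2 z)
      have h3 := prm_nonneg μ (fun ω => F3 (P ω)) (F3 z)
      positivity
  · -- ∑ r ≤ 1
    have hre : ∑ z, r z = ∑ c, ∑ a, ∑ d, r (a, d, c) := by
      rw [Fintype.sum_prod_type, Finset.sum_comm, Fintype.sum_prod_type, Finset.sum_comm]
      exact Finset.sum_congr rfl fun c _ => Finset.sum_comm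
    rw [hre]
    have hc : ∀ c : ρ, ∑ a, ∑ d, r (a, d, c) = if q3 c = 0 then 0 else q3 c := by
      intro c
      by_cases h : q3 c = 0
      · simp [hr, hF3, h]
      · simp only [hr, hF1, hF2, hF3, h, if_false]
        have e : (∑ a, q1 (a, c)) * (∑ d, q2 (d, c)) / q3 c
            = ∑ a, ∑ d, q1 (a, c) * q2 (d, c) / q3 c := by
          rw [Finset.sum_mul_sum, Finset.sum_div]
          exact Finset.sum_congr rfl fun a _ => by rw [Finset.sum_div]
        rw [← e, hm1 c, hm2 c, mul_div_assoc, div_self h, mul_one]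
    rw [Finset.sum_congr rfl fun c _ => hc c]
    have : ∑ c, (if q3 c = 0 then 0 else q3 c) ≤ ∑ c : ρ, q3 c := by
      refine Finset.sum_le_sum fun c _ => ?_
      by_cases h : q3 c = 0 <;> simp [h, prm_nonneg]
    refine le_trans this (le_of_eq ?_)
    exact prm_total μ (fun ω => F3 (P ω)) (hP.comp F3)
  · intro z hz
    have h1 : 0 < q z := lt_of_le_of_ne (hq0 z) (Ne.symm hz)
    have hp1 : 0 < q1 (F1 z) := lt_of_lt_of_le h1 (hqle1 z)
    have hp2 : 0 < q2 (F2 z) := lt_of_lt_of_le h1 (hqle2 z)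
    have hp3 : 0 < q3 (F3 z) := lt_of_lt_of_le h1 (hqle3 z)
    rw [hr]
    simp only [hp3.ne', if_false]
    positivity

end Gibbs

section Perm
open Finset
variable {Ω : Type*} [MeasurableSpace Ω] (μ : Measure Ω) [IsProbabilityMeasure μ]

/-- Subadditivity of entropy for pairs. -/
lemma entm_pair_le {β κ : Type*} [Fintype β] [Fintype κ] (A : Ω → β) (D : Ω → κ)
    (hP : MbP (fun ω => (A ω, D ω))) :
    entm μ (fun ω => (A ω, D ω)) ≤ entm μ A + entm μ D := by
  classical
  set P : Ω → β × κ := fun ω => (A ω, D ω) with hPdef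
  set q : β × κ → ℝ := fun z => prm μ P z with hq
  set qA : β → ℝ := fun a => prm μ (fun ω => (P ω).1) a with hqA
  set qD : κ → ℝ := fun d => prm μ (fun ω => (P ω).2) d with hqD
  have e1 : entm μ A = ∑ z, -(q z * Real.log (qA z.1)) := entm_dist μ P hP Prod.fst
  have e2 : entm μ D = ∑ z, -(q z * Real.log (qD z.2)) := entm_dist μ P hP Prod.snd
  have e0 : entm μ P = ∑ z, -(q z * Real.log (q z)) :=
    Finset.sum_congr rfl fun z _ => by rw [Real.negMulLog, neg_mul]
  set r : β × κ → ℝ := fun z => qA z.1 * qD z.2 with hr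
  have hq0 : ∀ z, 0 ≤ q z := fun z => prm_nonneg μ P z
  have hqleA : ∀ z : β × κ, q z ≤ qA z.1 := fun z => prm_comp_ge μ P Prod.fst z
  have hqleD : ∀ z : β × κ, q z ≤ qD z.2 := fun z => prm_comp_ge μ P Prod.snd z
  have key : 0 ≤ ∑ z, q z * Real.log (q z / r z) := by
    refine gibbs_aux q r hq0 (prm_total μ P hP) ?_ ?_ ?_
    · intro z
      have := prm_nonneg μ (fun ω => (P ω).1) z.1
      have := prm_nonneg μ (fun ω => (P ω).2) z.2
      positivity
    · rw [show ∑ z : β × κ, r z = (∑ a, qA a) * (∑ d, qD d) by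
        rw [Finset.sum_mul_sum, Fintype.sum_prod_type]]
      rw [prm_total μ _ (hP.comp Prod.fst), prm_total μ _ (hP.comp Prod.snd)]
      norm_num
    · intro z hz
      have h1 : 0 < q z := lt_of_le_of_ne (hq0 z) (Ne.symm hz)
      have hp1 : 0 < qA z.1 := lt_of_lt_of_le h1 (hqleA z)
      have hp2 : 0 < qD z.2 := lt_of_lt_of_le h1 (hqleD z)
      rw [hr]; positivity
  have hgoal : entm μ A + entm μ D - entm μ P = ∑ z, q z * Real.log (q z / r z) := by
    rw [e1, e2, e0, ← Finset.sum_add_distrib, ← Finset.sum_sub_distrib]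
    refine Finset.sum_congr rfl fun z _ => ?_
    by_cases hz : q z = 0
    · simp [hz]
    · have h1 : 0 < q z := lt_of_le_of_ne (hq0 z) (Ne.symm hz)
      have hp1 : 0 < qA z.1 := lt_of_lt_of_le h1 (hqleA z)
      have hp2 : 0 < qD z.2 := lt_of_lt_of_le h1 (hqleD z)
      rw [hr, Real.log_div hz (by positivity), Real.log_mul hp1.ne' hp2.ne']
      ring
  linarith

-- permutation lemmas for entm of tuples
variable {β κ ρ σ : Type*} [Fintype β] [Fintype κ] [Fintype ρ] [Fintype σ]

lemma entm_swap (A : Ω → β) (D : Ω → κ) :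
    entm μ (fun ω => (A ω, D ω)) = entm μ (fun ω => (D ω, A ω)) := by
  have h := entm_comp_equiv μ (fun ω => (D ω, A ω)) (Equiv.prodComm κ β)
  rw [show (fun ω => (Equiv.prodComm κ β) (D ω, A ω)) = (fun ω => (A ω, D ω)) from rfl] at h
  exact h

lemma entm_swap12 (A : Ω → β) (D : Ω → κ) (C : Ω → ρ) :
    entm μ (fun ω => (A ω, D ω, C ω)) = entm μ (fun ω => (D ω, A ω, C ω)) := by
  have h := entm_comp_equiv μ (fun ω => (D ω, A ω, C ω))
    (⟨fun z => (z.2.1, z.1, z.2.2), fun z => (z.2.1, z.1, z.2.2),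
      fun ⟨_, _, _⟩ => rfl, fun ⟨_, _, _⟩ => rfl⟩ : κ × β × ρ ≃ β × κ × ρ)
  rw [show (fun ω => (⟨fun z => (z.2.1, z.1, z.2.2), fun z => (z.2.1, z.1, z.2.2),
      fun ⟨_, _, _⟩ => rfl, fun ⟨_, _, _⟩ => rfl⟩ : κ × β × ρ ≃ β × κ × ρ) (D ω, A ω, C ω))
      = (fun ω => (A ω, D ω, C ω)) from rfl] at h
  exact h

lemma entm_rot (A : Ω → β) (D : Ω → κ) (C : Ω → ρ) :
    entm μ (fun ω => (A ω, D ω, C ω)) = entm μ (fun ω => (D ω, (A ω, C ω))) := by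
  have h := entm_comp_equiv μ (fun ω => (A ω, D ω, C ω))
    (⟨fun z => (z.2.1, z.1, z.2.2), fun z => (z.2.1, z.1, z.2.2),
      fun ⟨_, _, _⟩ => rfl, fun ⟨_, _, _⟩ => rfl⟩ : β × κ × ρ ≃ κ × β × ρ)
  rw [show (fun ω => (⟨fun z => (z.2.1, z.1, z.2.2), fun z => (z.2.1, z.1, z.2.2),
      fun ⟨_, _, _⟩ => rfl, fun ⟨_, _, _⟩ => rfl⟩ : β × κ × ρ ≃ κ × β × ρ) (A ω, D ω, C ω))
      = (fun ω => (D ω, (A ω, C ω))) from rfl] at h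
  exact h.symm

/-- `H(D | U, V) ≤ H(D | U)` : extra conditioning reduces conditional entropy. -/
lemma cond_drop (D : Ω → β) (U : Ω → κ) (V : Ω → ρ)
    (h : MbP (fun ω => (D ω, U ω, V ω))) :
    entm μ (fun ω => (D ω, U ω, V ω)) - entm μ (fun ω => (U ω, V ω))
      ≤ entm μ (fun ω => (D ω, U ω)) - entm μ U := by
  have h5 := cmim_core_nonneg μ D V U (h.comp (fun z => (z.1, z.2.2, z.2.1)))
  have c1 : entm μ (fun ω => (V ω, U ω)) = entm μ (fun ω => (U ω, V ω)) :=
    entm_swap μ V U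
  have c2 : entm μ (fun ω => (D ω, V ω, U ω)) = entm μ (fun ω => (D ω, U ω, V ω)) := by
    have h := entm_comp_equiv μ (fun ω => (D ω, U ω, V ω))
      (⟨fun z => (z.1, z.2.2, z.2.1), fun z => (z.1, z.2.2, z.2.1),
        fun ⟨_, _, _⟩ => rfl, fun ⟨_, _, _⟩ => rfl⟩ : β × κ × ρ ≃ β × ρ × κ)
    rw [show (fun ω => (⟨fun z => (z.1, z.2.2, z.2.1), fun z => (z.1, z.2.2, z.2.1),
        fun ⟨_, _, _⟩ => rfl, fun ⟨_, _, _⟩ => rfl⟩ : β × κ × ρ ≃ β × ρ × κ) (D ω, U ω, V ω))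
        = (fun ω => (D ω, V ω, U ω)) from rfl] at h
    exact h
  linarith

end Perm

section Proc
open Finset
variable {Ω : Type*} [MeasurableSpace Ω] (μ : Measure Ω) [IsProbabilityMeasure μ]
variable {α : Type*} [Fintype α]

/-- The vector `(X₀, …, X_{n-1})`. -/
def VecP (X : ℕ → Ω → α) (n : ℕ) : Ω → (Fin n → α) := fun ω j => X j.1 ω

noncomputable def HseqP (X : ℕ → Ω → α) (n : ℕ) : ℝ := entm μ (VecP X n)

/-- index equiv: `{j : Fin n // j < i} ≃ Fin i`. -/
def eLowFin (n : ℕ) (i : Fin n) (β : Type*) : ({j : Fin n // j < i} → β) ≃ (Fin i.1 → β) :=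
  ⟨fun f k => f ⟨⟨k.1, Nat.lt_trans k.2 i.isLt⟩, k.2⟩,
   fun f j => f ⟨j.1.1, j.2⟩, fun f => rfl, fun f => rfl⟩

/-- snoc equiv. -/
def eSnoc (q : ℕ) (β : Type*) : (β × (Fin q → β)) ≃ (Fin (q + 1) → β) where
  toFun z := fun k => if h : k.1 < q then z.2 ⟨k.1, h⟩ else z.1
  invFun f := (f ⟨q, q.lt_succ_self⟩, fun k => f ⟨k.1, Nat.lt_succ_of_lt k.2⟩)
  left_inv z := by
    obtain ⟨x, f⟩ := z
    simp only [Prod.mk.injEq]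
    constructor
    · simp
    · funext k
      simp [k.2]
  right_inv f := by
    funext k
    by_cases h : k.1 < q
    · simp [h]
    · have hk : k.1 = q := by omega
      simp only [h, dif_neg, not_false_iff]
      congr 1
      exact (Fin.ext hk).symm

lemma mbVecP {X : ℕ → Ω → α} (hX : ∀ i, MbP (X i)) (n : ℕ) : MbP (VecP X n) :=
  MbP.pi (fun j : Fin n => hX j.1)

lemma HseqP_nonneg (X : ℕ → Ω → α) (n : ℕ) : 0 ≤ HseqP μ X n := entm_nonneg μ _

lemma HseqP_zero (X : ℕ → Ω → α) : HseqP μ X 0 = 0 := by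
  unfold HseqP entm
  rw [Fintype.sum_unique]
  have : prm μ (VecP X 0) default = 1 := by
    unfold prm
    have : (VecP X 0) ⁻¹' {default} = Set.univ := by
      ext ω; simp [Subsingleton.elim (VecP X 0 ω) default]
    rw [this, measure_univ, ENNReal.toReal_one]
  rw [this, Real.negMulLog_one]

/-- stationarity reformulated -/
lemma hstatP {X : ℕ → Ω → α}
    (hstat : ∀ (n t : ℕ) (a : Fin n → α),
      prm μ (fun ω (j : Fin n) => X (j.1 + t) ω) a
        = prm μ (fun ω (j : Fin n) => X j.1 ω) a)
    (m t : ℕ) (a : Fin m → α) :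
    prm μ (fun ω (j : Fin m) => X (t + j.1) ω) a = prm μ (VecP X m) a := by
  have h := hstat m t a
  rw [show (fun ω (j : Fin m) => X (t + j.1) ω) = (fun ω (j : Fin m) => X (j.1 + t) ω) by
    funext ω j; rw [Nat.add_comm]]
  exact h

lemma HseqP_subadd {X : ℕ → Ω → α} (hX : ∀ i, MbP (X i))
    (hstat : ∀ (n t : ℕ) (a : Fin n → α),
      prm μ (fun ω (j : Fin n) => X (j.1 + t) ω) a
        = prm μ (fun ω (j : Fin n) => X j.1 ω) a)
    (n m : ℕ) : HseqP μ X (n + m) ≤ HseqP μ X n + HseqP μ X m := by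
  classical
  set E : (Fin (n + m) → α) ≃ ((Fin n → α) × (Fin m → α)) :=
    (Equiv.arrowCongr finSumFinEquiv.symm (Equiv.refl α)).trans
      (Equiv.sumArrowEquivProdArrow _ _ _) with hE
  have h := entm_comp_equiv μ (VecP X (n + m)) E
  have hfun : (fun ω => E (VecP X (n + m) ω))
      = fun ω => (VecP X n ω, fun j : Fin m => X (n + j.1) ω) := by
    funext ω
    simp only [hE, Equiv.trans_apply, Equiv.arrowCongr_apply, Equiv.sumArrowEquivProdArrow,
      Equiv.coe_fn_mk, Equiv.symm_symm, Equiv.refl_apply]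
    constructor
  rw [hfun] at h
  have hle : entm μ (fun ω => (VecP X n ω, fun j : Fin m => X (n + j.1) ω))
      ≤ entm μ (VecP X n) + entm μ (fun ω (j : Fin m) => X (n + j.1) ω) := by
    apply entm_pair_le
    exact (mbVecP hX n).pair (MbP.pi (fun j : Fin m => hX (n + j.1)))
  have hst : entm μ (fun ω (j : Fin m) => X (n + j.1) ω) = entm μ (VecP X m) :=
    entm_congr μ (fun a => hstatP μ hstat m n a)
  calc HseqP μ X (n + m) = entm μ (fun ω => (VecP X n ω, fun j : Fin m => X (n + j.1) ω)) :=
        h.symm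
    _ ≤ entm μ (VecP X n) + entm μ (fun ω (j : Fin m) => X (n + j.1) ω) := hle
    _ = HseqP μ X n + HseqP μ X m := by rw [hst]; rfl

end Proc

section Proc2
open Finset
variable {Ω : Type*} [MeasurableSpace Ω] (μ : Measure Ω) [IsProbabilityMeasure μ]
variable {α : Type*} [Fintype α]

def XlowP (X : ℕ → Ω → α) (n : ℕ) (i : Fin n) : Ω → ({j : Fin n // j < i} → α) :=
  fun ω j => X j.1.1 ω

def YgP (Y : ℕ → Ω → Option α) (n : ℕ) (i : Fin n) : Ω → ({j : Fin n // i < j} → Option α) :=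
  fun ω j => Y j.1.1 ω

lemma entm_XlowP (X : ℕ → Ω → α) (n : ℕ) (i : Fin n) :
    entm μ (XlowP X n i) = HseqP μ X i.1 := by
  have h := entm_comp_equiv μ (XlowP X n i) (eLowFin n i α)
  rw [show (fun ω => (eLowFin n i α) (XlowP X n i ω)) = VecP X i.1 from rfl] at h
  exact h.symm

lemma entm_pair_XlowP (X : ℕ → Ω → α) (n : ℕ) (i : Fin n) :
    entm μ (fun ω => (X i.1 ω, XlowP X n i ω)) = HseqP μ X (i.1 + 1) := by
  have h := entm_comp_equiv μ (fun ω => (X i.1 ω, XlowP X n i ω))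
    ((Equiv.prodCongr (Equiv.refl α) (eLowFin n i α)).trans (eSnoc i.1 α))
  have hfun : (fun ω => ((Equiv.prodCongr (Equiv.refl α) (eLowFin n i α)).trans
      (eSnoc i.1 α)) (X i.1 ω, XlowP X n i ω)) = VecP X (i.1 + 1) := by
    funext ω k
    simp only [Equiv.trans_apply, Equiv.prodCongr_apply, Equiv.refl_apply, eSnoc, eLowFin,
      Equiv.coe_fn_mk, Prod.map, VecP, XlowP]
    by_cases h : k.1 < i.1
    · simp [h]
    · have hk : k.1 = i.1 := by omega
      simp [h, hk]
  rw [hfun] at h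
  exact h.symm

end Proc2

section Proc3
open Finset
variable {Ω : Type*} [MeasurableSpace Ω] (μ : Measure Ω) [IsProbabilityMeasure μ]
variable {α : Type*} [Fintype α]

def ZBP (X : ℕ → Ω → α) (B : ℕ → Ω → Bool) (t m : ℕ) :
    Ω → ((Fin m → α) × (Fin m → Bool)) :=
  fun ω => (fun j => X (t + j.1) ω, fun j => B (t + j.1) ω)

lemma mbZBP {X : ℕ → Ω → α} {B : ℕ → Ω → Bool} (hX : ∀ i, MbP (X i))
    (hB : ∀ i, MbP (B i)) (t m : ℕ) : MbP (ZBP X B t m) :=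
  (MbP.pi (fun j : Fin m => hX (t + j.1))).pair (MbP.pi (fun j : Fin m => hB (t + j.1)))

/-- split equiv for `Fin (t+m) → β`. -/
def eBoolSplit (t m : ℕ) (β : Type*) : ((Fin t → β) × (Fin m → β)) ≃ (Fin (t + m) → β) where
  toFun z := fun i => if h : i.1 < t then z.1 ⟨i.1, h⟩ else z.2 ⟨i.1 - t, by omega⟩
  invFun f := (fun i => f (Fin.castAdd m i), fun j => f (Fin.natAdd t j))
  left_inv z := by
    obtain ⟨u, v⟩ := z
    simp only [Prod.mk.injEq]
    constructor
    · funext i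
      simp [Fin.castAdd, Fin.castLE, i.2]
    · funext j
      have h : ¬ ((Fin.natAdd t j).1 < t) := by simp [Fin.natAdd]
      simp only [h, dif_neg, not_false_iff]
      apply congrArg
      apply Fin.ext
      simp [Fin.natAdd]
  right_inv f := by
    funext i
    by_cases h : i.1 < t
    · simp [h, Fin.castAdd, Fin.castLE]
    · simp only [h, dif_neg, not_false_iff]
      apply congrArg
      apply Fin.ext
      simp [Fin.natAdd]
      omega

variable (p : ℝ)

lemma ZBP_zero_law {X : ℕ → Ω → α} {B : ℕ → Ω → Bool}
    (hind : ∀ (n : ℕ) (a : Fin n → α) (b : Fin n → Bool),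
      prm μ (fun ω => ((fun j : Fin n => X j.1 ω), fun j : Fin n => B j.1 ω)) (a, b)
        = prm μ (fun ω (j : Fin n) => X j.1 ω) a * ∏ j, (if b j then p else 1 - p))
    (m : ℕ) (a : Fin m → α) (b : Fin m → Bool) :
    prm μ (ZBP X B 0 m) (a, b)
      = prm μ (VecP X m) a * ∏ j, (if b j then p else 1 - p) := by
  have hz : ZBP X B 0 m = fun ω => ((fun j : Fin m => X j.1 ω), fun j : Fin m => B j.1 ω) := by
    funext ω
    simp [ZBP]
  rw [hz]
  exact hind m a b

lemma ZBP_shift {X : ℕ → Ω → α} {B : ℕ → Ω → Bool} (hX : ∀ i, MbP (X i))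
    (hB : ∀ i, MbP (B i))
    (hstat : ∀ (n t : ℕ) (a : Fin n → α),
      prm μ (fun ω (j : Fin n) => X (j.1 + t) ω) a
        = prm μ (fun ω (j : Fin n) => X j.1 ω) a)
    (hind : ∀ (n : ℕ) (a : Fin n → α) (b : Fin n → Bool),
      prm μ (fun ω => ((fun j : Fin n => X j.1 ω), fun j : Fin n => B j.1 ω)) (a, b)
        = prm μ (fun ω (j : Fin n) => X j.1 ω) a * ∏ j, (if b j then p else 1 - p))
    (t m : ℕ) (z : (Fin m → α) × (Fin m → Bool)) :
    prm μ (ZBP X B t m) z = prm μ (ZBP X B 0 m) z := by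
  classical
  obtain ⟨a, b⟩ := z
  set w : Bool → ℝ := fun c => if c then p else 1 - p with hw
  set F : ((Fin (t + m) → α) × (Fin (t + m) → Bool)) → ((Fin m → α) × (Fin m → Bool)) :=
    fun q => (fun j => q.1 (Fin.natAdd t j), fun j => q.2 (Fin.natAdd t j)) with hF
  have hcomp : ZBP X B t m = fun ω => F (ZBP X B 0 (t + m) ω) := by
    funext ω
    simp [ZBP, hF, Fin.natAdd]
  rw [hcomp, prm_sum_fiber μ _ (mbZBP hX hB 0 (t + m)) F (a, b), Finset.sum_filter,
    Fintype.sum_prod_type]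
  have hterm : ∀ (x : Fin (t + m) → α) (bb : Fin (t + m) → Bool),
      (if F (x, bb) = (a, b) then prm μ (ZBP X B 0 (t + m)) (x, bb) else 0)
        = (if (fun j => x (Fin.natAdd t j)) = a then prm μ (VecP X (t + m)) x else 0)
          * (if (fun j => bb (Fin.natAdd t j)) = b then ∏ j, w (bb j) else 0) := by
    intro x bb
    rw [ZBP_zero_law μ p hind (t + m) x bb]
    by_cases h1 : (fun j => x (Fin.natAdd t j)) = a
    · by_cases h2 : (fun j => bb (Fin.natAdd t j)) = b
      · simp [hF, h1, h2, Prod.ext_iff, hw]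
      · simp [hF, h1, h2, Prod.ext_iff]
    · simp [hF, h1, Prod.ext_iff]
  rw [Finset.sum_congr rfl fun x _ => Finset.sum_congr rfl fun bb _ => hterm x bb]
  rw [← Finset.sum_mul_sum]
  have hA : (∑ x : Fin (t + m) → α,
      if (fun j => x (Fin.natAdd t j)) = a then prm μ (VecP X (t + m)) x else 0)
      = prm μ (VecP X m) a := by
    rw [← Finset.sum_filter,
      ← prm_sum_fiber μ (VecP X (t + m)) (mbVecP hX (t + m))
        (fun x (j : Fin m) => x (Fin.natAdd t j)) a]
    rw [show (fun ω => (fun (j : Fin m) => VecP X (t + m) ω (Fin.natAdd t j)))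
      = (fun ω (j : Fin m) => X (t + j.1) ω) from rfl]
    exact hstatP μ hstat m t a
  have hB2 : (∑ bb : Fin (t + m) → Bool,
      if (fun j => bb (Fin.natAdd t j)) = b then ∏ j, w (bb j) else 0)
      = ∏ j, w (b j) := by
    rw [← Equiv.sum_comp (eBoolSplit t m Bool)
      (fun bb => if (fun j => bb (Fin.natAdd t j)) = b then ∏ j, w (bb j) else 0),
      Fintype.sum_prod_type]
    have hcond : ∀ (u : Fin t → Bool) (v : Fin m → Bool),
        (fun j => (eBoolSplit t m Bool) (u, v) (Fin.natAdd t j)) = v := by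
      intro u v
      funext j
      have h : ¬ ((Fin.natAdd t j).1 < t) := by simp [Fin.natAdd]
      simp only [eBoolSplit, Equiv.coe_fn_mk, h, dif_neg, not_false_iff]
      apply congrArg
      apply Fin.ext
      simp [Fin.natAdd]
    have hprod : ∀ (u : Fin t → Bool) (v : Fin m → Bool),
        ∏ i, w ((eBoolSplit t m Bool) (u, v) i)
          = (∏ i, w (u i)) * (∏ j, w (v j)) := by
      intro u v
      rw [Fin.prod_univ_add]
      congr 1
      · refine Finset.prod_congr rfl fun i _ => ?_
        congr 1
        simp [eBoolSplit, Fin.castAdd, Fin.castLE, i.2]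
      · refine Finset.prod_congr rfl fun j _ => ?_
        congr 1
        have h : ¬ ((Fin.natAdd t j).1 < t) := by simp [Fin.natAdd]
        simp only [eBoolSplit, Equiv.coe_fn_mk, h, dif_neg, not_false_iff]
        apply congrArg
        apply Fin.ext
        simp [Fin.natAdd]
    have hstep : ∀ (u : Fin t → Bool),
        (∑ v : Fin m → Bool, if (fun j => (eBoolSplit t m Bool) (u, v) (Fin.natAdd t j)) = b
          then ∏ i, w ((eBoolSplit t m Bool) (u, v) i) else 0)
        = (∏ i, w (u i)) * (∏ j, w (b j)) := by
      intro u
      have : ∀ v : Fin m → Bool,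
          (if (fun j => (eBoolSplit t m Bool) (u, v) (Fin.natAdd t j)) = b
            then ∏ i, w ((eBoolSplit t m Bool) (u, v) i) else 0)
          = (if v = b then (∏ i, w (u i)) * (∏ j, w (v j)) else 0) := by
        intro v
        rw [hcond u v, hprod u v]
      rw [Finset.sum_congr rfl fun v _ => this v]
      rw [Finset.sum_ite_eq' univ b (fun v => (∏ i, w (u i)) * (∏ j, w (v j)))]
      simp
    rw [Finset.sum_congr rfl fun u _ => hstep u, ← Finset.sum_mul]
    have hone : (∑ u : Fin t → Bool, ∏ i, w (u i)) = 1 := by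
      have := Finset.prod_univ_sum (fun _ : Fin t => (univ : Finset Bool)) (fun _ c => w c)
      rw [Fintype.piFinset_univ] at this
      rw [← this]
      have : ∀ i : Fin t, ∑ c : Bool, w c = 1 := by
        intro i
        rw [Fintype.sum_bool]
        simp [hw]
      rw [Finset.prod_congr rfl fun i _ => this i]
      simp
    rw [hone, one_mul]
  rw [hA, hB2, ← ZBP_zero_law μ p hind m a b]

end Proc3

section Proc4
open Finset
variable {Ω : Type*} [MeasurableSpace Ω] (μ : Measure Ω) [IsProbabilityMeasure μ]
variable {α : Type*} [Fintype α]

noncomputable def tTP (X : ℕ → Ω → α) (Y : ℕ → Ω → Option α) (n : ℕ) (i : Fin n) : ℝ :=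
  entm μ (fun ω => (YgP Y n i ω, X i.1 ω, XlowP X n i ω))
    - entm μ (fun ω => (YgP Y n i ω, XlowP X n i ω))

noncomputable def TseqP (X : ℕ → Ω → α) (Y : ℕ → Ω → Option α) (n : ℕ) : ℝ :=
  ∑ i : Fin n, tTP μ X Y n i

lemma mbYgP {Y : ℕ → Ω → Option α} (hY : ∀ i, MbP (Y i)) (n : ℕ) (i : Fin n) :
    MbP (YgP Y n i) := MbP.pi (fun j : {j : Fin n // i < j} => hY j.1.1)

lemma mbXlowP {X : ℕ → Ω → α} (hX : ∀ i, MbP (X i)) (n : ℕ) (i : Fin n) :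
    MbP (XlowP X n i) := MbP.pi (fun j : {j : Fin n // j < i} => hX j.1.1)

lemma tTP_nonneg {X : ℕ → Ω → α} {Y : ℕ → Ω → Option α} (hX : ∀ i, MbP (X i))
    (hY : ∀ i, MbP (Y i)) (n : ℕ) (i : Fin n) : 0 ≤ tTP μ X Y n i := by
  have h := entm_comp_le μ (fun ω => (YgP Y n i ω, X i.1 ω, XlowP X n i ω))
    ((mbYgP hY n i).pair ((hX i.1).pair (mbXlowP hX n i)))
    (fun z => (z.1, z.2.2))
  rw [show (fun ω => ((fun z : _ × α × _ => (z.1, z.2.2))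
    ((YgP Y n i ω, X i.1 ω, XlowP X n i ω))))
    = (fun ω => (YgP Y n i ω, XlowP X n i ω)) from rfl] at h
  unfold tTP
  linarith

lemma cmim_decomp {X : ℕ → Ω → α} {Y : ℕ → Ω → Option α} (n : ℕ) (i : Fin n) :
    cmim μ (YgP Y n i) (X i.1) (XlowP X n i)
      = (HseqP μ X (i.1 + 1) - HseqP μ X i.1) - tTP μ X Y n i := by
  unfold cmim tTP
  rw [entm_pair_XlowP μ X n i, entm_XlowP μ X n i]
  ring

lemma cmim_term_nonneg {X : ℕ → Ω → α} {Y : ℕ → Ω → Option α} (hX : ∀ i, MbP (X i))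
    (hY : ∀ i, MbP (Y i)) (n : ℕ) (i : Fin n) :
    0 ≤ cmim μ (YgP Y n i) (X i.1) (XlowP X n i) :=
  cmim_core_nonneg μ (YgP Y n i) (X i.1) (XlowP X n i)
    ((mbYgP hY n i).pair ((hX i.1).pair (mbXlowP hX n i)))

lemma sum_cmim_eq {X : ℕ → Ω → α} {Y : ℕ → Ω → Option α} (n : ℕ) :
    ∑ i : Fin n, cmim μ (YgP Y n i) (X i.1) (XlowP X n i)
      = HseqP μ X n - TseqP μ X Y n := by
  rw [Finset.sum_congr rfl fun i _ => cmim_decomp μ n i, Finset.sum_sub_distrib]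
  have htel : ∑ i : Fin n, (HseqP μ X (i.1 + 1) - HseqP μ X i.1) = HseqP μ X n := by
    rw [Fin.sum_univ_eq_sum_range (fun k => HseqP μ X (k + 1) - HseqP μ X k) n,
      Finset.sum_range_sub (fun k => HseqP μ X k), HseqP_zero, sub_zero]
  rw [htel]
  rfl

/-- split equiv for the indices above `castAdd m i`. -/
def eYsplit (n m : ℕ) (i : Fin n) (β : Type*) :
    ({j : Fin (n + m) // (Fin.castAdd m i) < j} → β)
      ≃ (({j : Fin n // i < j} → β) × (Fin m → β)) where
  toFun f := (fun j => f ⟨⟨j.1.1, Nat.lt_of_lt_of_le j.1.isLt (Nat.le_add_right n m)⟩, j.2⟩,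
    fun k => f ⟨⟨n + k.1, by omega⟩, Nat.lt_of_lt_of_le i.isLt (Nat.le_add_right n (k.1))⟩)
  invFun q := fun j => if h : j.1.1 < n then q.1 ⟨⟨j.1.1, h⟩, j.2⟩
    else q.2 ⟨j.1.1 - n, by have := j.1.isLt; omega⟩
  left_inv f := by
    funext j
    by_cases h : j.1.1 < n
    · simp only [h, dif_pos]
    · simp only [h, dif_neg, not_false_iff]
      refine congrArg f (Subtype.ext (Fin.ext ?_))
      simp only [Fin.val_mk]
      omega
  right_inv q := by
    obtain ⟨f, g⟩ := q
    simp only [Prod.mk.injEq]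
    constructor
    · funext j
      have h : j.1.1 < n := j.1.isLt
      simp only [h, dif_pos]
    · funext k
      have h : ¬ (n + k.1 < n) := by omega
      simp only [h, dif_neg, not_false_iff]
      refine congrArg g (Fin.ext ?_)
      simp only [Fin.val_mk]
      omega
  
/-- cast equiv for indices below `castAdd m i`. -/
def eXlowCast (n m : ℕ) (i : Fin n) (β : Type*) :
    ({j : Fin (n + m) // j < Fin.castAdd m i} → β) ≃ ({j : Fin n // j < i} → β) where
  toFun f := fun j => f ⟨⟨j.1.1, Nat.lt_of_lt_of_le j.1.isLt (Nat.le_add_right n m)⟩, j.2⟩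
  invFun f := fun j => f ⟨⟨j.1.1, Nat.lt_trans j.2 i.isLt⟩, j.2⟩
  left_inv f := rfl
  right_inv f := rfl

lemma tT_left {X : ℕ → Ω → α} {Y : ℕ → Ω → Option α} (hX : ∀ i, MbP (X i))
    (hY : ∀ i, MbP (Y i)) (n m : ℕ) (i : Fin n) :
    tTP μ X Y (n + m) (Fin.castAdd m i) ≤ tTP μ X Y n i := by
  have h1 : entm μ (fun ω => (YgP Y (n + m) (Fin.castAdd m i) ω,
      X (Fin.castAdd m i).1 ω, XlowP X (n + m) (Fin.castAdd m i) ω))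
      = entm μ (fun ω => ((YgP Y n i ω, (fun k : Fin m => Y (n + k.1) ω)),
        X i.1 ω, XlowP X n i ω)) := by
    have h := entm_comp_equiv μ (fun ω => (YgP Y (n + m) (Fin.castAdd m i) ω,
      X (Fin.castAdd m i).1 ω, XlowP X (n + m) (Fin.castAdd m i) ω))
      (Equiv.prodCongr (eYsplit n m i (Option α))
        (Equiv.prodCongr (Equiv.refl α) (eXlowCast n m i α)))
    rw [show (fun ω => (Equiv.prodCongr (eYsplit n m i (Option α))
        (Equiv.prodCongr (Equiv.refl α) (eXlowCast n m i α)))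
        ((YgP Y (n + m) (Fin.castAdd m i) ω,
          X (Fin.castAdd m i).1 ω, XlowP X (n + m) (Fin.castAdd m i) ω)))
      = (fun ω => ((YgP Y n i ω, (fun k : Fin m => Y (n + k.1) ω)),
        X i.1 ω, XlowP X n i ω)) from rfl] at h
    exact h.symm
  have h2 : entm μ (fun ω => (YgP Y (n + m) (Fin.castAdd m i) ω,
      XlowP X (n + m) (Fin.castAdd m i) ω))
      = entm μ (fun ω => ((YgP Y n i ω, (fun k : Fin m => Y (n + k.1) ω)), XlowP X n i ω)) := by
    have h := entm_comp_equiv μ (fun ω => (YgP Y (n + m) (Fin.castAdd m i) ω,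
      XlowP X (n + m) (Fin.castAdd m i) ω))
      (Equiv.prodCongr (eYsplit n m i (Option α)) (eXlowCast n m i α))
    rw [show (fun ω => (Equiv.prodCongr (eYsplit n m i (Option α)) (eXlowCast n m i α))
        ((YgP Y (n + m) (Fin.castAdd m i) ω, XlowP X (n + m) (Fin.castAdd m i) ω)))
      = (fun ω => ((YgP Y n i ω, (fun k : Fin m => Y (n + k.1) ω)), XlowP X n i ω)) from rfl] at h
    exact h.symm
  -- permute to cond_drop shape
  have h3 : entm μ (fun ω => ((YgP Y n i ω, (fun k : Fin m => Y (n + k.1) ω)),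
      X i.1 ω, XlowP X n i ω))
      = entm μ (fun ω => (X i.1 ω, (YgP Y n i ω, XlowP X n i ω),
        (fun k : Fin m => Y (n + k.1) ω))) := by
    have h := entm_comp_equiv μ (fun ω => ((YgP Y n i ω, (fun k : Fin m => Y (n + k.1) ω)),
      X i.1 ω, XlowP X n i ω))
      (⟨fun z => (z.2.1, (z.1.1, z.2.2), z.1.2), fun z => ((z.2.1.1, z.2.2), z.1, z.2.1.2),
        fun ⟨⟨_, _⟩, _, _⟩ => rfl, fun ⟨_, ⟨_, _⟩, _⟩ => rfl⟩ :
        (_ × _) × α × _ ≃ α × (_ × _) × _)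
    rw [show (fun ω => (⟨fun z => (z.2.1, (z.1.1, z.2.2), z.1.2),
        fun z => ((z.2.1.1, z.2.2), z.1, z.2.1.2),
        fun ⟨⟨_, _⟩, _, _⟩ => rfl, fun ⟨_, ⟨_, _⟩, _⟩ => rfl⟩ :
        (_ × _) × α × _ ≃ α × (_ × _) × _)
        (((YgP Y n i ω, (fun k : Fin m => Y (n + k.1) ω)), X i.1 ω, XlowP X n i ω)))
      = (fun ω => (X i.1 ω, (YgP Y n i ω, XlowP X n i ω),
        (fun k : Fin m => Y (n + k.1) ω))) from rfl] at h
    exact h.symm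
  have h4 : entm μ (fun ω => ((YgP Y n i ω, (fun k : Fin m => Y (n + k.1) ω)), XlowP X n i ω))
      = entm μ (fun ω => ((YgP Y n i ω, XlowP X n i ω),
        (fun k : Fin m => Y (n + k.1) ω))) := by
    have h := entm_comp_equiv μ
      (fun ω => ((YgP Y n i ω, (fun k : Fin m => Y (n + k.1) ω)), XlowP X n i ω))
      (⟨fun z => ((z.1.1, z.2), z.1.2), fun z => ((z.1.1, z.2), z.1.2),
        fun ⟨⟨_, _⟩, _⟩ => rfl, fun ⟨⟨_, _⟩, _⟩ => rfl⟩ :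
        (_ × _) × _ ≃ (_ × _) × _)
    rw [show (fun ω => (⟨fun z => ((z.1.1, z.2), z.1.2), fun z => ((z.1.1, z.2), z.1.2),
        fun ⟨⟨_, _⟩, _⟩ => rfl, fun ⟨⟨_, _⟩, _⟩ => rfl⟩ :
        (_ × _) × _ ≃ (_ × _) × _)
        (((YgP Y n i ω, (fun k : Fin m => Y (n + k.1) ω)), XlowP X n i ω)))
      = (fun ω => ((YgP Y n i ω, XlowP X n i ω), (fun k : Fin m => Y (n + k.1) ω))) from rfl] at h
    exact h.symm
  have h5 := cond_drop μ (X i.1) (fun ω => (YgP Y n i ω, XlowP X n i ω))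
    (fun ω (k : Fin m) => Y (n + k.1) ω)
    ((hX i.1).pair (((mbYgP hY n i).pair (mbXlowP hX n i)).pair
      (MbP.pi (fun k : Fin m => hY (n + k.1)))))
  have h6 : entm μ (fun ω => (X i.1 ω, (YgP Y n i ω, XlowP X n i ω)))
      = entm μ (fun ω => (YgP Y n i ω, X i.1 ω, XlowP X n i ω)) :=
    (entm_rot μ (YgP Y n i) (X i.1) (XlowP X n i)).symm
  unfold tTP
  rw [show X (Fin.castAdd m i).1 = X i.1 from rfl] at h1 ⊢
  beta_reduce at h5
  linarith
end Proc4

section Proc5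
open Finset
variable {Ω : Type*} [MeasurableSpace Ω] (μ : Measure Ω) [IsProbabilityMeasure μ]
variable {α : Type*} [Fintype α]

def eYg2 (n m : ℕ) (k : Fin m) (β : Type*) :
    ({j : Fin (n + m) // Fin.natAdd n k < j} → β) ≃ ({j : Fin m // k < j} → β) where
  toFun f := fun j => f ⟨⟨n + j.1.1, Nat.add_lt_add_left j.1.isLt n⟩,
    Nat.add_lt_add_left j.2 n⟩
  invFun f := fun j => by
    have h2 : n + k.1 < j.1.1 := j.2
    exact f ⟨⟨j.1.1 - n, by have := j.1.isLt; omega⟩, by show k.1 < j.1.1 - n; omega⟩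
  left_inv f := by
    funext j
    have h2 : n + k.1 < j.1.1 := j.2
    simp only []
    refine congrArg f (Subtype.ext (Fin.ext ?_))
    show n + (j.1.1 - n) = j.1.1
    omega
  right_inv f := by
    funext j
    simp only []
    refine congrArg f (Subtype.ext (Fin.ext ?_))
    show n + j.1.1 - n = j.1.1
    omega

def eXl2 (n m : ℕ) (k : Fin m) (β : Type*) :
    ({j : Fin (n + m) // j < Fin.natAdd n k} → β)
      ≃ ((Fin n → β) × ({j : Fin m // j < k} → β)) where
  toFun f := (fun j : Fin n => f ⟨⟨j.1, Nat.lt_of_lt_of_le j.isLt (Nat.le_add_right n m)⟩,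
      show j.1 < n + k.1 from by have := j.isLt; omega⟩,
    fun j => f ⟨⟨n + j.1.1, by have h1 : j.1.1 < k.1 := j.2; have := k.isLt; omega⟩,
      show n + j.1.1 < n + k.1 from by have h1 : j.1.1 < k.1 := j.2; omega⟩)
  invFun q := fun j => if h : j.1.1 < n then q.1 ⟨j.1.1, h⟩
    else q.2 ⟨⟨j.1.1 - n, by have h2 : j.1.1 < n + k.1 := j.2; have := k.isLt; omega⟩,
      show j.1.1 - n < k.1 from by have h2 : j.1.1 < n + k.1 := j.2; omega⟩
  left_inv f := by
    funext j
    by_cases h : j.1.1 < n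
    · simp only [h, dif_pos]
    · simp only [h, dif_neg, not_false_iff]
      refine congrArg f (Subtype.ext (Fin.ext ?_))
      show n + (j.1.1 - n) = j.1.1
      omega
  right_inv q := by
    obtain ⟨u, v⟩ := q
    simp only [Prod.mk.injEq]
    constructor
    · funext j
      have h : j.1 < n := j.isLt
      simp only [h, dif_pos]
    · funext j
      have h : ¬ (n + j.1.1 < n) := by omega
      simp only [h, dif_neg, not_false_iff]
      refine congrArg v (Subtype.ext (Fin.ext ?_))
      show n + j.1.1 - n = j.1.1
      omega

lemma tT_right {X : ℕ → Ω → α} {B : ℕ → Ω → Bool} {Y : ℕ → Ω → Option α} (p : ℝ)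
    (hXm : ∀ i, MbP (X i)) (hBm : ∀ i, MbP (B i)) (hYm : ∀ i, MbP (Y i))
    (hstat : ∀ (n t : ℕ) (a : Fin n → α),
      prm μ (fun ω (j : Fin n) => X (j.1 + t) ω) a
        = prm μ (fun ω (j : Fin n) => X j.1 ω) a)
    (hind : ∀ (n : ℕ) (a : Fin n → α) (b : Fin n → Bool),
      prm μ (fun ω => ((fun j : Fin n => X j.1 ω), fun j : Fin n => B j.1 ω)) (a, b)
        = prm μ (fun ω (j : Fin n) => X j.1 ω) a * ∏ j, (if b j then p else 1 - p))
    (hYdef : ∀ i ω, Y i ω = if B i ω then some (X i ω) else none)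
    (n m : ℕ) (k : Fin m) :
    tTP μ X Y (n + m) (Fin.natAdd n k) ≤ tTP μ X Y m k := by
  set YS : Ω → ({j : Fin m // k < j} → Option α) := fun ω j => Y (n + j.1.1) ω with hYS
  set XS : Ω → ({j : Fin m // j < k} → α) := fun ω j => X (n + j.1.1) ω with hXS
  -- step 1 : split/reindex the big tuples
  have h1 : entm μ (fun ω => (YgP Y (n + m) (Fin.natAdd n k) ω,
      X (Fin.natAdd n k).1 ω, XlowP X (n + m) (Fin.natAdd n k) ω))
      = entm μ (fun ω => (YS ω, X (n + k.1) ω, (VecP X n ω, XS ω))) := by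
    have h := entm_comp_equiv μ (fun ω => (YgP Y (n + m) (Fin.natAdd n k) ω,
      X (Fin.natAdd n k).1 ω, XlowP X (n + m) (Fin.natAdd n k) ω))
      (Equiv.prodCongr (eYg2 n m k (Option α))
        (Equiv.prodCongr (Equiv.refl α) (eXl2 n m k α)))
    rw [show (fun ω => (Equiv.prodCongr (eYg2 n m k (Option α))
        (Equiv.prodCongr (Equiv.refl α) (eXl2 n m k α)))
        ((YgP Y (n + m) (Fin.natAdd n k) ω,
          X (Fin.natAdd n k).1 ω, XlowP X (n + m) (Fin.natAdd n k) ω)))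
      = (fun ω => (YS ω, X (n + k.1) ω, (VecP X n ω, XS ω))) from rfl] at h
    exact h.symm
  have h2 : entm μ (fun ω => (YgP Y (n + m) (Fin.natAdd n k) ω,
      XlowP X (n + m) (Fin.natAdd n k) ω))
      = entm μ (fun ω => (YS ω, (VecP X n ω, XS ω))) := by
    have h := entm_comp_equiv μ (fun ω => (YgP Y (n + m) (Fin.natAdd n k) ω,
      XlowP X (n + m) (Fin.natAdd n k) ω))
      (Equiv.prodCongr (eYg2 n m k (Option α)) (eXl2 n m k α))
    rw [show (fun ω => (Equiv.prodCongr (eYg2 n m k (Option α)) (eXl2 n m k α))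
        ((YgP Y (n + m) (Fin.natAdd n k) ω, XlowP X (n + m) (Fin.natAdd n k) ω)))
      = (fun ω => (YS ω, (VecP X n ω, XS ω))) from rfl] at h
    exact h.symm
  -- step 2 : permute
  have h3 : entm μ (fun ω => (YS ω, X (n + k.1) ω, (VecP X n ω, XS ω)))
      = entm μ (fun ω => (X (n + k.1) ω, (YS ω, XS ω), VecP X n ω)) := by
    have h := entm_comp_equiv μ (fun ω => (YS ω, X (n + k.1) ω, (VecP X n ω, XS ω)))
      (⟨fun z => (z.2.1, (z.1, z.2.2.2), z.2.2.1),
        fun w => (w.2.1.1, w.1, (w.2.2, w.2.1.2)),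
        fun ⟨_, _, _, _⟩ => rfl, fun ⟨_, ⟨_, _⟩, _⟩ => rfl⟩ :
        _ × α × (_ × _) ≃ α × (_ × _) × _)
    rw [show (fun ω => (⟨fun z => (z.2.1, (z.1, z.2.2.2), z.2.2.1),
        fun w => (w.2.1.1, w.1, (w.2.2, w.2.1.2)),
        fun ⟨_, _, _, _⟩ => rfl, fun ⟨_, ⟨_, _⟩, _⟩ => rfl⟩ :
        _ × α × (_ × _) ≃ α × (_ × _) × _)
        ((YS ω, X (n + k.1) ω, (VecP X n ω, XS ω))))
      = (fun ω => (X (n + k.1) ω, (YS ω, XS ω), VecP X n ω)) from rfl] at h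
    exact h.symm
  have h4 : entm μ (fun ω => (YS ω, (VecP X n ω, XS ω)))
      = entm μ (fun ω => ((YS ω, XS ω), VecP X n ω)) := by
    have h := entm_comp_equiv μ (fun ω => (YS ω, (VecP X n ω, XS ω)))
      (⟨fun z => ((z.1, z.2.2), z.2.1), fun w => (w.1.1, (w.2, w.1.2)),
        fun ⟨_, _, _⟩ => rfl, fun ⟨⟨_, _⟩, _⟩ => rfl⟩ :
        _ × (_ × _) ≃ (_ × _) × _)
    rw [show (fun ω => (⟨fun z => ((z.1, z.2.2), z.2.1), fun w => (w.1.1, (w.2, w.1.2)),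
        fun ⟨_, _, _⟩ => rfl, fun ⟨⟨_, _⟩, _⟩ => rfl⟩ :
        _ × (_ × _) ≃ (_ × _) × _)
        ((YS ω, (VecP X n ω, XS ω))))
      = (fun ω => ((YS ω, XS ω), VecP X n ω)) from rfl] at h
    exact h.symm
  -- step 3 : drop the conditioning on the first block
  have mbYS : MbP YS := MbP.pi (fun j : {j : Fin m // k < j} => hYm (n + j.1.1))
  have mbXS : MbP XS := MbP.pi (fun j : {j : Fin m // j < k} => hXm (n + j.1.1))
  have h5 := cond_drop μ (X (n + k.1)) (fun ω => (YS ω, XS ω)) (VecP X n)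
    ((hXm (n + k.1)).pair ((mbYS.pair mbXS).pair (mbVecP hXm n)))
  beta_reduce at h5
  -- step 4 : stationarity
  set G : (Fin m → α) × (Fin m → Bool) →
      α × (({j : Fin m // k < j} → Option α) × ({j : Fin m // j < k} → α)) :=
    fun q => (q.1 k, ((fun j => if q.2 j.1 then some (q.1 j.1) else none),
      (fun j => q.1 j.1))) with hG
  have hg1 : (fun ω => G (ZBP X B n m ω)) = (fun ω => (X (n + k.1) ω, (YS ω, XS ω))) := by
    funext ω
    simp only [hG, ZBP, hYS, hXS, hYdef]
  have hg0 : (fun ω => G (ZBP X B 0 m ω))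
      = (fun ω => (X k.1 ω, (YgP Y m k ω, XlowP X m k ω))) := by
    funext ω
    unfold YgP XlowP
    simp only [hG, ZBP, hYdef, Nat.zero_add]
  have h6 : ∀ z, prm μ (fun ω => (X (n + k.1) ω, (YS ω, XS ω))) z
      = prm μ (fun ω => (X k.1 ω, (YgP Y m k ω, XlowP X m k ω))) z := by
    intro z
    rw [← hg1, ← hg0]
    exact prm_comp_congr μ (mbZBP hXm hBm n m) (mbZBP hXm hBm 0 m)
      (fun w => ZBP_shift μ p hXm hBm hstat hind n m w) G z
  have h7 : entm μ (fun ω => (X (n + k.1) ω, (YS ω, XS ω)))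
      = entm μ (fun ω => (X k.1 ω, (YgP Y m k ω, XlowP X m k ω))) := entm_congr μ h6
  have h8 : entm μ (fun ω => (YS ω, XS ω))
      = entm μ (fun ω => (YgP Y m k ω, XlowP X m k ω)) := by
    apply entm_congr
    intro z
    have h := prm_comp_congr μ
      ((hXm (n + k.1)).pair (mbYS.pair mbXS))
      ((hXm k.1).pair ((mbYgP hYm m k).pair (mbXlowP hXm m k))) h6 Prod.snd z
    rw [show (fun ω => Prod.snd ((fun ω => (X (n + k.1) ω, (YS ω, XS ω))) ω))
      = (fun ω => (YS ω, XS ω)) from rfl] at h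
    rw [show (fun ω => Prod.snd ((fun ω => (X k.1 ω, (YgP Y m k ω, XlowP X m k ω))) ω))
      = (fun ω => (YgP Y m k ω, XlowP X m k ω)) from rfl] at h
    exact h
  have h9 : entm μ (fun ω => (X k.1 ω, (YgP Y m k ω, XlowP X m k ω)))
      = entm μ (fun ω => (YgP Y m k ω, X k.1 ω, XlowP X m k ω)) :=
    (entm_rot μ (YgP Y m k) (X k.1) (XlowP X m k)).symm
  unfold tTP
  rw [show X (Fin.natAdd n k).1 = X (n + k.1) from rfl] at h1 ⊢
  linarith

lemma TseqP_subadd {X : ℕ → Ω → α} {B : ℕ → Ω → Bool} {Y : ℕ → Ω → Option α} (p : ℝ)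
    (hXm : ∀ i, MbP (X i)) (hBm : ∀ i, MbP (B i)) (hYm : ∀ i, MbP (Y i))
    (hstat : ∀ (n t : ℕ) (a : Fin n → α),
      prm μ (fun ω (j : Fin n) => X (j.1 + t) ω) a
        = prm μ (fun ω (j : Fin n) => X j.1 ω) a)
    (hind : ∀ (n : ℕ) (a : Fin n → α) (b : Fin n → Bool),
      prm μ (fun ω => ((fun j : Fin n => X j.1 ω), fun j : Fin n => B j.1 ω)) (a, b)
        = prm μ (fun ω (j : Fin n) => X j.1 ω) a * ∏ j, (if b j then p else 1 - p))
    (hYdef : ∀ i ω, Y i ω = if B i ω then some (X i ω) else none)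
    (n m : ℕ) : TseqP μ X Y (n + m) ≤ TseqP μ X Y n + TseqP μ X Y m := by
  unfold TseqP
  rw [Fin.sum_univ_add (f := fun i : Fin (n + m) => tTP μ X Y (n + m) i)]
  exact add_le_add
    (Finset.sum_le_sum fun i _ => tT_left μ hXm hYm n m i)
    (Finset.sum_le_sum fun k _ => tT_right μ p hXm hBm hYm hstat hind hYdef n m k)

end Proc5

/-- For a stationary finite-alphabet process observed through i.i.d. erasures, the
entropy rate `H̄(X)` and the limit `a = lim (1/n) ∑ᵢ I(Y_{i+1}ⁿ; Xᵢ | X₁^{i-1})` both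
exist, with `0 ≤ a ≤ H̄(X)`. -/
theorem stationary_correction_limit {Ω : Type*} [MeasurableSpace Ω]
    (μ : Measure Ω) [IsProbabilityMeasure μ]
    {α : Type*} [Fintype α] [MeasurableSpace α] [MeasurableSingletonClass α]
    (p : ℝ) (X : ℕ → Ω → α) (B : ℕ → Ω → Bool)
    (hX : ∀ i, Measurable (X i)) (hB : ∀ i, Measurable (B i))
    (hstat : ∀ (n t : ℕ) (a : Fin n → α),
      prm μ (fun ω (j : Fin n) => X (j.1 + t) ω) a
        = prm μ (fun ω (j : Fin n) => X j.1 ω) a)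
    (hind : ∀ (n : ℕ) (a : Fin n → α) (b : Fin n → Bool),
      prm μ (fun ω => ((fun j : Fin n => X j.1 ω), fun j : Fin n => B j.1 ω)) (a, b)
        = prm μ (fun ω (j : Fin n) => X j.1 ω) a * ∏ j, (if b j then p else 1 - p))
    (Y : ℕ → Ω → Option α) (hY : ∀ i ω, Y i ω = if B i ω then some (X i ω) else none) :
    ∃ hbar a : ℝ,
      Tendsto (fun n : ℕ => entm μ (fun ω (j : Fin n) => X j.1 ω) / n) atTop (nhds hbar) ∧
      Tendsto (fun n : ℕ => (1 / n : ℝ) * ∑ i : Fin n,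
          cmim μ (fun ω => fun j : {j : Fin n // i < j} => Y j.1.1 ω) (X i.1)
            (fun ω => fun j : {j : Fin n // j < i} => X j.1.1 ω))
        atTop (nhds a) ∧
      0 ≤ a ∧ a ≤ hbar := by
  classical
  have hXm : ∀ i, MbP (X i) := fun i a => hX i (measurableSet_singleton a)
  have hBm : ∀ i, MbP (B i) := fun i b => hB i (measurableSet_singleton b)
  have hYm : ∀ i, MbP (Y i) := by
    intro i
    have heq : Y i = fun ω => (fun q : α × Bool => if q.2 then some q.1 else none)
        ((X i ω, B i ω)) := by
      funext ω
      rw [hY i ω]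
    rw [heq]
    exact ((hXm i).pair (hBm i)).comp (fun q : α × Bool => if q.2 then some q.1 else none)
  -- Fekete for H
  have hsubH : Subadditive (fun n => HseqP μ X n) := fun a b => HseqP_subadd μ hXm hstat a b
  have hbddH : BddBelow (Set.range fun n : ℕ => HseqP μ X n / n) := by
    refine ⟨0, ?_⟩
    rintro x ⟨n, rfl⟩
    exact div_nonneg (HseqP_nonneg μ X n) (Nat.cast_nonneg n)
  have hH := hsubH.tendsto_lim hbddH
  -- Fekete for T
  have hsubT : Subadditive (fun n => TseqP μ X Y n) :=
    fun a b => TseqP_subadd μ p hXm hBm hYm hstat hind hY a b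
  have hTnonneg : ∀ n, 0 ≤ TseqP μ X Y n :=
    fun n => Finset.sum_nonneg fun i _ => tTP_nonneg μ hXm hYm n i
  have hbddT : BddBelow (Set.range fun n : ℕ => TseqP μ X Y n / n) := by
    refine ⟨0, ?_⟩
    rintro x ⟨n, rfl⟩
    exact div_nonneg (hTnonneg n) (Nat.cast_nonneg n)
  have hT := hsubT.tendsto_lim hbddT
  have hsum : ∀ n : ℕ, (∑ i : Fin n,
      cmim μ (fun ω => fun j : {j : Fin n // i < j} => Y j.1.1 ω) (X i.1)
        (fun ω => fun j : {j : Fin n // j < i} => X j.1.1 ω))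
      = HseqP μ X n - TseqP μ X Y n := fun n => sum_cmim_eq μ n
  have hSnonneg : ∀ n : ℕ, 0 ≤ (1 / n : ℝ) * ∑ i : Fin n,
      cmim μ (fun ω => fun j : {j : Fin n // i < j} => Y j.1.1 ω) (X i.1)
        (fun ω => fun j : {j : Fin n // j < i} => X j.1.1 ω) := by
    intro n
    refine mul_nonneg (by positivity) (Finset.sum_nonneg fun i _ => ?_)
    exact cmim_term_nonneg μ hXm hYm n i
  have hS : Tendsto (fun n : ℕ => (1 / n : ℝ) * ∑ i : Fin n,
      cmim μ (fun ω => fun j : {j : Fin n // i < j} => Y j.1.1 ω) (X i.1)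
        (fun ω => fun j : {j : Fin n // j < i} => X j.1.1 ω))
      atTop (nhds (hsubH.lim - hsubT.lim)) := by
    refine (hH.sub hT).congr fun n => ?_
    rw [hsum n]
    ring
  refine ⟨hsubH.lim, hsubH.lim - hsubT.lim, hH, hS, ?_, ?_⟩
  · exact ge_of_tendsto' hS hSnonneg
  · have h0 : 0 ≤ hsubT.lim := ge_of_tendsto' hT
      (fun n => div_nonneg (hTnonneg n) (Nat.cast_nonneg n))
    linarith
end
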